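/- arXiv:1209.3575 — 6 statements merged into one kernel-verified Lean document; each statement's English description precedes it below -/
import Mathlib

section
/- Let t ≥ 3, let M be a matroid of rank r on E = {1,…,n}, and let E = E_1 ∪ ⋯ ∪ E_t be a good t-partition of M with associated integers a_1,…,a_t. Let M̄_1 be the matroid with bases B(M̄_1) = {B a base of M : |B ∩ E_1| ≥ a_1}, let M_2 have bases B(M_2) = {B a base of M : |B ∩ E_1| ≥ a_1 and |B ∩ (E_1 ∪ E_2)| ≤ a_1 + a_2}, and let M̄_2 have bases B(M̄_2) = {B a base of M : |B ∩ E_1| ≥ a_1 and |B ∩ (E_1 ∪ E_2)| ≥ a_1 + a_2}. Then B(M_2) and B(M̄_2) are each the collection of bases of a matroid on E, and P(M̄_1) = P(M_2) ∪ P(M̄_2) is a hyperplane split of P(M̄_1). -/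
open Matroid Set

/-- The rank of a matroid: the supremum of the cardinalities of its independent sets. -/
noncomputable def mrk {α : Type*} (M : Matroid α) : ℕ :=
  sSup {n : ℕ | ∃ I, M.Indep I ∧ I.ncard = n}

/-- `ℬ` is the collection of bases of a matroid on the ground set `E`. -/
def IsBaseCollection {α : Type*} (E : Set α) (ℬ : Set (Set α)) : Prop :=
  ∃ N : Matroid α, N.E = E ∧ ∀ B, N.IsBase B ↔ B ∈ ℬ

/-- The 0/1 incidence vector of a set. -/
noncomputable def incVec {α : Type*} (B : Set α) : α → ℝ := B.indicator 1

/-- The matroid base polytope: the convex hull of the incidence vectors of the bases. -/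
noncomputable def basePolytope {α : Type*} (M : Matroid α) : Set (α → ℝ) :=
  convexHull ℝ {x | ∃ B, M.IsBase B ∧ x = incVec B}

/-- The union of the blocks `E_i` with `lo ≤ i < hi` (`i` is a 0-based index, so the paper's
`E_1 ∪ ⋯ ∪ E_j` is `blockU E 0 j`). -/
def blockU {α : Type*} {t : ℕ} (E : Fin t → Set α) (lo hi : ℕ) : Set α :=
  ⋃ i ∈ {i : Fin t | lo ≤ (i : ℕ) ∧ (i : ℕ) < hi}, E i

/-- The sum of the integers `a_i` with `lo ≤ i < hi` (0-based), so the paper's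
`a_1 + ⋯ + a_j` is `blockSum a 0 j`. -/
def blockSum {t : ℕ} (a : Fin t → ℕ) (lo hi : ℕ) : ℕ :=
  ∑ i ∈ Finset.univ.filter (fun i : Fin t => lo ≤ (i : ℕ) ∧ (i : ℕ) < hi), a i

/-- A good `t`-partition of a rank-`r` matroid `M`: the ground set is partitioned into blocks
`E_1, …, E_t` (here indexed by `Fin t`) with `r(M|E_i) > 1`, together with integers
`0 < a_i < r(M|E_i)` such that `(P1)` `r = a_1 + ⋯ + a_t` and conditions `(P2a)`,`(P2b)` hold. -/
def IsGoodPartition {α : Type*} {t : ℕ} (M : Matroid α) (r : ℕ)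
    (E : Fin t → Set α) (a : Fin t → ℕ) : Prop :=
  (⋃ i, E i) = M.E ∧
  Pairwise (Function.onFun Disjoint E) ∧
  (∀ i, 1 < mrk (M ↾ E i)) ∧
  (∀ i, 0 < a i ∧ a i < mrk (M ↾ E i)) ∧
  r = (∑ i, a i) ∧
  (∀ j : ℕ, 1 ≤ j → j ≤ t - 1 → ∀ X Y : Set α,
    (M ↾ blockU E 0 j).Indep X → X.ncard ≤ blockSum a 0 j →
    (M ↾ blockU E j t).Indep Y → Y.ncard ≤ blockSum a j t →
    M.Indep (X ∪ Y)) ∧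
  (∀ j k : ℕ, 1 ≤ j → j < k → k ≤ t - 1 → ∀ X Y Z : Set α,
    (M ↾ blockU E 0 j).Indep X → X.ncard ≤ blockSum a 0 j →
    (M ↾ blockU E j k).Indep Y → Y.ncard ≤ blockSum a j k →
    (M ↾ blockU E k t).Indep Z → Z.ncard ≤ blockSum a k t →
    M.Indep (X ∪ Y ∪ Z))

namespace Stmt4

open scoped Classical

variable {n : ℕ}

lemma incVec_apply (B : Set (Fin n)) (i : Fin n) : incVec B i = if i ∈ B then 1 else 0 := by
  simp [incVec, Set.indicator_apply]

lemma incVec_swap {B : Set (Fin n)} {z h : Fin n} (hz : z ∈ B) (hh : h ∉ B) :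
    incVec (insert h (B \ {z})) = incVec B - incVec {z} + incVec {h} := by
  funext i
  simp only [Pi.add_apply, Pi.sub_apply, incVec_apply, Set.mem_insert_iff, Set.mem_diff,
    Set.mem_singleton_iff]
  by_cases hiz : i = z
  · subst hiz
    have : i ≠ h := fun hc => hh (hc ▸ hz)
    simp [this, hz]
  · by_cases hih : i = h
    · subst hih
      simp [hh, hiz]
    · by_cases hiB : i ∈ B <;> simp [hiz, hih, hiB]

/-- the linear functional `x ↦ ∑_{i ∈ S} x i`. -/
noncomputable def sumOn (S : Set (Fin n)) : (Fin n → ℝ) →ₗ[ℝ] ℝ where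
  toFun x := ∑ i, if i ∈ S then x i else 0
  map_add' x y := by
    simp only [Pi.add_apply, ← Finset.sum_add_distrib]
    congr 1; funext i; by_cases h : i ∈ S <;> simp [h]
  map_smul' c x := by
    simp only [Pi.smul_apply, RingHom.id_apply, smul_eq_mul, Finset.mul_sum]
    congr 1; funext i; by_cases h : i ∈ S <;> simp [h]

lemma sumOn_apply (S : Set (Fin n)) (x : Fin n → ℝ) :
    sumOn S x = ∑ i, if i ∈ S then x i else 0 := rfl

lemma sumOn_incVec (S B : Set (Fin n)) :
    sumOn S (incVec B) = ((B ∩ S).ncard : ℝ) := by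
  rw [sumOn_apply]
  have h1 : ∀ i : Fin n, (if i ∈ S then incVec B i else 0) = if i ∈ B ∩ S then (1:ℝ) else 0 := by
    intro i
    by_cases hS : i ∈ S <;> by_cases hB : i ∈ B <;> simp [incVec_apply, hS, hB]
  simp_rw [h1]
  rw [Finset.sum_boole]
  rw [Set.ncard_eq_toFinset_card (B ∩ S) (Set.toFinite _)]
  norm_num
  congr 1
  ext i
  simp only [Finset.mem_filter, Finset.mem_univ, true_and, Set.Finite.mem_toFinset]
  simp


/-! ### Finite matroid toolkit -/

variable {M : Matroid (Fin n)} {B I : Set (Fin n)}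

lemma mrk_eq_ncard_base (hB : M.IsBase B) : mrk M = B.ncard := by
  have hub : ∀ k ∈ {m : ℕ | ∃ I, M.Indep I ∧ I.ncard = m}, k ≤ B.ncard := by
    rintro k ⟨I, hI, rfl⟩
    obtain ⟨B', hB', hIB'⟩ := hI.exists_isBase_superset
    calc I.ncard ≤ B'.ncard := Set.ncard_le_ncard hIB' (Set.toFinite _)
      _ = B.ncard := hB'.ncard_eq_ncard_of_isBase hB
  apply le_antisymm
  · exact csSup_le ⟨0, ∅, M.empty_indep, by simp⟩ hub
  · exact le_csSup ⟨B.ncard, hub⟩ ⟨B, hB.indep, rfl⟩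

lemma Indep.ncard_le_mrk (hI : M.Indep I) : I.ncard ≤ mrk M := by
  obtain ⟨B, hB⟩ := M.exists_isBase
  rw [mrk_eq_ncard_base hB]
  obtain ⟨B', hB', hIB'⟩ := hI.exists_isBase_superset
  calc I.ncard ≤ B'.ncard := Set.ncard_le_ncard hIB' (Set.toFinite _)
    _ = B.ncard := hB'.ncard_eq_ncard_of_isBase hB

lemma base_of_indep_ncard (hI : M.Indep I) (hcard : I.ncard = mrk M) : M.IsBase I := by
  obtain ⟨B', hB', hIB'⟩ := hI.exists_isBase_superset
  have : I = B' := Set.eq_of_subset_of_ncard_le hIB'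
    (by rw [← mrk_eq_ncard_base hB', hcard]) (Set.toFinite _)
  exact this ▸ hB'

lemma exists_indep_ncard (k : ℕ) (hk : k ≤ mrk M) : ∃ I, M.Indep I ∧ I.ncard = k := by
  obtain ⟨B, hB⟩ := M.exists_isBase
  rw [mrk_eq_ncard_base hB] at hk
  obtain ⟨I, hIB, hI⟩ := Set.exists_subset_card_eq hk
  exact ⟨I, hB.indep.subset hIB, hI⟩

/-- Fundamental-circuit style lemma. -/
lemma exists_fund_set (hB : M.IsBase B) {h : Fin n} (hhE : h ∈ M.E) (hhB : h ∉ B) :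
    ∃ I ⊆ B, h ∈ M.closure I ∧ ∀ z ∈ I, M.IsBase (insert h (B \ {z})) := by
  have hS : B ∈ {I | I ⊆ B ∧ h ∈ M.closure I} := ⟨Subset.rfl, by rw [hB.closure_eq]; exact hhE⟩
  obtain ⟨I, hImem, hImin⟩ := exists_minimalFor_of_wellFoundedLT
    (fun I => I ∈ {I | I ⊆ B ∧ h ∈ M.closure I}) Set.ncard ⟨B, hS⟩
  obtain ⟨hIB, hIcl⟩ := hImem
  have hmin : ∀ z ∈ I, h ∉ M.closure (I \ {z}) := by
    intro z hz hcon
    have hmem : (I \ {z}) ∈ {I | I ⊆ B ∧ h ∈ M.closure I} := ⟨diff_subset.trans hIB, hcon⟩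
    have hlt : (I \ {z}).ncard < I.ncard := Set.ncard_diff_singleton_lt_of_mem hz (Set.toFinite _)
    have := hImin hmem hlt.le
    omega
  refine ⟨I, hIB, hIcl, fun z hz => ?_⟩
  have hzB : z ∈ B := hIB hz
  -- closure exchange : z ∈ cl (insert h (I \ {z}))
  have hIi : insert z (I \ {z}) = I := by
    rw [Set.insert_diff_singleton, Set.insert_eq_self.2 hz]
  have hex : z ∈ M.closure (insert h (I \ {z})) \ M.closure (I \ {z}) := by
    refine Matroid.closure_exchange ?_
    rw [hIi]
    exact ⟨hIcl, hmin z hz⟩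
  -- h ∉ cl (B \ {z})
  have hhcl : h ∉ M.closure (B \ {z}) := by
    intro hcon
    have hsub : insert h (I \ {z}) ⊆ M.closure (B \ {z}) := by
      refine Set.insert_subset hcon ?_
      exact (Set.diff_subset_diff_left hIB).trans (M.subset_closure _
        (diff_subset.trans hB.subset_ground))
    have : M.closure (insert h (I \ {z})) ⊆ M.closure (B \ {z}) := by
      have := M.closure_subset_closure hsub
      rwa [M.closure_closure] at this
    exact hB.indep.notMem_closure_diff_of_mem hzB (this hex.1)
  -- so the exchange set is independent, hence a base
  have hind : M.Indep (insert h (B \ {z})) := by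
    rw [(hB.indep.subset diff_subset).insert_indep_iff_of_notMem
      (fun hc => hhB hc.1)]
    exact ⟨hhE, hhcl⟩
  exact hB.exchange_isBase_of_indep hhB hind

/-- From a base `B''` inside `(B \ {x}) ∪ W` we can exchange `x` for an element of `W`. -/
lemma exchange_into (hB : M.IsBase B) {x : Fin n} (hx : x ∈ B) {B'' W : Set (Fin n)}
    (hB'' : M.IsBase B'') (hsub : B'' ⊆ (B \ {x}) ∪ W) (hxW : x ∉ W) :
    ∃ y ∈ W, y ∉ B ∧ M.IsBase (insert y (B \ {x})) := by
  have h1 : ¬ (B'' ⊆ M.closure (B \ {x})) := by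
    intro hcon
    have h2 : M.E ⊆ M.closure (B \ {x}) := by
      rw [← hB''.closure_eq]
      have := M.closure_subset_closure hcon
      rwa [M.closure_closure] at this
    exact hB.indep.notMem_closure_diff_of_mem hx (h2 (hB.subset_ground hx))
  obtain ⟨y, hyB'', hycl⟩ := not_subset.1 h1
  have hyW : y ∈ W := by
    rcases hsub hyB'' with h | h
    · exact absurd (M.subset_closure _ (diff_subset.trans hB.subset_ground) h) hycl
    · exact h
  have hyx : y ≠ x := fun hc => hxW (hc ▸ hyW)
  have hyB : y ∉ B := by
    intro hc
    exact hycl (M.subset_closure _ (diff_subset.trans hB.subset_ground) ⟨hc, hyx⟩)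
  have hind : M.Indep (insert y (B \ {x})) := by
    rw [(hB.indep.subset diff_subset).insert_indep_iff_of_notMem (fun hc => hyB hc.1)]
    exact ⟨hB''.subset_ground hyB'', hycl⟩
  exact ⟨y, hyW, hyB, hB.exchange_isBase_of_indep hyB hind⟩


/-! ### Counting after a single exchange -/

section counting

variable {T : Set (Fin n)} {e f : Fin n}

lemma swap_inter_eq_of_mem (he : e ∈ B) (hf : f ∉ B) (hfT : f ∈ T) :
    (insert f (B \ {e})) ∩ T = insert f ((B ∩ T) \ {e}) := by
  ext i
  simp only [Set.mem_inter_iff, Set.mem_insert_iff, Set.mem_diff, Set.mem_singleton_iff]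
  constructor
  · rintro ⟨(rfl | ⟨hiB, hie⟩), hiT⟩
    · exact Or.inl rfl
    · exact Or.inr ⟨⟨hiB, hiT⟩, hie⟩
  · rintro (rfl | ⟨⟨hiB, hiT⟩, hie⟩)
    · exact ⟨Or.inl rfl, hfT⟩
    · exact ⟨Or.inr ⟨hiB, hie⟩, hiT⟩

lemma swap_inter_eq_of_not_mem (he : e ∈ B) (hf : f ∉ B) (hfT : f ∉ T) :
    (insert f (B \ {e})) ∩ T = (B ∩ T) \ {e} := by
  ext i
  simp only [Set.mem_inter_iff, Set.mem_insert_iff, Set.mem_diff, Set.mem_singleton_iff]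
  constructor
  · rintro ⟨(rfl | ⟨hiB, hie⟩), hiT⟩
    · exact absurd hiT hfT
    · exact ⟨⟨hiB, hiT⟩, hie⟩
  · rintro ⟨⟨hiB, hiT⟩, hie⟩
    exact ⟨Or.inr ⟨hiB, hie⟩, hiT⟩

lemma swap_ncard_tt (he : e ∈ B) (hf : f ∉ B) (heT : e ∈ T) (hfT : f ∈ T) :
    ((insert f (B \ {e})) ∩ T).ncard = (B ∩ T).ncard := by
  rw [swap_inter_eq_of_mem he hf hfT,
    Set.ncard_insert_of_notMem (fun hc => hf hc.1.1) (Set.toFinite _)]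
  have heBT : e ∈ B ∩ T := Set.mem_inter he heT
  have := Set.ncard_diff_singleton_add_one heBT (Set.toFinite _)
  omega

lemma swap_ncard_tf (he : e ∈ B) (hf : f ∉ B) (heT : e ∈ T) (hfT : f ∉ T) :
    ((insert f (B \ {e})) ∩ T).ncard + 1 = (B ∩ T).ncard := by
  rw [swap_inter_eq_of_not_mem he hf hfT]
  have heBT : e ∈ B ∩ T := Set.mem_inter he heT
  exact Set.ncard_diff_singleton_add_one heBT (Set.toFinite _)

lemma swap_ncard_ft (he : e ∈ B) (hf : f ∉ B) (heT : e ∉ T) (hfT : f ∈ T) :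
    ((insert f (B \ {e})) ∩ T).ncard = (B ∩ T).ncard + 1 := by
  rw [swap_inter_eq_of_mem he hf hfT,
    Set.ncard_insert_of_notMem (fun hc => hf hc.1.1) (Set.toFinite _)]
  congr 1
  rw [Set.diff_singleton_eq_self (fun hc => heT hc.2)]

lemma swap_ncard_ff (he : e ∈ B) (hf : f ∉ B) (heT : e ∉ T) (hfT : f ∉ T) :
    ((insert f (B \ {e})) ∩ T).ncard = (B ∩ T).ncard := by
  rw [swap_inter_eq_of_not_mem he hf hfT, Set.diff_singleton_eq_self (fun hc => heT hc.2)]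

end counting

lemma swap_count {e f : Fin n} (he : e ∈ B) (hf : f ∉ B) (T : Set (Fin n)) :
    ((insert f (B \ {e})) ∩ T).ncard + (if e ∈ T then 1 else 0)
      = (B ∩ T).ncard + (if f ∈ T then 1 else 0) := by
  classical
  by_cases heT : e ∈ T <;> by_cases hfT : f ∈ T
  · rw [swap_ncard_tt he hf heT hfT]; simp [heT, hfT]
  · have := swap_ncard_tf he hf heT hfT; simp only [if_pos heT, if_neg hfT]; omega
  · have := swap_ncard_ft he hf heT hfT; simp only [if_neg heT, if_pos hfT]; omega
  · rw [swap_ncard_ff he hf heT hfT]; simp [heT, hfT]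

/-! ### Max-weight exchange and level path -/

section maxweight

variable {N : Matroid (Fin n)}

lemma weight_swap (F : (Fin n → ℝ) →ₗ[ℝ] ℝ) {z h : Fin n} (hz : z ∈ B) (hh : h ∉ B) :
    F (incVec (insert h (B \ {z}))) =
      F (incVec B) - F (incVec {z}) + F (incVec {h}) := by
  rw [incVec_swap hz hh, map_add, map_sub]

lemma maxweight_exchange (hNE : N.E = Set.univ) (F : (Fin n → ℝ) →ₗ[ℝ] ℝ)
    {B₁ B₂ : Set (Fin n)} (hB₁ : N.IsBase B₁) (hB₂ : N.IsBase B₂)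
    (hmax : ∀ B, N.IsBase B → F (incVec B) ≤ F (incVec B₁))
    (heq : F (incVec B₂) = F (incVec B₁))
    {e : Fin n} (he : e ∈ B₁) (heB₂ : e ∉ B₂) :
    ∃ f, f ∈ B₂ ∧ f ∉ B₁ ∧ N.IsBase (insert f (B₁ \ {e})) ∧
      F (incVec (insert f (B₁ \ {e}))) = F (incVec B₁) := by
  set H : Set (Fin n) := {y | F (incVec {e}) ≤ F (incVec {y})} with hH
  have heH : e ∈ H := by simp only [hH, Set.mem_setOf_eq]; exact le_refl _
  -- Step 1 : e ∈ cl (B₂ ∩ H)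
  have hstep1 : e ∈ N.closure (B₂ ∩ H) := by
    by_cases hind : N.Indep (insert e (B₂ ∩ H))
    · exfalso
      have hecl : e ∉ N.closure (B₂ ∩ H) := by
        have := ((hB₂.indep.subset Set.inter_subset_left).insert_indep_iff_of_notMem
          (fun hc => heB₂ hc.1)).1 hind
        exact this.2
      obtain ⟨I, hIB, hIcl, hIbase⟩ := exists_fund_set hB₂ (by rw [hNE]; trivial) heB₂
      by_cases hIH : I ⊆ H
      · exact hecl (N.closure_subset_closure (Set.subset_inter hIB hIH) hIcl)
      · obtain ⟨z, hzI, hzH⟩ := not_subset.1 hIH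
        have hD := hIbase z hzI
        have hzB₂ : z ∈ B₂ := hIB hzI
        have hw : F (incVec (insert e (B₂ \ {z}))) =
            F (incVec B₂) - F (incVec {z}) + F (incVec {e}) := weight_swap F hzB₂ heB₂
        have hlt : F (incVec {z}) < F (incVec {e}) := by
          simpa [hH] using hzH
        have : F (incVec B₁) < F (incVec (insert e (B₂ \ {z}))) := by
          rw [hw, heq]; linarith
        exact absurd (hmax _ hD) (not_le.2 this)
    · have hiff := Indep.insert_indep_iff_of_notMem (I := B₂ ∩ H) (e := e)
        (hB₂.indep.subset Set.inter_subset_left) (fun hc => heB₂ hc.1)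
      rw [hiff, Set.mem_diff, not_and, not_not] at hind
      exact hind (by rw [hNE]; trivial)
  -- Step 2 : find the exchange
  by_contra hcon
  push_neg at hcon
  have hsubcl : B₂ ∩ H ⊆ N.closure (B₁ \ {e}) := by
    rintro f ⟨hfB₂, hfH⟩
    by_cases hfB₁ : f ∈ B₁
    · have hfe : f ≠ e := fun hc => heB₂ (hc ▸ hfB₂)
      exact N.subset_closure _ (diff_subset.trans hB₁.subset_ground) ⟨hfB₁, hfe⟩
    · by_contra hfcl
      have hind : N.Indep (insert f (B₁ \ {e})) := by
        rw [(hB₁.indep.subset diff_subset).insert_indep_iff_of_notMem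
          (fun hc => hfB₁ hc.1)]
        exact ⟨hB₂.subset_ground hfB₂, hfcl⟩
      have hDb := hB₁.exchange_isBase_of_indep hfB₁ hind
      have hw : F (incVec (insert f (B₁ \ {e}))) =
          F (incVec B₁) - F (incVec {e}) + F (incVec {f}) := weight_swap F he hfB₁
      have hge : F (incVec B₁) ≤ F (incVec (insert f (B₁ \ {e}))) := by
        rw [hw]; have : F (incVec {e}) ≤ F (incVec {f}) := hfH; linarith
      exact hcon f hfB₂ hfB₁ hDb (le_antisymm (hmax _ hDb) hge)
  have : e ∈ N.closure (B₁ \ {e}) := by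
    have h2 := N.closure_subset_closure hsubcl
    rw [N.closure_closure] at h2
    exact h2 hstep1
  exact hB₁.indep.notMem_closure_diff_of_mem he this

lemma path_to_level (hNE : N.E = Set.univ) (F : (Fin n → ℝ) →ₗ[ℝ] ℝ)
    (S : Set (Fin n)) (c : ℕ) (m : ℝ) (hmax : ∀ B, N.IsBase B → F (incVec B) ≤ m) :
    ∀ k : ℕ, ∀ B₁ B₂ : Set (Fin n), (B₁ \ B₂).ncard = k →
      N.IsBase B₁ → N.IsBase B₂ → F (incVec B₁) = m → F (incVec B₂) = m →
      c < (B₁ ∩ S).ncard → (B₂ ∩ S).ncard ≤ c →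
      ∃ D, N.IsBase D ∧ F (incVec D) = m ∧ (D ∩ S).ncard = c := by
  intro k
  induction k using Nat.strong_induction_on with
  | _ k ih =>
    intro B₁ B₂ hk hB₁ hB₂ hF₁ hF₂ hq₁ hq₂
    have hnsub : ¬ (B₁ ∩ S ⊆ B₂ ∩ S) := by
      intro hc
      exact absurd (Set.ncard_le_ncard hc (Set.toFinite _)) (by omega)
    obtain ⟨e, heBS, heB₂S⟩ := not_subset.1 hnsub
    have heB₁ : e ∈ B₁ := heBS.1
    have heS : e ∈ S := heBS.2
    have heB₂ : e ∉ B₂ := fun hc => heB₂S ⟨hc, heS⟩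
    obtain ⟨f, hfB₂, hfB₁, hDb, hDw⟩ := maxweight_exchange hNE F hB₁ hB₂
      (fun B hB => (hmax B hB).trans hF₁.ge) (hF₂.trans hF₁.symm) heB₁ heB₂
    set D := insert f (B₁ \ {e}) with hD
    have hDm : F (incVec D) = m := by rw [hDw, hF₁]
    have hediff : e ∈ B₁ \ B₂ := ⟨heB₁, heB₂⟩
    have hDdiff : D \ B₂ = (B₁ \ B₂) \ {e} := by
      ext i
      simp only [hD, Set.mem_diff, Set.mem_insert_iff, Set.mem_singleton_iff]
      constructor
      · rintro ⟨(rfl | ⟨hiB₁, hie⟩), hiB₂⟩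
        · exact absurd hfB₂ hiB₂
        · exact ⟨⟨hiB₁, hiB₂⟩, hie⟩
      · rintro ⟨⟨hiB₁, hiB₂⟩, hie⟩
        exact ⟨Or.inr ⟨hiB₁, hie⟩, hiB₂⟩
    have hkpos : 0 < k := by
      rw [← hk]
      exact (Set.ncard_pos (Set.toFinite _)).2 ⟨e, hediff⟩
    have hDk : (D \ B₂).ncard = k - 1 := by
      rw [hDdiff]
      have := Set.ncard_diff_singleton_add_one hediff (Set.toFinite _)
      omega
    by_cases hfS : f ∈ S
    · -- q unchanged, still > c
      have hq : (D ∩ S).ncard = (B₁ ∩ S).ncard := swap_ncard_tt heB₁ hfB₁ heS hfS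
      exact ih (k-1) (by omega) D B₂ hDk hDb hB₂ hDm hF₂ (by omega) hq₂
    · -- q drops by one
      have hq : (D ∩ S).ncard + 1 = (B₁ ∩ S).ncard := swap_ncard_tf heB₁ hfB₁ heS hfS
      by_cases hqc : (D ∩ S).ncard = c
      · exact ⟨D, hDb, hDm, hqc⟩
      · exact ih (k-1) (by omega) D B₂ hDk hDb hB₂ hDm hF₂ (by omega) hq₂

end maxweight


/-! ### Convexity toolkit -/

section convex

lemma hull_le_halfspace {s : Set (Fin n → ℝ)} (F : (Fin n → ℝ) →ₗ[ℝ] ℝ) {c : ℝ}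
    (hs : ∀ y ∈ s, F y ≤ c) : ∀ x ∈ convexHull ℝ s, F x ≤ c := by
  intro x hx
  have : convexHull ℝ s ⊆ {y | F y ≤ c} :=
    convexHull_min hs (convex_halfSpace_le F.isLinear c)
  exact this hx

lemma hull_ge_halfspace {s : Set (Fin n → ℝ)} (F : (Fin n → ℝ) →ₗ[ℝ] ℝ) {c : ℝ}
    (hs : ∀ y ∈ s, c ≤ F y) : ∀ x ∈ convexHull ℝ s, c ≤ F x := by
  intro x hx
  have : convexHull ℝ s ⊆ {y | c ≤ F y} :=
    convexHull_min hs (convex_halfSpace_ge F.isLinear c)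
  exact this hx

lemma hull_eq_hyperplane {s : Set (Fin n → ℝ)} (F : (Fin n → ℝ) →ₗ[ℝ] ℝ) {c : ℝ}
    (hs : ∀ y ∈ s, F y = c) : ∀ x ∈ convexHull ℝ s, F x = c := by
  intro x hx
  have : convexHull ℝ s ⊆ {y | F y = c} :=
    convexHull_min hs (convex_hyperplane F.isLinear c)
  exact this hx

/-- Face lemma : a point of the hull lying on a bounding hyperplane is in the hull of the
points on the hyperplane. -/
lemma face_lemma {s : Set (Fin n → ℝ)} (F : (Fin n → ℝ) →ₗ[ℝ] ℝ) {c : ℝ}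
    (hs : ∀ y ∈ s, F y ≤ c) {x : Fin n → ℝ} (hx : x ∈ convexHull ℝ s) (hxc : F x = c) :
    x ∈ convexHull ℝ {y | y ∈ s ∧ F y = c} := by
  rw [convexHull_eq] at hx
  obtain ⟨ι, t, w, z, hw0, hw1, hzs, hxeq⟩ := hx
  have hxs : x = ∑ i ∈ t, w i • z i := by
    rw [← hxeq, Finset.centerMass_eq_of_sum_1 _ _ hw1]
  have hFx : F x = ∑ i ∈ t, w i * F (z i) := by
    rw [hxs, map_sum]
    simp [smul_eq_mul]
  have hsum0 : ∑ i ∈ t, w i * (c - F (z i)) = 0 := by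
    have : ∑ i ∈ t, w i * (c - F (z i)) = (∑ i ∈ t, w i) * c - ∑ i ∈ t, w i * F (z i) := by
      rw [Finset.sum_mul, ← Finset.sum_sub_distrib]
      congr 1; funext i; ring
    rw [this, hw1, ← hFx, hxc]; ring
  have hterm : ∀ i ∈ t, w i * (c - F (z i)) = 0 := by
    refine (Finset.sum_eq_zero_iff_of_nonneg ?_).1 hsum0
    intro i hi
    have h1 := hw0 i hi
    have h2 := hs (z i) (hzs i hi)
    nlinarith
  set t' := t.filter (fun i => w i ≠ 0) with ht'
  have hsub : t' ⊆ t := Finset.filter_subset _ _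
  have hw1' : ∑ i ∈ t', w i = 1 := by
    rw [ht', Finset.sum_filter_ne_zero]; exact hw1
  have hx' : x = t'.centerMass w z := by
    rw [Finset.centerMass_eq_of_sum_1 _ _ hw1', hxs]
    rw [eq_comm, ht']
    apply Finset.sum_filter_of_ne
    intro i _ hne hwi
    exact hne (by rw [hwi, zero_smul])
  rw [hx']
  apply Finset.centerMass_mem_convexHull
  · exact fun i hi => hw0 i (hsub hi)
  · rw [hw1']; norm_num
  · intro i hi
    rw [ht', Finset.mem_filter] at hi
    refine ⟨hzs i hi.1, ?_⟩
    have := hterm i hi.1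
    rcases mul_eq_zero.1 this with h | h
    · exact absurd h hi.2
    · linarith

lemma continuous_finset_sup' {ι : Type*} (f : ι → ℝ → ℝ) :
    ∀ (s : Finset ι) (hs : s.Nonempty), (∀ i ∈ s, Continuous (f i)) →
    Continuous (fun lam => s.sup' hs fun i => f i lam) := by
  intro s
  induction s using Finset.cons_induction with
  | empty => intro hs; exact absurd hs (by simp)
  | cons i s his ih =>
    intro _ hf
    rcases s.eq_empty_or_nonempty with rfl | hs'
    · simpa using hf i (by simp)
    · have heq : (fun lam => (Finset.cons i s his).sup' (Finset.cons_nonempty his)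
          fun j => f j lam)
          = fun lam => max (f i lam) (s.sup' hs' fun j => f j lam) := by
        funext lam
        rw [Finset.sup'_cons hs']
      have : Continuous (fun lam => max (f i lam) (s.sup' hs' fun j => f j lam)) :=
        (hf i (by simp)).max (ih hs' fun j hj => hf j (Finset.mem_cons_of_mem hj))
      rwa [← heq] at this

end convex


/-! ### The slice theorem -/

theorem slice (N : Matroid (Fin n)) (hNE : N.E = Set.univ) (S : Set (Fin n)) (c : ℕ)
    (hex : ∃ B0, N.IsBase B0 ∧ (B0 ∩ S).ncard ≤ c)
    {x : Fin n → ℝ} (hx : x ∈ convexHull ℝ {y | ∃ B, N.IsBase B ∧ y = incVec B})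
    (hxc : sumOn S x ≤ (c : ℝ)) :
    x ∈ convexHull ℝ {y | ∃ B, N.IsBase B ∧ (B ∩ S).ncard ≤ c ∧ y = incVec B} := by
  classical
  by_cases hhi : ∃ B, N.IsBase B ∧ c < (B ∩ S).ncard
  swap
  · push_neg at hhi
    refine convexHull_mono ?_ hx
    rintro y ⟨B, hB, rfl⟩
    exact ⟨B, hB, hhi B hB, rfl⟩
  by_contra hxlow
  set Vlow : Set (Fin n → ℝ) := {y | ∃ B, N.IsBase B ∧ (B ∩ S).ncard ≤ c ∧ y = incVec B}
    with hVlowdef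
  have hVlowfin : Vlow.Finite := by
    have hsub : Vlow ⊆ incVec '' (Set.univ : Set (Set (Fin n))) := by
      rintro y ⟨B, _, _, rfl⟩; exact ⟨B, trivial, rfl⟩
    exact Set.Finite.subset ((Set.toFinite _).image incVec) hsub
  have hconv : Convex ℝ (convexHull ℝ Vlow) := convex_convexHull ℝ _
  have hclosed : IsClosed (convexHull ℝ Vlow) := (hVlowfin.isCompact_convexHull (𝕜 := ℝ)).isClosed
  obtain ⟨φ, su, hsep1, hsep2⟩ := geometric_hahn_banach_closed_point hconv hclosed hxlow
  -- representation of x as a convex combination of vertices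
  rw [convexHull_eq] at hx
  obtain ⟨ι, t, w, z, hw0, hw1, hzV, hxeq⟩ := hx
  have hxs : x = ∑ i ∈ t, w i • z i := by rw [← hxeq, Finset.centerMass_eq_of_sum_1 _ _ hw1]
  -- finsets of high and low bases
  set Hset : Set (Set (Fin n)) := {B | N.IsBase B ∧ c < (B ∩ S).ncard} with hHsetdef
  set Lset : Set (Set (Fin n)) := {B | N.IsBase B ∧ (B ∩ S).ncard ≤ c} with hLsetdef
  set Hfin : Finset (Set (Fin n)) := (Set.toFinite Hset).toFinset with hHfindef
  set Lfin : Finset (Set (Fin n)) := (Set.toFinite Lset).toFinset with hLfindef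
  have hHne : Hfin.Nonempty := by
    obtain ⟨B, hB⟩ := hhi
    exact ⟨B, by simp only [hHfindef, Set.Finite.mem_toFinset]; exact hB⟩
  have hLne : Lfin.Nonempty := by
    obtain ⟨B0, hB0, hB0c⟩ := hex
    exact ⟨B0, by simp only [hLfindef, Set.Finite.mem_toFinset]; exact ⟨hB0, hB0c⟩⟩
  set ψ : ℝ → Set (Fin n) → ℝ :=
    fun lam B => φ (incVec B) - lam * (((B ∩ S).ncard : ℝ) - c) with hψdef
  set uf : ℝ → ℝ := fun lam => Hfin.sup' hHne (ψ lam) with hufdef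
  set vf : ℝ → ℝ := fun lam => Lfin.sup' hLne (ψ lam) with hvfdef
  -- every base is bounded by max (uf lam) (vf lam)
  have hmaxψ : ∀ lam : ℝ, ∀ B, N.IsBase B → ψ lam B ≤ max (uf lam) (vf lam) := by
    intro lam B hB
    by_cases hq : (B ∩ S).ncard ≤ c
    · have hBL : B ∈ Lfin := by
        simp only [hLfindef, Set.Finite.mem_toFinset]; exact ⟨hB, hq⟩
      exact le_max_of_le_right (Finset.le_sup' _ hBL)
    · have hBH : B ∈ Hfin := by
        simp only [hHfindef, Set.Finite.mem_toFinset]; exact ⟨hB, by omega⟩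
      exact le_max_of_le_left (Finset.le_sup' _ hBH)
  -- vector version of ψ
  set ψv : ℝ → (Fin n → ℝ) → ℝ :=
    fun lam y => φ y - lam * (sumOn S y - (c : ℝ)) with hψvdef
  have hψv_vec : ∀ lam B, ψv lam (incVec B) = ψ lam B := by
    intro lam B
    simp only [hψvdef, hψdef, sumOn_incVec]
  -- the point x is bounded by max (uf lam) (vf lam) for lam ≥ 0
  have hφx : ∀ lam : ℝ, 0 ≤ lam → φ x ≤ max (uf lam) (vf lam) := by
    intro lam hlam
    have hφsum : φ x = ∑ i ∈ t, w i * φ (z i) := by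
      rw [hxs, map_sum]
      congr 1; funext i; rw [map_smul]; rfl
    have hgsum : sumOn S x = ∑ i ∈ t, w i * sumOn S (z i) := by
      rw [hxs, map_sum]
      congr 1; funext i; rw [map_smul]; rfl
    have hterm : ∀ i ∈ t, w i * ψv lam (z i) =
        w i * φ (z i) - lam * (w i * sumOn S (z i)) + lam * (c : ℝ) * w i := by
      intro i _
      simp only [hψvdef]; ring
    have hkey : ∑ i ∈ t, w i * ψv lam (z i) = φ x - lam * (sumOn S x - (c : ℝ)) := by
      rw [Finset.sum_congr rfl hterm, Finset.sum_add_distrib, Finset.sum_sub_distrib,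
        ← Finset.mul_sum, ← Finset.mul_sum, ← hφsum, ← hgsum, hw1]
      ring
    have hub : ∑ i ∈ t, w i * ψv lam (z i) ≤ max (uf lam) (vf lam) := by
      have h1 : ∀ i ∈ t, w i * ψv lam (z i) ≤ w i * max (uf lam) (vf lam) := by
        intro i hi
        obtain ⟨B, hB, hz⟩ := hzV i hi
        rw [hz, hψv_vec]
        exact mul_le_mul_of_nonneg_left (hmaxψ lam B hB) (hw0 i hi)
      calc ∑ i ∈ t, w i * ψv lam (z i) ≤ ∑ i ∈ t, w i * max (uf lam) (vf lam) :=
            Finset.sum_le_sum h1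
        _ = max (uf lam) (vf lam) := by rw [← Finset.sum_mul, hw1, one_mul]
    have hlow : lam * (sumOn S x - (c : ℝ)) ≤ 0 :=
      mul_nonpos_of_nonneg_of_nonpos hlam (by linarith)
    linarith [hkey ▸ hub]
  -- case split on uf 0 ≤ vf 0
  by_cases hcase : uf 0 ≤ vf 0
  · obtain ⟨B₂, hB₂L, hB₂eq⟩ := Finset.exists_mem_eq_sup' hLne (ψ 0)
    have hB₂mem : N.IsBase B₂ ∧ (B₂ ∩ S).ncard ≤ c := by
      rw [hLfindef, Set.Finite.mem_toFinset] at hB₂L; exact hB₂L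
    have h1 : φ (incVec B₂) < su :=
      hsep1 _ (subset_convexHull ℝ Vlow ⟨B₂, hB₂mem.1, hB₂mem.2, rfl⟩)
    have h2 : φ x ≤ vf 0 := (hφx 0 le_rfl).trans_eq (max_eq_right hcase)
    have h3 : vf 0 = φ (incVec B₂) := by
      have h4 : vf 0 = ψ 0 B₂ := hB₂eq
      rw [h4]
      show φ (incVec B₂) - 0 * (((B₂ ∩ S).ncard : ℝ) - c) = φ (incVec B₂)
      ring
    linarith
  · push_neg at hcase
    set Mhi : ℝ := Hfin.sup' hHne (fun B => φ (incVec B)) with hMhidef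
    obtain ⟨B0, hB0, hB0c⟩ := hex
    set vfl : ℝ := φ (incVec B0) with hvfldef
    have hB0L : B0 ∈ Lfin := by
      simp only [hLfindef, Set.Finite.mem_toFinset]; exact ⟨hB0, hB0c⟩
    have hub : ∀ lam : ℝ, 0 ≤ lam → uf lam ≤ Mhi - lam := by
      intro lam hlam
      have : Hfin.sup' hHne (ψ lam) ≤ Mhi - lam := by
        apply Finset.sup'_le
        intro B hBH
        have hBH' : N.IsBase B ∧ c < (B ∩ S).ncard := by
          rwa [hHfindef, Set.Finite.mem_toFinset] at hBH
        have hq1 : (c : ℝ) + 1 ≤ ((B ∩ S).ncard : ℝ) := by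
          exact_mod_cast hBH'.2
        have h2 : φ (incVec B) ≤ Mhi := Finset.le_sup' (fun B' => φ (incVec B')) hBH
        have h3 : lam * 1 ≤ lam * (((B ∩ S).ncard : ℝ) - c) :=
          mul_le_mul_of_nonneg_left (by linarith) hlam
        show φ (incVec B) - lam * (((B ∩ S).ncard : ℝ) - c) ≤ Mhi - lam
        linarith
      exact this
    have hvb : ∀ lam : ℝ, 0 ≤ lam → vfl ≤ vf lam := by
      intro lam hlam
      have hle : ψ lam B0 ≤ vf lam := Finset.le_sup' _ hB0L
      have h5 : vfl ≤ ψ lam B0 := by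
        show φ (incVec B0) ≤ φ (incVec B0) - lam * (((B0 ∩ S).ncard : ℝ) - c)
        have hq1 : ((B0 ∩ S).ncard : ℝ) ≤ (c : ℝ) := by exact_mod_cast hB0c
        nlinarith
      linarith
    set big : ℝ := Mhi - vfl + 1 with hbigdef
    have hbigpos : 0 < big := by
      have h1 : uf 0 ≤ Mhi := by have := hub 0 le_rfl; linarith
      have h2 : vfl ≤ vf 0 := hvb 0 le_rfl
      rw [hbigdef]; linarith
    have hfbig : uf big - vf big < 0 := by
      have h1 : uf big ≤ Mhi - big := hub big hbigpos.le
      have h2 : vfl ≤ vf big := hvb big hbigpos.le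
      rw [hbigdef] at h1 ⊢
      linarith
    have hf0 : 0 < uf 0 - vf 0 := by linarith
    -- continuity
    have hcontu : Continuous uf := by
      rw [hufdef]
      apply continuous_finset_sup' (fun B lam => ψ lam B)
      intro B _
      simp only [hψdef]
      exact continuous_const.sub (continuous_id.mul continuous_const)
    have hcontv : Continuous vf := by
      rw [hvfdef]
      apply continuous_finset_sup' (fun B lam => ψ lam B)
      intro B _
      simp only [hψdef]
      exact continuous_const.sub (continuous_id.mul continuous_const)
    have hivt : (0 : ℝ) ∈ (fun lam => uf lam - vf lam) '' (Set.Icc 0 big) := by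
      apply intermediate_value_Icc' hbigpos.le ((hcontu.sub hcontv).continuousOn)
      constructor
      · exact hfbig.le
      · exact hf0.le
    obtain ⟨lamstar, hlammem, hlameq⟩ := hivt
    have hlam0 : 0 ≤ lamstar := hlammem.1
    have hueqv : uf lamstar = vf lamstar := by
      have : uf lamstar - vf lamstar = 0 := hlameq
      linarith
    set mstar : ℝ := uf lamstar with hmstardef
    have hmaxmax : max (uf lamstar) (vf lamstar) = mstar := by
      rw [← hueqv, ← hmstardef, max_self]
    obtain ⟨B₁, hB₁H, hB₁eq⟩ := Finset.exists_mem_eq_sup' hHne (ψ lamstar)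
    obtain ⟨B₂, hB₂L, hB₂eq⟩ := Finset.exists_mem_eq_sup' hLne (ψ lamstar)
    rw [hHfindef, Set.Finite.mem_toFinset] at hB₁H
    rw [hLfindef, Set.Finite.mem_toFinset] at hB₂L
    -- the linear functional for the path lemma
    set F : (Fin n → ℝ) →ₗ[ℝ] ℝ := (φ : (Fin n → ℝ) →ₗ[ℝ] ℝ) - lamstar • sumOn S with hFdef
    have hFincVec : ∀ B : Set (Fin n),
        F (incVec B) = φ (incVec B) - lamstar * (((B ∩ S).ncard : ℝ)) := by
      intro B
      simp only [hFdef, LinearMap.sub_apply, LinearMap.smul_apply, smul_eq_mul,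
        ContinuousLinearMap.coe_coe, sumOn_incVec]
    have hψF : ∀ B : Set (Fin n), ψ lamstar B = F (incVec B) + lamstar * (c : ℝ) := by
      intro B
      rw [hFincVec]
      simp only [hψdef]
      ring
    have hmaxF : ∀ B, N.IsBase B → F (incVec B) ≤ mstar - lamstar * (c : ℝ) := by
      intro B hB
      have h1 := hmaxψ lamstar B hB
      rw [hmaxmax, hψF] at h1
      linarith
    have hF₁ : F (incVec B₁) = mstar - lamstar * (c : ℝ) := by
      have h6 : uf lamstar = ψ lamstar B₁ := hB₁eq
      have h1 : ψ lamstar B₁ = mstar := by rw [hmstardef, h6]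
      rw [hψF] at h1
      linarith
    have hF₂ : F (incVec B₂) = mstar - lamstar * (c : ℝ) := by
      have h6 : vf lamstar = ψ lamstar B₂ := hB₂eq
      have h1 : ψ lamstar B₂ = mstar := by rw [hueqv, h6]
      rw [hψF] at h1
      linarith
    obtain ⟨D, hDb, hDF, hDq⟩ := path_to_level hNE F S c (mstar - lamstar * (c : ℝ)) hmaxF
      ((B₁ \ B₂).ncard) B₁ B₂ rfl hB₁H.1 hB₂L.1 hF₁ hF₂ hB₁H.2 hB₂L.2
    have hφD : φ (incVec D) = mstar := by
      have h1 := hFincVec D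
      rw [hDF, hDq] at h1
      linarith
    have h2 : φ (incVec D) < su :=
      hsep1 _ (subset_convexHull ℝ Vlow ⟨D, hDb, hDq.le, rfl⟩)
    have h3 : φ x ≤ mstar := (hφx lamstar hlam0).trans_eq hmaxmax
    linarith


/-! ### blockU / blockSum toolkit -/

section blocks

variable {t : ℕ} {E : Fin t → Set (Fin n)} {a : Fin t → ℕ}

lemma mem_blockU {x : Fin n} {lo hi : ℕ} :
    x ∈ blockU E lo hi ↔ ∃ i : Fin t, (lo ≤ (i : ℕ) ∧ (i : ℕ) < hi) ∧ x ∈ E i := by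
  simp [blockU]

lemma blockU_split {lo mid hi : ℕ} (h1 : lo ≤ mid) (h2 : mid ≤ hi) :
    blockU E lo hi = blockU E lo mid ∪ blockU E mid hi := by
  ext x
  simp only [mem_blockU, Set.mem_union]
  constructor
  · rintro ⟨i, ⟨hlo, hhi⟩, hx⟩
    by_cases h : (i : ℕ) < mid
    · exact Or.inl ⟨i, ⟨hlo, h⟩, hx⟩
    · exact Or.inr ⟨i, ⟨by omega, hhi⟩, hx⟩
  · rintro (⟨i, ⟨hlo, hhi⟩, hx⟩ | ⟨i, ⟨hlo, hhi⟩, hx⟩)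
    · exact ⟨i, ⟨hlo, by omega⟩, hx⟩
    · exact ⟨i, ⟨by omega, hhi⟩, hx⟩

lemma blockU_single {k : ℕ} (hk : k < t) : blockU E k (k+1) = E ⟨k, hk⟩ := by
  ext x
  simp only [mem_blockU]
  constructor
  · rintro ⟨i, ⟨hlo, hhi⟩, hx⟩
    have : i = ⟨k, hk⟩ := by
      apply Fin.ext; simp only []; omega
    exact this ▸ hx
  · intro hx
    exact ⟨⟨k, hk⟩, ⟨by simp, by simp⟩, hx⟩

lemma subset_blockU {k lo hi : ℕ} (hkt : k < t) (h1 : lo ≤ k) (h2 : k < hi) :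
    E ⟨k, hkt⟩ ⊆ blockU E lo hi := by
  intro x hx
  exact mem_blockU.2 ⟨⟨k, hkt⟩, ⟨by simpa using h1, by simpa using h2⟩, hx⟩

lemma blockU_all : blockU E 0 t = ⋃ i, E i := by
  ext x
  simp only [mem_blockU, Set.mem_iUnion]
  exact ⟨fun ⟨i, _, hx⟩ => ⟨i, hx⟩, fun ⟨i, hx⟩ => ⟨i, ⟨Nat.zero_le _, i.isLt⟩, hx⟩⟩

lemma blockU_disjoint (hdisj : Pairwise (Function.onFun Disjoint E))
    {lo hi lo' hi' : ℕ} (h : hi ≤ lo') :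
    Disjoint (blockU E lo hi) (blockU E lo' hi') := by
  rw [Set.disjoint_left]
  intro x hx hx'
  obtain ⟨i, ⟨_, hi2⟩, hxi⟩ := mem_blockU.1 hx
  obtain ⟨j, ⟨hj1, _⟩, hxj⟩ := mem_blockU.1 hx'
  have hij : i ≠ j := by
    intro hc
    subst hc
    omega
  exact Set.disjoint_left.1 (hdisj hij) hxi hxj

lemma blockSum_split {lo mid hi : ℕ} (h1 : lo ≤ mid) (h2 : mid ≤ hi) :
    blockSum a lo hi = blockSum a lo mid + blockSum a mid hi := by
  classical
  rw [blockSum, blockSum, blockSum, ← Finset.sum_union]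
  · congr 1
    ext i
    simp only [Finset.mem_union, Finset.mem_filter, Finset.mem_univ, true_and]
    omega
  · rw [Finset.disjoint_left]
    intro i hi1 hi2
    simp only [Finset.mem_filter, Finset.mem_univ, true_and] at hi1 hi2
    omega

lemma blockSum_single {k : ℕ} (hk : k < t) : blockSum a k (k+1) = a ⟨k, hk⟩ := by
  classical
  rw [blockSum]
  rw [show Finset.univ.filter (fun i : Fin t => k ≤ (i : ℕ) ∧ (i : ℕ) < k + 1) = {⟨k, hk⟩} from ?_]
  · simp
  · ext i
    simp only [Finset.mem_filter, Finset.mem_univ, true_and, Finset.mem_singleton]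
    constructor
    · intro h; apply Fin.ext; simp only []; omega
    · intro h; subst h; simp

lemma blockSum_all : blockSum a 0 t = ∑ i, a i := by
  classical
  rw [blockSum]
  congr 1
  ext i
  simp [i.isLt]

lemma le_blockSum {k lo hi : ℕ} (hkt : k < t) (h1 : lo ≤ k) (h2 : k < hi) :
    a ⟨k, hkt⟩ ≤ blockSum a lo hi := by
  classical
  apply Finset.single_le_sum (f := a) (fun i _ => Nat.zero_le _)
  simp only [Finset.mem_filter, Finset.mem_univ, true_and]
  exact ⟨by simpa using h1, by simpa using h2⟩

end blocks


/-! ### Context for the main theorem -/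

structure Ctx (n t : ℕ) where
  M : Matroid (Fin n)
  E : Fin t → Set (Fin n)
  a : Fin t → ℕ
  r : ℕ
  ht : 3 ≤ t
  hME : M.E = Set.univ
  hrank : mrk M = r
  hgood : IsGoodPartition M r E a

namespace Ctx

variable {t : ℕ} (C : Ctx n t)

def A : Set (Fin n) := blockU C.E 0 1
def AB : Set (Fin n) := blockU C.E 0 2
def Bb : Set (Fin n) := blockU C.E 1 2
def Cb : Set (Fin n) := blockU C.E 2 t
def al : ℕ := blockSum C.a 0 1
def be : ℕ := blockSum C.a 1 2
def cc : ℕ := blockSum C.a 0 2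
def ga : ℕ := blockSum C.a 2 t

lemma hdisj : Pairwise (Function.onFun Disjoint C.E) := C.hgood.2.1

lemma AB_eq : C.AB = C.A ∪ C.Bb := blockU_split (by have := C.ht; omega) (by have := C.ht; omega)

lemma BbCb_eq : blockU C.E 1 t = C.Bb ∪ C.Cb := blockU_split (by have := C.ht; omega) (by have := C.ht; omega)

lemma univ_eq : C.AB ∪ C.Cb = Set.univ := by
  have h1 : blockU C.E 0 t = C.AB ∪ C.Cb := blockU_split (by have := C.ht; omega) (by have := C.ht; omega)
  rw [← h1, blockU_all, C.hgood.1, C.hME]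

lemma univ_eq' : C.A ∪ (C.Bb ∪ C.Cb) = Set.univ := by
  have h1 : blockU C.E 0 t = C.A ∪ blockU C.E 1 t := blockU_split (by have := C.ht; omega) (by have := C.ht; omega)
  rw [← BbCb_eq, ← h1, blockU_all, C.hgood.1, C.hME]

lemma dAB_Cb : Disjoint C.AB C.Cb := blockU_disjoint C.hdisj (by have := C.ht; omega)
lemma dA_Bb : Disjoint C.A C.Bb := blockU_disjoint C.hdisj (by have := C.ht; omega)
lemma dA_Cb : Disjoint C.A C.Cb := blockU_disjoint C.hdisj (by have := C.ht; omega)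
lemma dBb_Cb : Disjoint C.Bb C.Cb := blockU_disjoint C.hdisj (by have := C.ht; omega)
lemma dA_BbCb : Disjoint C.A (C.Bb ∪ C.Cb) := by
  rw [Set.disjoint_union_right]
  exact ⟨C.dA_Bb, C.dA_Cb⟩

lemma cc_eq : C.cc = C.al + C.be := blockSum_split (by have := C.ht; omega) (by have := C.ht; omega)

lemma r_eq : C.r = C.cc + C.ga := by
  have h1 : blockSum C.a 0 t = C.cc + C.ga := blockSum_split (by have := C.ht; omega) (by have := C.ht; omega)
  rw [← h1, blockSum_all]
  exact C.hgood.2.2.2.2.1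

lemma sum1t_eq : blockSum C.a 1 t = C.be + C.ga := blockSum_split (by have := C.ht; omega) (by have := C.ht; omega)

lemma al_eq : C.al = C.a ⟨0, by have := C.ht; omega⟩ := blockSum_single (by have := C.ht; omega)
lemma be_eq : C.be = C.a ⟨1, by have := C.ht; omega⟩ := by
  have := blockSum_single (a := C.a) (k := 1) (by have := C.ht; omega)
  exact this

lemma al_pos : 1 ≤ C.al := by
  rw [C.al_eq]; exact (C.hgood.2.2.2.1 _).1
lemma be_pos : 1 ≤ C.be := by
  rw [C.be_eq]; exact (C.hgood.2.2.2.1 _).1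
lemma ga_pos : 1 ≤ C.ga := by
  have h1 : C.a ⟨2, by have := C.ht; omega⟩ ≤ C.ga := le_blockSum (by have := C.ht; omega) (by have := C.ht; omega) (by have := C.ht; omega)
  have h2 := (C.hgood.2.2.2.1 ⟨2, by have := C.ht; omega⟩).1
  omega

lemma A_eq : C.A = C.E ⟨0, by have := C.ht; omega⟩ := blockU_single (by have := C.ht; omega)
lemma Bb_eq : C.Bb = C.E ⟨1, by have := C.ht; omega⟩ := blockU_single (by have := C.ht; omega)

lemma base_ncard {B : Set (Fin n)} (hB : C.M.IsBase B) : B.ncard = C.r := by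
  rw [← C.hrank, mrk_eq_ncard_base hB]

lemma diff_A_eq (B : Set (Fin n)) : B \ C.A = B ∩ (C.Bb ∪ C.Cb) := by
  ext x
  simp only [Set.mem_diff, Set.mem_inter_iff]
  constructor
  · rintro ⟨hxB, hxA⟩
    refine ⟨hxB, ?_⟩
    have : x ∈ C.A ∪ (C.Bb ∪ C.Cb) := by rw [C.univ_eq']; trivial
    rcases this with h | h
    · exact absurd h hxA
    · exact h
  · rintro ⟨hxB, hx⟩
    exact ⟨hxB, fun hc => Set.disjoint_left.1 C.dA_BbCb hc hx⟩

/-- counting: `|B ∩ AB| + |B ∩ C| = r` for a base `B`. -/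
lemma count_split {B : Set (Fin n)} (hB : C.M.IsBase B) :
    (B ∩ C.AB).ncard + (B ∩ C.Cb).ncard = C.r := by
  have h1 : (B ∩ C.AB) ∪ (B ∩ C.Cb) = B := by
    rw [← Set.inter_union_distrib_left, C.univ_eq, Set.inter_univ]
  have h2 : Disjoint (B ∩ C.AB) (B ∩ C.Cb) :=
    Set.disjoint_of_subset Set.inter_subset_right Set.inter_subset_right C.dAB_Cb
  rw [← Set.ncard_union_eq h2 (Set.toFinite _) (Set.toFinite _), h1, C.base_ncard hB]

/-- counting: `|B ∩ A| + |B ∩ Bb| = |B ∩ AB|`. -/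
lemma count_split' (B : Set (Fin n)) :
    (B ∩ C.A).ncard + (B ∩ C.Bb).ncard = (B ∩ C.AB).ncard := by
  have h1 : (B ∩ C.A) ∪ (B ∩ C.Bb) = B ∩ C.AB := by
    rw [← Set.inter_union_distrib_left, C.AB_eq]
  have h2 : Disjoint (B ∩ C.A) (B ∩ C.Bb) :=
    Set.disjoint_of_subset Set.inter_subset_right Set.inter_subset_right C.dA_Bb
  rw [← Set.ncard_union_eq h2 (Set.toFinite _) (Set.toFinite _), h1]

/-- goodness, instance j = 1. -/
lemma G1 {X Y : Set (Fin n)} (hX : C.M.Indep X) (hXA : X ⊆ C.A) (hXc : X.ncard ≤ C.al)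
    (hY : C.M.Indep Y) (hYs : Y ⊆ C.Bb ∪ C.Cb) (hYc : Y.ncard ≤ C.be + C.ga) :
    C.M.Indep (X ∪ Y) := by
  refine C.hgood.2.2.2.2.2.1 1 (by have := C.ht; omega) (by have := C.ht; omega) X Y ?_ hXc ?_ ?_
  · rw [Matroid.restrict_indep_iff]; exact ⟨hX, hXA⟩
  · rw [Matroid.restrict_indep_iff, C.BbCb_eq]; exact ⟨hY, hYs⟩
  · rw [C.sum1t_eq]; exact hYc

/-- goodness, instance j = 2. -/
lemma G2 {X Y : Set (Fin n)} (hX : C.M.Indep X) (hXA : X ⊆ C.AB) (hXc : X.ncard ≤ C.cc)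
    (hY : C.M.Indep Y) (hYs : Y ⊆ C.Cb) (hYc : Y.ncard ≤ C.ga) :
    C.M.Indep (X ∪ Y) := by
  refine C.hgood.2.2.2.2.2.1 2 (by have := C.ht; omega) (by have := C.ht; omega) X Y ?_ hXc ?_ hYc
  · rw [Matroid.restrict_indep_iff]; exact ⟨hX, hXA⟩
  · rw [Matroid.restrict_indep_iff]; exact ⟨hY, hYs⟩

/-- goodness, instance (j,k) = (1,2). -/
lemma G3 {X Y Z : Set (Fin n)} (hX : C.M.Indep X) (hXA : X ⊆ C.A) (hXc : X.ncard ≤ C.al)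
    (hY : C.M.Indep Y) (hYs : Y ⊆ C.Bb) (hYc : Y.ncard ≤ C.be)
    (hZ : C.M.Indep Z) (hZs : Z ⊆ C.Cb) (hZc : Z.ncard ≤ C.ga) :
    C.M.Indep (X ∪ Y ∪ Z) := by
  have h3t : (2:ℕ) ≤ t - 1 := by have := C.ht; omega
  refine C.hgood.2.2.2.2.2.2 1 2 (by have := C.ht; omega) (by have := C.ht; omega) h3t X Y Z ?_ hXc ?_ hYc ?_ hZc
  · rw [Matroid.restrict_indep_iff]; exact ⟨hX, hXA⟩
  · rw [Matroid.restrict_indep_iff]; exact ⟨hY, hYs⟩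
  · rw [Matroid.restrict_indep_iff]; exact ⟨hZ, hZs⟩

/-- independent subsets of any size up to `a i + 1` inside block `i`. -/
lemma exists_in_block (i : Fin t) (m : ℕ) (hm : m ≤ C.a i + 1) :
    ∃ X, C.M.Indep X ∧ X ⊆ C.E i ∧ X.ncard = m := by
  have h1 := (C.hgood.2.2.2.1 i).2
  have h2 : m ≤ mrk (C.M ↾ C.E i) := by have := C.ht; omega
  obtain ⟨I, hI, hIc⟩ := exists_indep_ncard m h2
  rw [Matroid.restrict_indep_iff] at hI
  exact ⟨I, hI.1, hI.2, hIc⟩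


/-- There is an independent subset of `Cb` of size `ga + 1`. -/
lemma exists_tail_big : ∃ W, C.M.Indep W ∧ W ⊆ C.Cb ∧ W.ncard = C.ga + 1 := by
  have ht := C.ht
  have key : ∀ k : ℕ, 3 ≤ k → k ≤ t →
      ∃ W, C.M.Indep W ∧ W ⊆ blockU C.E 2 k ∧ W.ncard = blockSum C.a 2 k + 1 := by
    intro k hk3
    induction k, hk3 using Nat.le_induction with
    | base =>
      intro h3t
      obtain ⟨X, hX, hXs, hXc⟩ := C.exists_in_block ⟨2, by omega⟩ (C.a ⟨2, by omega⟩ + 1) le_rfl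
      refine ⟨X, hX, ?_, ?_⟩
      · rw [blockU_single (by omega : (2:ℕ) < t)]; exact hXs
      · rw [blockSum_single (by omega : (2:ℕ) < t)]; exact hXc
    | succ k hk3 ih =>
      intro hk1t
      obtain ⟨W, hW, hWs, hWc⟩ := ih (by omega)
      have hkt : k < t := by omega
      obtain ⟨X, hX, hXs, hXc⟩ := C.exists_in_block ⟨k, hkt⟩ (C.a ⟨k, hkt⟩) (by omega)
      have hind : C.M.Indep (W ∪ X) := by
        refine C.hgood.2.2.2.2.2.1 k (by omega) (by omega) W X ?_ ?_ ?_ ?_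
        · rw [Matroid.restrict_indep_iff]
          exact ⟨hW, hWs.trans (by
            intro x hx
            obtain ⟨i, ⟨h2i, hik⟩, hxi⟩ := mem_blockU.1 hx
            exact mem_blockU.2 ⟨i, ⟨by omega, hik⟩, hxi⟩)⟩
        · have hsplit : blockSum C.a 0 k = blockSum C.a 0 2 + blockSum C.a 2 k :=
            blockSum_split (by omega) (by omega)
          have hcc : C.al + C.be = C.cc := C.cc_eq.symm
          have hal := C.al_pos
          have hcc2 : C.cc = blockSum C.a 0 2 := rfl
          omega
        · rw [Matroid.restrict_indep_iff]
          exact ⟨hX, hXs.trans (subset_blockU hkt (le_refl k) (by omega))⟩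
        · rw [hXc]
          exact le_blockSum hkt (le_refl k) (by omega)
      have hdisjWX : Disjoint W X := by
        refine Set.disjoint_of_subset hWs hXs ?_
        have := blockU_disjoint (E := C.E) C.hdisj (lo := 2) (hi := k) (lo' := k) (hi' := k+1)
          (le_refl k)
        have hXblk : C.E ⟨k, hkt⟩ = blockU C.E k (k+1) := (blockU_single hkt).symm
        rw [hXblk]
        exact this
      refine ⟨W ∪ X, hind, ?_, ?_⟩
      · rw [show blockU C.E 2 (k+1) = blockU C.E 2 k ∪ blockU C.E k (k+1) from
          blockU_split (by omega) (by omega)]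
        exact Set.union_subset_union hWs (hXs.trans (blockU_single hkt).symm.subset)
      · rw [Set.ncard_union_eq hdisjWX (Set.toFinite _) (Set.toFinite _), hWc, hXc,
          show blockSum C.a 2 (k+1) = blockSum C.a 2 k + blockSum C.a k (k+1) from
            blockSum_split (by omega) (by omega),
          blockSum_single hkt]
        ring
  exact key t (by omega) le_rfl

/-- There is an independent subset of `Cb` of any size `m ≤ ga + 1`. -/
lemma exists_tail (m : ℕ) (hm : m ≤ C.ga + 1) :
    ∃ W, C.M.Indep W ∧ W ⊆ C.Cb ∧ W.ncard = m := by
  obtain ⟨W, hW, hWs, hWc⟩ := C.exists_tail_big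
  obtain ⟨W', hW's, hW'c⟩ := Set.exists_subset_card_eq (n := m) (by omega : m ≤ W.ncard)
  exact ⟨W', hW.subset hW's, hW's.trans hWs, hW'c⟩

/-- A base with trace `(al, be, ga)` : in all three families. -/
lemma exists_Bstar : ∃ B, C.M.IsBase B ∧ (B ∩ C.A).ncard = C.al ∧
    (B ∩ C.AB).ncard = C.cc := by
  have ht := C.ht
  obtain ⟨X, hX, hXs, hXc⟩ := C.exists_in_block ⟨0, by omega⟩ C.al (by rw [C.al_eq]; omega)
  obtain ⟨Y, hY, hYs, hYc⟩ := C.exists_in_block ⟨1, by omega⟩ C.be (by rw [C.be_eq]; omega)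
  obtain ⟨Z, hZ, hZs, hZc⟩ := C.exists_tail C.ga (by omega)
  have hXA : X ⊆ C.A := by rw [C.A_eq]; exact hXs
  have hYB : Y ⊆ C.Bb := by rw [C.Bb_eq]; exact hYs
  have hind : C.M.Indep (X ∪ Y ∪ Z) :=
    C.G3 hX hXA (le_of_eq hXc) hY hYB (le_of_eq hYc) hZ hZs (le_of_eq hZc)
  have hdXY : Disjoint X Y := Set.disjoint_of_subset hXA hYB C.dA_Bb
  have hdXZ : Disjoint X Z := Set.disjoint_of_subset hXA hZs C.dA_Cb
  have hdYZ : Disjoint Y Z := Set.disjoint_of_subset hYB hZs C.dBb_Cb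
  have hdXYZ : Disjoint (X ∪ Y) Z := by
    rw [Set.disjoint_union_left]; exact ⟨hdXZ, hdYZ⟩
  have hcard : (X ∪ Y ∪ Z).ncard = C.r := by
    rw [Set.ncard_union_eq hdXYZ (Set.toFinite _) (Set.toFinite _),
      Set.ncard_union_eq hdXY (Set.toFinite _) (Set.toFinite _), hXc, hYc, hZc,
      C.r_eq, C.cc_eq]
  have hbase : C.M.IsBase (X ∪ Y ∪ Z) := base_of_indep_ncard hind (by rw [hcard, C.hrank])
  refine ⟨X ∪ Y ∪ Z, hbase, ?_, ?_⟩
  · have : (X ∪ Y ∪ Z) ∩ C.A = X := by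
      rw [Set.union_inter_distrib_right, Set.union_inter_distrib_right]
      rw [Set.inter_eq_left.2 hXA,
        (Set.disjoint_of_subset hYB Set.Subset.rfl C.dA_Bb.symm).inter_eq,
        (Set.disjoint_of_subset hZs Set.Subset.rfl C.dA_Cb.symm).inter_eq]
      simp
    rw [this, hXc]
  · have : (X ∪ Y ∪ Z) ∩ C.AB = X ∪ Y := by
      rw [Set.union_inter_distrib_right, Set.union_inter_distrib_right]
      rw [Set.inter_eq_left.2 (hXA.trans (C.AB_eq ▸ Set.subset_union_left)),
        Set.inter_eq_left.2 (hYB.trans (C.AB_eq ▸ Set.subset_union_right)),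
        (Set.disjoint_of_subset hZs Set.Subset.rfl C.dAB_Cb.symm).inter_eq]
      simp
    rw [this, Set.ncard_union_eq hdXY (Set.toFinite _) (Set.toFinite _), hXc, hYc, C.cc_eq]

/-- A base with `|B ∩ A| ≥ al` and `|B ∩ AB| ≥ cc + 1`. -/
lemma exists_Bhat : ∃ B, C.M.IsBase B ∧ C.al ≤ (B ∩ C.A).ncard ∧
    C.cc + 1 ≤ (B ∩ C.AB).ncard := by
  have ht := C.ht
  obtain ⟨X, hX, hXs, hXc⟩ := C.exists_in_block ⟨0, by omega⟩ C.al (by rw [C.al_eq]; omega)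
  obtain ⟨Y, hY, hYs, hYc⟩ := C.exists_in_block ⟨1, by omega⟩ (C.be + 1) (by rw [C.be_eq])
  have hXA : X ⊆ C.A := by rw [C.A_eq]; exact hXs
  have hYB : Y ⊆ C.Bb := by rw [C.Bb_eq]; exact hYs
  have hind : C.M.Indep (X ∪ Y) := by
    refine C.G1 hX hXA (le_of_eq hXc) hY (hYB.trans Set.subset_union_left) ?_
    have := C.ga_pos; omega
  obtain ⟨B, hB, hsub⟩ := hind.exists_isBase_superset
  refine ⟨B, hB, ?_, ?_⟩
  · calc C.al = X.ncard := hXc.symm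
      _ ≤ (B ∩ C.A).ncard := Set.ncard_le_ncard
          (Set.subset_inter ((Set.subset_union_left).trans hsub) hXA) (Set.toFinite _)
  · have hdXY : Disjoint X Y := Set.disjoint_of_subset hXA hYB C.dA_Bb
    calc C.cc + 1 = X.ncard + Y.ncard := by rw [hXc, hYc, C.cc_eq]; ring
      _ = (X ∪ Y).ncard := (Set.ncard_union_eq hdXY (Set.toFinite _) (Set.toFinite _)).symm
      _ ≤ (B ∩ C.AB).ncard := by
          apply Set.ncard_le_ncard _ (Set.toFinite _)
          refine Set.subset_inter hsub ?_
          rw [C.AB_eq]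
          exact Set.union_subset (hXA.trans Set.subset_union_left)
            (hYB.trans Set.subset_union_right)

/-- A base with `|B ∩ A| ≥ al` and `|B ∩ AB| ≤ cc - 1`. -/
lemma exists_Bcheck : ∃ B, C.M.IsBase B ∧ C.al ≤ (B ∩ C.A).ncard ∧
    (B ∩ C.AB).ncard + 1 ≤ C.cc := by
  have ht := C.ht
  obtain ⟨X, hX, hXs, hXc⟩ := C.exists_in_block ⟨0, by omega⟩ C.al (by rw [C.al_eq]; omega)
  obtain ⟨W, hW, hWs, hWc⟩ := C.exists_tail (C.ga + 1) le_rfl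
  have hXA : X ⊆ C.A := by rw [C.A_eq]; exact hXs
  have hind : C.M.Indep (X ∪ W) := by
    refine C.G1 hX hXA (le_of_eq hXc) hW (hWs.trans Set.subset_union_right) ?_
    have := C.be_pos; omega
  obtain ⟨B, hB, hsub⟩ := hind.exists_isBase_superset
  refine ⟨B, hB, ?_, ?_⟩
  · calc C.al = X.ncard := hXc.symm
      _ ≤ (B ∩ C.A).ncard := Set.ncard_le_ncard
          (Set.subset_inter ((Set.subset_union_left).trans hsub) hXA) (Set.toFinite _)
  · have h1 : C.ga + 1 ≤ (B ∩ C.Cb).ncard := by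
      calc C.ga + 1 = W.ncard := hWc.symm
        _ ≤ (B ∩ C.Cb).ncard := Set.ncard_le_ncard
            (Set.subset_inter ((Set.subset_union_right).trans hsub) hWs) (Set.toFinite _)
    have h2 := C.count_split hB
    have h3 := C.r_eq
    omega


/-- A-construction : exchange within `A` when `|B₁ ∩ A| = al`. -/
lemma lemA {B₁ B₂ : Set (Fin n)} (hB₁ : C.M.IsBase B₁) (hB₂ : C.M.IsBase B₂)
    {e : Fin n} (he : e ∈ B₁) (heB₂ : e ∉ B₂) (heA : e ∈ C.A)
    (h₁ : (B₁ ∩ C.A).ncard = C.al) (h₂ : C.al ≤ (B₂ ∩ C.A).ncard) :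
    ∃ f ∈ C.A, f ∈ B₂ ∧ f ∉ B₁ ∧ C.M.IsBase (insert f (B₁ \ {e})) := by
  obtain ⟨X, hXs, hXc⟩ := Set.exists_subset_card_eq h₂
  have hXA : X ⊆ C.A := hXs.trans Set.inter_subset_right
  have hXind : C.M.Indep X := hB₂.indep.subset (hXs.trans Set.inter_subset_left)
  set Y : Set (Fin n) := B₁ \ C.A with hYdef
  have hYind : C.M.Indep Y := hB₁.indep.subset diff_subset
  have hYs : Y ⊆ C.Bb ∪ C.Cb := by
    rw [hYdef, C.diff_A_eq]; exact Set.inter_subset_right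
  have hYc : Y.ncard = C.r - C.al := by
    have h3 : (B₁ ∩ C.A).ncard + Y.ncard = C.r := by
      rw [hYdef]
      have h4 : (B₁ ∩ C.A) ∪ (B₁ \ C.A) = B₁ := Set.inter_union_diff _ _
      have h5 : Disjoint (B₁ ∩ C.A) (B₁ \ C.A) := Set.disjoint_of_subset_left
        Set.inter_subset_right disjoint_sdiff_right
      rw [← Set.ncard_union_eq h5 (Set.toFinite _) (Set.toFinite _), h4, C.base_ncard hB₁]
    omega
  have hind : C.M.Indep (X ∪ Y) := by
    refine C.G1 hXind hXA (le_of_eq hXc) hYind hYs ?_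
    have := C.r_eq; have := C.cc_eq
    omega
  have hcard : (X ∪ Y).ncard = C.r := by
    have hd : Disjoint X Y := Set.disjoint_of_subset hXA (hYs) C.dA_BbCb
    rw [Set.ncard_union_eq hd (Set.toFinite _) (Set.toFinite _), hXc, hYc]
    have h6 : C.al ≤ C.r := by
      have := C.r_eq; have := C.cc_eq; omega
    omega
  have hbase : C.M.IsBase (X ∪ Y) := base_of_indep_ncard hind (by rw [hcard, C.hrank])
  have hsub : X ∪ Y ⊆ (B₁ \ {e}) ∪ (B₂ ∩ C.A) := by
    intro x hx
    rcases hx with hx | hx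
    · exact Or.inr (hXs hx)
    · refine Or.inl ⟨hx.1, ?_⟩
      intro hc
      rw [Set.mem_singleton_iff] at hc
      exact hx.2 (hc ▸ heA)
  have heW : e ∉ B₂ ∩ C.A := fun hc => heB₂ hc.1
  obtain ⟨f, hfW, hfB₁, hfbase⟩ := exchange_into hB₁ he hbase hsub heW
  exact ⟨f, hfW.2, hfW.1, hfB₁, hfbase⟩

/-- AB-construction : exchange within `AB` when `|B₁ ∩ Cb| = ga`. -/
lemma lemAB {B₁ B₂ : Set (Fin n)} (hB₁ : C.M.IsBase B₁) (hB₂ : C.M.IsBase B₂)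
    {e : Fin n} (he : e ∈ B₁) (heB₂ : e ∉ B₂) (heAB : e ∈ C.AB)
    (h₁ : (B₁ ∩ C.AB).ncard = C.cc) (h₂ : C.cc ≤ (B₂ ∩ C.AB).ncard) :
    ∃ f ∈ C.AB, f ∈ B₂ ∧ f ∉ B₁ ∧ C.M.IsBase (insert f (B₁ \ {e})) := by
  obtain ⟨X, hXs, hXc⟩ := Set.exists_subset_card_eq h₂
  have hXA : X ⊆ C.AB := hXs.trans Set.inter_subset_right
  have hXind : C.M.Indep X := hB₂.indep.subset (hXs.trans Set.inter_subset_left)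
  set Y : Set (Fin n) := B₁ ∩ C.Cb with hYdef
  have hYind : C.M.Indep Y := hB₁.indep.subset Set.inter_subset_left
  have hYc : Y.ncard = C.ga := by
    rw [hYdef]
    have h3 := C.count_split hB₁
    have h4 := C.r_eq
    omega
  have hind : C.M.Indep (X ∪ Y) :=
    C.G2 hXind hXA (le_of_eq hXc) hYind Set.inter_subset_right (le_of_eq hYc)
  have hcard : (X ∪ Y).ncard = C.r := by
    have hd : Disjoint X Y := Set.disjoint_of_subset hXA Set.inter_subset_right C.dAB_Cb
    rw [Set.ncard_union_eq hd (Set.toFinite _) (Set.toFinite _), hXc, hYc, C.r_eq]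
  have hbase : C.M.IsBase (X ∪ Y) := base_of_indep_ncard hind (by rw [hcard, C.hrank])
  have hsub : X ∪ Y ⊆ (B₁ \ {e}) ∪ (B₂ ∩ C.AB) := by
    intro x hx
    rcases hx with hx | hx
    · exact Or.inr (hXs hx)
    · refine Or.inl ⟨hx.1, ?_⟩
      intro hc
      rw [Set.mem_singleton_iff] at hc
      subst hc
      exact Set.disjoint_left.1 C.dAB_Cb heAB hx.2
  have heW : e ∉ B₂ ∩ C.AB := fun hc => heB₂ hc.1
  obtain ⟨f, hfW, hfB₁, hfbase⟩ := exchange_into hB₁ he hbase hsub heW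
  exact ⟨f, hfW.2, hfW.1, hfB₁, hfbase⟩

/-- C-construction : exchange within `Cb` when `|B₁ ∩ AB| = cc`. -/
lemma lemC {B₁ B₂ : Set (Fin n)} (hB₁ : C.M.IsBase B₁) (hB₂ : C.M.IsBase B₂)
    {e : Fin n} (he : e ∈ B₁) (heB₂ : e ∉ B₂) (heC : e ∈ C.Cb)
    (h₁ : (B₁ ∩ C.AB).ncard = C.cc) (h₂ : (B₂ ∩ C.AB).ncard ≤ C.cc) :
    ∃ f ∈ C.Cb, f ∈ B₂ ∧ f ∉ B₁ ∧ C.M.IsBase (insert f (B₁ \ {e})) := by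
  have h₂' : C.ga ≤ (B₂ ∩ C.Cb).ncard := by
    have h3 := C.count_split hB₂
    have h4 := C.r_eq
    omega
  obtain ⟨Y, hYs, hYc⟩ := Set.exists_subset_card_eq h₂'
  have hYC : Y ⊆ C.Cb := hYs.trans Set.inter_subset_right
  have hYind : C.M.Indep Y := hB₂.indep.subset (hYs.trans Set.inter_subset_left)
  set X : Set (Fin n) := B₁ ∩ C.AB with hXdef
  have hXind : C.M.Indep X := hB₁.indep.subset Set.inter_subset_left
  have hXc : X.ncard = C.cc := by rw [hXdef]; exact h₁
  have hind : C.M.Indep (X ∪ Y) :=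
    C.G2 hXind Set.inter_subset_right (le_of_eq hXc) hYind hYC (le_of_eq hYc)
  have hcard : (X ∪ Y).ncard = C.r := by
    have hd : Disjoint X Y := Set.disjoint_of_subset Set.inter_subset_right hYC C.dAB_Cb
    rw [Set.ncard_union_eq hd (Set.toFinite _) (Set.toFinite _), hXc, hYc, C.r_eq]
  have hbase : C.M.IsBase (X ∪ Y) := base_of_indep_ncard hind (by rw [hcard, C.hrank])
  have hsub : X ∪ Y ⊆ (B₁ \ {e}) ∪ (B₂ ∩ C.Cb) := by
    intro x hx
    rcases hx with hx | hx
    · refine Or.inl ⟨hx.1, ?_⟩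
      intro hc
      rw [Set.mem_singleton_iff] at hc
      subst hc
      exact Set.disjoint_left.1 C.dAB_Cb hx.2 heC
    · exact Or.inr (hYs hx)
  have heW : e ∉ B₂ ∩ C.Cb := fun hc => heB₂ hc.1
  obtain ⟨f, hfW, hfB₁, hfbase⟩ := exchange_into hB₁ he hbase hsub heW
  exact ⟨f, hfW.2, hfW.1, hfB₁, hfbase⟩


lemma mem_tri (x : Fin n) : x ∈ C.A ∨ x ∈ C.Bb ∨ x ∈ C.Cb := by
  have hx : x ∈ C.A ∪ (C.Bb ∪ C.Cb) := by rw [C.univ_eq']; trivial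
  rcases hx with h | h
  · exact Or.inl h
  · rcases h with h | h
    · exact Or.inr (Or.inl h)
    · exact Or.inr (Or.inr h)

lemma A_subset_AB : C.A ⊆ C.AB := by rw [C.AB_eq]; exact Set.subset_union_left
lemma Bb_subset_AB : C.Bb ⊆ C.AB := by rw [C.AB_eq]; exact Set.subset_union_right
lemma not_AB_of_Cb {x : Fin n} (h : x ∈ C.Cb) : x ∉ C.AB :=
  fun hc => Set.disjoint_left.1 C.dAB_Cb hc h
lemma not_A_of_Cb {x : Fin n} (h : x ∈ C.Cb) : x ∉ C.A :=
  fun hc => Set.disjoint_left.1 C.dA_Cb hc h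
lemma not_A_of_Bb {x : Fin n} (h : x ∈ C.Bb) : x ∉ C.A :=
  fun hc => Set.disjoint_left.1 C.dA_Bb hc h

/-- The exchange property for the family `ℬ(M₂)`. -/
theorem exch_low : Matroid.ExchangeProperty
    (fun B => C.M.IsBase B ∧ C.al ≤ (B ∩ C.A).ncard ∧ (B ∩ C.AB).ncard ≤ C.cc) := by
  classical
  rintro B₁ B₂ ⟨hB₁, hA₁, hq₁⟩ ⟨hB₂, hA₂, hq₂⟩ e ⟨heB₁, heB₂⟩
  rcases C.mem_tri e with heA | heBb | heCb
  · -- e ∈ A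
    have heAB : e ∈ C.AB := C.A_subset_AB heA
    by_cases hpa : (B₁ ∩ C.A).ncard = C.al
    · -- tight on A : A-construction
      obtain ⟨f, hfA, hfB₂, hfB₁, hfbase⟩ := C.lemA hB₁ hB₂ heB₁ heB₂ heA hpa hA₂
      refine ⟨f, ⟨hfB₂, hfB₁⟩, hfbase, ?_, ?_⟩
      · have h1 := swap_count heB₁ hfB₁ C.A
        rw [if_pos heA, if_pos hfA] at h1
        omega
      · have h1 := swap_count heB₁ hfB₁ C.AB
        rw [if_pos heAB, if_pos (C.A_subset_AB hfA)] at h1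
        omega
    · -- slack on A : plain exchange
      obtain ⟨f, hf, hfbase⟩ := hB₁.exchange hB₂ ⟨heB₁, heB₂⟩
      refine ⟨f, hf, hfbase, ?_, ?_⟩
      · have h1 := swap_count heB₁ hf.2 C.A
        rw [if_pos heA] at h1
        by_cases hfA : f ∈ C.A
        · rw [if_pos hfA] at h1; omega
        · rw [if_neg hfA] at h1; omega
      · have h1 := swap_count heB₁ hf.2 C.AB
        rw [if_pos heAB] at h1
        by_cases hfAB : f ∈ C.AB
        · rw [if_pos hfAB] at h1; omega
        · rw [if_neg hfAB] at h1; omega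
  · -- e ∈ Bb : plain exchange
    have heAB : e ∈ C.AB := C.Bb_subset_AB heBb
    have heA : e ∉ C.A := C.not_A_of_Bb heBb
    obtain ⟨f, hf, hfbase⟩ := hB₁.exchange hB₂ ⟨heB₁, heB₂⟩
    refine ⟨f, hf, hfbase, ?_, ?_⟩
    · have h1 := swap_count heB₁ hf.2 C.A
      rw [if_neg heA] at h1
      by_cases hfA : f ∈ C.A
      · rw [if_pos hfA] at h1; omega
      · rw [if_neg hfA] at h1; omega
    · have h1 := swap_count heB₁ hf.2 C.AB
      rw [if_pos heAB] at h1
      by_cases hfAB : f ∈ C.AB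
      · rw [if_pos hfAB] at h1; omega
      · rw [if_neg hfAB] at h1; omega
  · -- e ∈ Cb
    have heAB : e ∉ C.AB := C.not_AB_of_Cb heCb
    have heA : e ∉ C.A := C.not_A_of_Cb heCb
    by_cases hqc : (B₁ ∩ C.AB).ncard = C.cc
    · -- tight on AB : C-construction
      obtain ⟨f, hfC, hfB₂, hfB₁, hfbase⟩ := C.lemC hB₁ hB₂ heB₁ heB₂ heCb hqc hq₂
      refine ⟨f, ⟨hfB₂, hfB₁⟩, hfbase, ?_, ?_⟩
      · have h1 := swap_count heB₁ hfB₁ C.A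
        rw [if_neg heA, if_neg (C.not_A_of_Cb hfC)] at h1
        omega
      · have h1 := swap_count heB₁ hfB₁ C.AB
        rw [if_neg heAB, if_neg (C.not_AB_of_Cb hfC)] at h1
        omega
    · -- slack on AB : plain exchange
      obtain ⟨f, hf, hfbase⟩ := hB₁.exchange hB₂ ⟨heB₁, heB₂⟩
      refine ⟨f, hf, hfbase, ?_, ?_⟩
      · have h1 := swap_count heB₁ hf.2 C.A
        rw [if_neg heA] at h1
        by_cases hfA : f ∈ C.A
        · rw [if_pos hfA] at h1; omega
        · rw [if_neg hfA] at h1; omega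
      · have h1 := swap_count heB₁ hf.2 C.AB
        rw [if_neg heAB] at h1
        by_cases hfAB : f ∈ C.AB
        · rw [if_pos hfAB] at h1; omega
        · rw [if_neg hfAB] at h1; omega

/-- The exchange property for the family `ℬ(Mbar₂)`. -/
theorem exch_high : Matroid.ExchangeProperty
    (fun B => C.M.IsBase B ∧ C.al ≤ (B ∩ C.A).ncard ∧ C.cc ≤ (B ∩ C.AB).ncard) := by
  classical
  rintro B₁ B₂ ⟨hB₁, hA₁, hq₁⟩ ⟨hB₂, hA₂, hq₂⟩ e ⟨heB₁, heB₂⟩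
  rcases C.mem_tri e with heA | heBb | heCb
  · -- e ∈ A
    have heAB : e ∈ C.AB := C.A_subset_AB heA
    by_cases hpa : (B₁ ∩ C.A).ncard = C.al
    · -- tight on A : A-construction
      obtain ⟨f, hfA, hfB₂, hfB₁, hfbase⟩ := C.lemA hB₁ hB₂ heB₁ heB₂ heA hpa hA₂
      refine ⟨f, ⟨hfB₂, hfB₁⟩, hfbase, ?_, ?_⟩
      · have h1 := swap_count heB₁ hfB₁ C.A
        rw [if_pos heA, if_pos hfA] at h1
        omega
      · have h1 := swap_count heB₁ hfB₁ C.AB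
        rw [if_pos heAB, if_pos (C.A_subset_AB hfA)] at h1
        omega
    · by_cases hqc : (B₁ ∩ C.AB).ncard = C.cc
      · -- tight on AB : AB-construction
        obtain ⟨f, hfAB, hfB₂, hfB₁, hfbase⟩ := C.lemAB hB₁ hB₂ heB₁ heB₂ heAB hqc hq₂
        refine ⟨f, ⟨hfB₂, hfB₁⟩, hfbase, ?_, ?_⟩
        · have h1 := swap_count heB₁ hfB₁ C.A
          rw [if_pos heA] at h1
          by_cases hfA : f ∈ C.A
          · rw [if_pos hfA] at h1; omega
          · rw [if_neg hfA] at h1; omega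
        · have h1 := swap_count heB₁ hfB₁ C.AB
          rw [if_pos heAB, if_pos hfAB] at h1
          omega
      · -- slack everywhere : plain exchange
        obtain ⟨f, hf, hfbase⟩ := hB₁.exchange hB₂ ⟨heB₁, heB₂⟩
        refine ⟨f, hf, hfbase, ?_, ?_⟩
        · have h1 := swap_count heB₁ hf.2 C.A
          rw [if_pos heA] at h1
          by_cases hfA : f ∈ C.A
          · rw [if_pos hfA] at h1; omega
          · rw [if_neg hfA] at h1; omega
        · have h1 := swap_count heB₁ hf.2 C.AB
          rw [if_pos heAB] at h1
          by_cases hfAB : f ∈ C.AB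
          · rw [if_pos hfAB] at h1; omega
          · rw [if_neg hfAB] at h1; omega
  · -- e ∈ Bb
    have heAB : e ∈ C.AB := C.Bb_subset_AB heBb
    have heA : e ∉ C.A := C.not_A_of_Bb heBb
    by_cases hqc : (B₁ ∩ C.AB).ncard = C.cc
    · -- tight on AB : AB-construction
      obtain ⟨f, hfAB, hfB₂, hfB₁, hfbase⟩ := C.lemAB hB₁ hB₂ heB₁ heB₂ heAB hqc hq₂
      refine ⟨f, ⟨hfB₂, hfB₁⟩, hfbase, ?_, ?_⟩
      · have h1 := swap_count heB₁ hfB₁ C.A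
        rw [if_neg heA] at h1
        by_cases hfA : f ∈ C.A
        · rw [if_pos hfA] at h1; omega
        · rw [if_neg hfA] at h1; omega
      · have h1 := swap_count heB₁ hfB₁ C.AB
        rw [if_pos heAB, if_pos hfAB] at h1
        omega
    · -- plain exchange
      obtain ⟨f, hf, hfbase⟩ := hB₁.exchange hB₂ ⟨heB₁, heB₂⟩
      refine ⟨f, hf, hfbase, ?_, ?_⟩
      · have h1 := swap_count heB₁ hf.2 C.A
        rw [if_neg heA] at h1
        by_cases hfA : f ∈ C.A
        · rw [if_pos hfA] at h1; omega
        · rw [if_neg hfA] at h1; omega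
      · have h1 := swap_count heB₁ hf.2 C.AB
        rw [if_pos heAB] at h1
        by_cases hfAB : f ∈ C.AB
        · rw [if_pos hfAB] at h1; omega
        · rw [if_neg hfAB] at h1; omega
  · -- e ∈ Cb : plain exchange
    have heAB : e ∉ C.AB := C.not_AB_of_Cb heCb
    have heA : e ∉ C.A := C.not_A_of_Cb heCb
    obtain ⟨f, hf, hfbase⟩ := hB₁.exchange hB₂ ⟨heB₁, heB₂⟩
    refine ⟨f, hf, hfbase, ?_, ?_⟩
    · have h1 := swap_count heB₁ hf.2 C.A
      rw [if_neg heA] at h1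
      by_cases hfA : f ∈ C.A
      · rw [if_pos hfA] at h1; omega
      · rw [if_neg hfA] at h1; omega
    · have h1 := swap_count heB₁ hf.2 C.AB
      rw [if_neg heAB] at h1
      by_cases hfAB : f ∈ C.AB
      · rw [if_pos hfAB] at h1; omega
      · rw [if_neg hfAB] at h1; omega


theorem isBaseCollection_low : IsBaseCollection C.M.E
    {B | C.M.IsBase B ∧ C.al ≤ (B ∩ C.A).ncard ∧ (B ∩ C.AB).ncard ≤ C.cc} := by
  obtain ⟨B₀, hB₀, hpa, hq⟩ := C.exists_Bstar
  refine ⟨Matroid.ofIsBaseOfFinite (Set.toFinite C.M.E)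
    (fun B => C.M.IsBase B ∧ C.al ≤ (B ∩ C.A).ncard ∧ (B ∩ C.AB).ncard ≤ C.cc)
    ⟨B₀, hB₀, le_of_eq hpa.symm, le_of_eq hq⟩ C.exch_low
    (fun B hB => hB.1.subset_ground), rfl, fun B => ?_⟩
  rw [Matroid.ofIsBaseOfFinite_isBase]
  rfl

theorem isBaseCollection_high : IsBaseCollection C.M.E
    {B | C.M.IsBase B ∧ C.al ≤ (B ∩ C.A).ncard ∧ C.cc ≤ (B ∩ C.AB).ncard} := by
  obtain ⟨B₀, hB₀, hpa, hq⟩ := C.exists_Bstar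
  refine ⟨Matroid.ofIsBaseOfFinite (Set.toFinite C.M.E)
    (fun B => C.M.IsBase B ∧ C.al ≤ (B ∩ C.A).ncard ∧ C.cc ≤ (B ∩ C.AB).ncard)
    ⟨B₀, hB₀, le_of_eq hpa.symm, le_of_eq hq.symm⟩ C.exch_high
    (fun B hB => hB.1.subset_ground), rfl, fun B => ?_⟩
  rw [Matroid.ofIsBaseOfFinite_isBase]
  rfl

lemma sumOn_partition (x : Fin n → ℝ) :
    sumOn C.AB x + sumOn C.Cb x = sumOn Set.univ x := by
  classical
  rw [sumOn_apply, sumOn_apply, sumOn_apply, ← Finset.sum_add_distrib]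
  congr 1
  funext i
  have hi : i ∈ C.AB ∪ C.Cb := by rw [C.univ_eq]; trivial
  rcases hi with h | h
  · rw [if_pos h, if_neg (fun hc => Set.disjoint_left.1 C.dAB_Cb h hc)]
    simp
  · rw [if_neg (fun hc => Set.disjoint_left.1 C.dAB_Cb hc h), if_pos h]
    simp

end Ctx

end Stmt4

open Stmt4

/-- for a good `t`-partition (`t ≥ 3`) of `M`, the families `ℬ(M₂)` and
`ℬ(Mbar₂)` are collections of bases of matroids, and `P(Mbar₁) = P(M₂) ∪ P(Mbar₂)` is a
hyperplane split of `P(Mbar₁)`. (Here `blockU E 0 1 = E₁`, `blockU E 0 2 = E₁ ∪ E₂`,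
`blockSum a 0 1 = a₁` and `blockSum a 0 2 = a₁ + a₂`.) -/
theorem statement4 {n : ℕ} {t : ℕ} (ht : 3 ≤ t) (M : Matroid (Fin n)) (hME : M.E = Set.univ)
    (r : ℕ) (hrank : mrk M = r) (E : Fin t → Set (Fin n)) (a : Fin t → ℕ)
    (hgood : IsGoodPartition M r E a)
    (Mbar₁ : Matroid (Fin n)) (hMbar₁E : Mbar₁.E = M.E)
    (hMbar₁ : ∀ B, Mbar₁.IsBase B ↔ M.IsBase B ∧ blockSum a 0 1 ≤ (B ∩ blockU E 0 1).ncard) :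
    IsBaseCollection M.E {B | M.IsBase B ∧ blockSum a 0 1 ≤ (B ∩ blockU E 0 1).ncard ∧
      (B ∩ blockU E 0 2).ncard ≤ blockSum a 0 2} ∧
    IsBaseCollection M.E {B | M.IsBase B ∧ blockSum a 0 1 ≤ (B ∩ blockU E 0 1).ncard ∧
      blockSum a 0 2 ≤ (B ∩ blockU E 0 2).ncard} ∧
    ∀ M₂ Mbar₂ : Matroid (Fin n), M₂.E = M.E → Mbar₂.E = M.E →
      (∀ B, M₂.IsBase B ↔ M.IsBase B ∧ blockSum a 0 1 ≤ (B ∩ blockU E 0 1).ncard ∧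
        (B ∩ blockU E 0 2).ncard ≤ blockSum a 0 2) →
      (∀ B, Mbar₂.IsBase B ↔ M.IsBase B ∧ blockSum a 0 1 ≤ (B ∩ blockU E 0 1).ncard ∧
        blockSum a 0 2 ≤ (B ∩ blockU E 0 2).ncard) →
      (basePolytope Mbar₁ = basePolytope M₂ ∪ basePolytope Mbar₂ ∧
       basePolytope M₂ ⊂ basePolytope Mbar₁ ∧
       basePolytope Mbar₂ ⊂ basePolytope Mbar₁ ∧
       IsExtreme ℝ (basePolytope M₂) (basePolytope M₂ ∩ basePolytope Mbar₂) ∧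
       IsExtreme ℝ (basePolytope Mbar₂) (basePolytope M₂ ∩ basePolytope Mbar₂)) := by
  classical
  set C : Stmt4.Ctx n t := ⟨M, E, a, r, ht, hME, hrank, hgood⟩ with hC
  refine ⟨C.isBaseCollection_low, C.isBaseCollection_high, ?_⟩
  intro M₂ Mbar₂ hM₂E hMbar₂E hM₂ hMbar₂
  have hNE : Mbar₁.E = Set.univ := by rw [hMbar₁E, hME]
  -- vertex sets
  set V1 : Set (Fin n → ℝ) := {x | ∃ B, Mbar₁.IsBase B ∧ x = incVec B} with hV1
  set V2 : Set (Fin n → ℝ) := {x | ∃ B, M₂.IsBase B ∧ x = incVec B} with hV2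
  set V3 : Set (Fin n → ℝ) := {x | ∃ B, Mbar₂.IsBase B ∧ x = incVec B} with hV3
  have hP1 : basePolytope Mbar₁ = convexHull ℝ V1 := rfl
  have hP2 : basePolytope M₂ = convexHull ℝ V2 := rfl
  have hP3 : basePolytope Mbar₂ = convexHull ℝ V3 := rfl
  -- characterizations
  have hchar2 : ∀ B, M₂.IsBase B ↔ (Mbar₁.IsBase B ∧ (B ∩ C.AB).ncard ≤ C.cc) := by
    intro B
    rw [hM₂ B, hMbar₁ B]
    exact ⟨fun ⟨h1, h2, h3⟩ => ⟨⟨h1, h2⟩, h3⟩, fun ⟨⟨h1, h2⟩, h3⟩ => ⟨h1, h2, h3⟩⟩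
  have hchar3 : ∀ B, Mbar₂.IsBase B ↔ (Mbar₁.IsBase B ∧ C.cc ≤ (B ∩ C.AB).ncard) := by
    intro B
    rw [hMbar₂ B, hMbar₁ B]
    exact ⟨fun ⟨h1, h2, h3⟩ => ⟨⟨h1, h2⟩, h3⟩, fun ⟨⟨h1, h2⟩, h3⟩ => ⟨h1, h2, h3⟩⟩
  have hbase1 : ∀ B, Mbar₁.IsBase B → M.IsBase B := fun B hB => ((hMbar₁ B).1 hB).1
  -- the common base
  obtain ⟨Bs, hBs, hBsA, hBsAB⟩ := C.exists_Bstar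
  have hBsbar : Mbar₁.IsBase Bs := (hMbar₁ Bs).2 ⟨hBs, le_of_eq hBsA.symm⟩
  have hBsCb : (Bs ∩ C.Cb).ncard = C.ga := by
    have h1 := C.count_split hBs
    have h2 := C.r_eq
    omega
  -- vertex bounds
  have hv2le : ∀ y ∈ V2, sumOn C.AB y ≤ (C.cc : ℝ) := by
    rintro y ⟨B, hB, rfl⟩
    rw [sumOn_incVec]
    exact_mod_cast ((hchar2 B).1 hB).2
  have hv3ge : ∀ y ∈ V3, (C.cc : ℝ) ≤ sumOn C.AB y := by
    rintro y ⟨B, hB, rfl⟩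
    rw [sumOn_incVec]
    exact_mod_cast ((hchar3 B).1 hB).2
  have hP2le : ∀ x ∈ convexHull ℝ V2, sumOn C.AB x ≤ (C.cc : ℝ) :=
    hull_le_halfspace _ hv2le
  have hP3ge : ∀ x ∈ convexHull ℝ V3, (C.cc : ℝ) ≤ sumOn C.AB x :=
    hull_ge_halfspace _ hv3ge
  -- vertex inclusions
  have hV2V1 : V2 ⊆ V1 := by
    rintro y ⟨B, hB, rfl⟩; exact ⟨B, ((hchar2 B).1 hB).1, rfl⟩
  have hV3V1 : V3 ⊆ V1 := by
    rintro y ⟨B, hB, rfl⟩; exact ⟨B, ((hchar3 B).1 hB).1, rfl⟩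
  -- the union equality
  have hunion : basePolytope Mbar₁ = basePolytope M₂ ∪ basePolytope Mbar₂ := by
    rw [hP1, hP2, hP3]
    apply Set.Subset.antisymm
    · intro x hx
      rcases le_total (sumOn C.AB x) (C.cc : ℝ) with hle | hge
      · left
        have hs := Stmt4.slice Mbar₁ hNE C.AB C.cc ⟨Bs, hBsbar, le_of_eq hBsAB⟩ hx hle
        refine convexHull_mono ?_ hs
        rintro y ⟨B, h1, h2, rfl⟩
        exact ⟨B, (hchar2 B).2 ⟨h1, h2⟩, rfl⟩
      · right
        have hr : ∀ y ∈ V1, sumOn Set.univ y = (r : ℝ) := by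
          rintro y ⟨B, hB, rfl⟩
          rw [sumOn_incVec, Set.inter_univ, C.base_ncard (hbase1 B hB)]
        have hx_univ : sumOn Set.univ x = (r : ℝ) := hull_eq_hyperplane _ hr x hx
        have hpart := C.sumOn_partition x
        have hrcast : (r : ℝ) = (C.cc : ℝ) + (C.ga : ℝ) := by
          have := C.r_eq; exact_mod_cast this
        have hcb : sumOn C.Cb x ≤ (C.ga : ℝ) := by linarith
        have hs := Stmt4.slice Mbar₁ hNE C.Cb C.ga ⟨Bs, hBsbar, le_of_eq hBsCb⟩ hx hcb
        refine convexHull_mono ?_ hs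
        rintro y ⟨B, h1, h2, rfl⟩
        refine ⟨B, (hchar3 B).2 ⟨h1, ?_⟩, rfl⟩
        have h3 := C.count_split (hbase1 B h1)
        have h4 := C.r_eq
        omega
    · exact Set.union_subset (convexHull_mono hV2V1) (convexHull_mono hV3V1)
  refine ⟨hunion, ?_, ?_, ?_, ?_⟩
  · -- proper inclusion of P(M₂)
    rw [Set.ssubset_iff_of_subset (by rw [hP1, hP2]; exact convexHull_mono hV2V1)]
    obtain ⟨Bh, hBh, hBhA, hBhAB⟩ := C.exists_Bhat
    have hBhbar : Mbar₁.IsBase Bh := (hMbar₁ Bh).2 ⟨hBh, hBhA⟩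
    refine ⟨incVec Bh, subset_convexHull ℝ V1 ⟨Bh, hBhbar, rfl⟩, ?_⟩
    intro hmem
    have h1 := hP2le _ (hP2 ▸ hmem)
    rw [sumOn_incVec] at h1
    have h2 : ((Bh ∩ C.AB).ncard : ℝ) ≤ (C.cc : ℝ) := h1
    have h3 : (Bh ∩ C.AB).ncard ≤ C.cc := by exact_mod_cast h2
    omega
  · -- proper inclusion of P(Mbar₂)
    rw [Set.ssubset_iff_of_subset (by rw [hP1, hP3]; exact convexHull_mono hV3V1)]
    obtain ⟨Bc, hBc, hBcA, hBcAB⟩ := C.exists_Bcheck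
    have hBcbar : Mbar₁.IsBase Bc := (hMbar₁ Bc).2 ⟨hBc, hBcA⟩
    refine ⟨incVec Bc, subset_convexHull ℝ V1 ⟨Bc, hBcbar, rfl⟩, ?_⟩
    intro hmem
    have h1 := hP3ge _ (hP3 ▸ hmem)
    rw [sumOn_incVec] at h1
    have h3 : C.cc ≤ (Bc ∩ C.AB).ncard := by exact_mod_cast h1
    omega
  · -- extremeness in P(M₂)
    constructor
    · exact Set.inter_subset_left
    · intro x₁ hx₁ x₂ hx₂ x hx hseg
      obtain ⟨aa, bb, haa, hbb, hab, hxeq⟩ := hseg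
      have hgx : sumOn C.AB x = (C.cc : ℝ) :=
        le_antisymm (hP2le x (hP2 ▸ hx.1)) (hP3ge x (hP3 ▸ hx.2))
      have hg1 : sumOn C.AB x₁ ≤ (C.cc : ℝ) := hP2le x₁ (hP2 ▸ hx₁)
      have hg2 : sumOn C.AB x₂ ≤ (C.cc : ℝ) := hP2le x₂ (hP2 ▸ hx₂)
      have hlin : aa * sumOn C.AB x₁ + bb * sumOn C.AB x₂ = (C.cc : ℝ) := by
        rw [← hgx, ← hxeq, map_add, map_smul, map_smul]; rfl
      have hgq1 : sumOn C.AB x₁ = (C.cc : ℝ) := by nlinarith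
      have hgq2 : sumOn C.AB x₂ = (C.cc : ℝ) := by nlinarith
      have hface : ∀ y, y ∈ convexHull ℝ V2 → sumOn C.AB y = (C.cc : ℝ) →
          y ∈ convexHull ℝ V2 ∩ convexHull ℝ V3 := by
        intro y hy hyc
        have h1 := face_lemma (sumOn C.AB) hv2le hy hyc
        constructor
        · exact convexHull_mono (fun z hz => hz.1) h1
        · refine convexHull_mono ?_ h1
          rintro z ⟨⟨B, hB, rfl⟩, hzc⟩
          rw [sumOn_incVec] at hzc
          have hq : (B ∩ C.AB).ncard = C.cc := by exact_mod_cast hzc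
          exact ⟨B, (hchar3 B).2 ⟨((hchar2 B).1 hB).1, le_of_eq hq.symm⟩, rfl⟩
      rw [hP2, hP3]
      exact hface x₁ (hP2 ▸ hx₁) hgq1
  · -- extremeness in P(Mbar₂)
    constructor
    · exact Set.inter_subset_right
    · intro x₁ hx₁ x₂ hx₂ x hx hseg
      obtain ⟨aa, bb, haa, hbb, hab, hxeq⟩ := hseg
      have hgx : sumOn C.AB x = (C.cc : ℝ) :=
        le_antisymm (hP2le x (hP2 ▸ hx.1)) (hP3ge x (hP3 ▸ hx.2))
      have hg1 : (C.cc : ℝ) ≤ sumOn C.AB x₁ := hP3ge x₁ (hP3 ▸ hx₁)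
      have hg2 : (C.cc : ℝ) ≤ sumOn C.AB x₂ := hP3ge x₂ (hP3 ▸ hx₂)
      have hlin : aa * sumOn C.AB x₁ + bb * sumOn C.AB x₂ = (C.cc : ℝ) := by
        rw [← hgx, ← hxeq, map_add, map_smul, map_smul]; rfl
      have hgq1 : sumOn C.AB x₁ = (C.cc : ℝ) := by nlinarith
      have hgq2 : sumOn C.AB x₂ = (C.cc : ℝ) := by nlinarith
      have hv3le : ∀ y ∈ V3, (-(sumOn C.AB)) y ≤ -(C.cc : ℝ) := by
        intro y hy
        have := hv3ge y hy
        simp only [LinearMap.neg_apply]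
        linarith
      have hface : ∀ y, y ∈ convexHull ℝ V3 → sumOn C.AB y = (C.cc : ℝ) →
          y ∈ convexHull ℝ V2 ∩ convexHull ℝ V3 := by
        intro y hy hyc
        have h1 := face_lemma (-(sumOn C.AB)) hv3le hy
          (by simp only [LinearMap.neg_apply]; linarith)
        constructor
        · refine convexHull_mono ?_ h1
          rintro z ⟨⟨B, hB, rfl⟩, hzc⟩
          simp only [LinearMap.neg_apply] at hzc
          rw [sumOn_incVec] at hzc
          have hq : (B ∩ C.AB).ncard = C.cc := by
            have : ((B ∩ C.AB).ncard : ℝ) = (C.cc : ℝ) := by linarith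
            exact_mod_cast this
          exact ⟨B, (hchar2 B).2 ⟨((hchar3 B).1 hB).1, le_of_eq hq⟩, rfl⟩
        · exact convexHull_mono (fun z hz => hz.1) h1
      rw [hP2, hP3]
      exact hface x₁ (hP3 ▸ hx₁) hgq1
end

section
/- Let t ≥ 2, let M be a matroid of rank r on E, and let E = E_1 ∪ ⋯ ∪ E_t be a good t-partition with integers a_1,…,a_t. For 1 ≤ j ≤ t let M_j be the matroid with bases B(M_1) = {B a base of M : |B ∩ E_1| ≤ a_1} and, for j ≥ 2, B(M_j) = {B a base of M : |B ∩ (E_1∪⋯∪E_h)| ≥ a_1+⋯+a_h for every 1 ≤ h ≤ j−1, and |B ∩ (E_1∪⋯∪E_j)| ≤ a_1+⋯+a_j}. Then for every 1 ≤ j < k ≤ t, the intersection B(M_j) ∩ B(M_k) equals the set of bases B of M that satisfy: |B ∩ (E_1∪⋯∪E_h)| ≥ a_1+⋯+a_h for all 1 ≤ h ≤ k with h ∉ {j,k}, |B ∩ (E_1∪⋯∪E_j)| = a_1+⋯+a_j, and |B ∩ (E_1∪⋯∪E_k)| ≤ a_1+⋯+a_k; moreover B(M_j) ∩ B(M_k)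 satisfies the basis exchange axiom, i.e., it is the collection of bases of a matroid on E whenever it is nonempty. -/
open Matroid Set

/-- The family `ℬ(M_j)` from the paper : bases `B` of `M` with
`|B ∩ (E_1 ∪ ⋯ ∪ E_h)| ≥ a_1 + ⋯ + a_h` for every `1 ≤ h ≤ j - 1`, and
`|B ∩ (E_1 ∪ ⋯ ∪ E_j)| ≤ a_1 + ⋯ + a_j`. -/
def BFam {α : Type*} {t : ℕ} (M : Matroid α) (E : Fin t → Set α) (a : Fin t → ℕ)
    (j : ℕ) : Set (Set α) :=
  {B | M.IsBase B ∧
    (∀ h : ℕ, 1 ≤ h → h ≤ j - 1 → blockSum a 0 h ≤ (B ∩ blockU E 0 h).ncard) ∧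
    (B ∩ blockU E 0 j).ncard ≤ blockSum a 0 j}

section helpers

variable {α : Type*} {t : ℕ} {E : Fin t → Set α} {a : Fin t → ℕ}

lemma mem_blockU {x : α} {lo hi : ℕ} :
    x ∈ blockU E lo hi ↔ ∃ i : Fin t, lo ≤ (i : ℕ) ∧ (i : ℕ) < hi ∧ x ∈ E i := by
  simp only [blockU, mem_iUnion, mem_setOf_eq, exists_prop]
  tauto

lemma blockU_zero_top : blockU E 0 t = ⋃ i, E i := by
  ext x
  simp only [mem_blockU, mem_iUnion]
  exact ⟨fun ⟨i, _, _, h⟩ => ⟨i, h⟩, fun ⟨i, h⟩ => ⟨i, Nat.zero_le _, i.isLt, h⟩⟩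

lemma blockU_mono {l m : ℕ} (h : l ≤ m) : blockU E 0 l ⊆ blockU E 0 m := by
  intro x hx
  rw [mem_blockU] at hx ⊢
  obtain ⟨i, h1, h2, h3⟩ := hx
  exact ⟨i, h1, h2.trans_le h, h3⟩

lemma diff_blockU_subset {l m : ℕ} :
    blockU E 0 m \ blockU E 0 l ⊆ blockU E l m := by
  rintro x ⟨hxm, hxl⟩
  rw [mem_blockU] at hxm ⊢
  obtain ⟨i, -, h2, h3⟩ := hxm
  refine ⟨i, ?_, h2, h3⟩
  by_contra hc
  exact hxl (mem_blockU.2 ⟨i, Nat.zero_le _, Nat.lt_of_not_le hc, h3⟩)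

lemma blockSum_split {l m : ℕ} (h : l ≤ m) :
    blockSum a 0 l + blockSum a l m = blockSum a 0 m := by
  classical
  rw [blockSum, blockSum, blockSum, ← Finset.sum_union]
  · congr 1
    ext i
    simp only [Finset.mem_union, Finset.mem_filter, Finset.mem_univ, true_and]
    omega
  · rw [Finset.disjoint_left]
    intro i hi1 hi2
    simp only [Finset.mem_filter, Finset.mem_univ, true_and] at hi1 hi2
    omega

lemma blockSum_zero_top : blockSum a 0 t = ∑ i, a i := by
  rw [blockSum]
  congr 1
  ext i
  simp [i.isLt, Nat.zero_le]

lemma blockSum_mono {l m : ℕ} (h : l ≤ m) : blockSum a 0 l ≤ blockSum a 0 m := by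
  rw [← blockSum_split h]; omega

lemma blockU_zero_zero : blockU E 0 0 = (∅ : Set α) := by
  ext x; simp [mem_blockU]

lemma blockSum_zero_zero : blockSum a 0 0 = 0 := by
  rw [blockSum]
  convert Finset.sum_empty
  ext i; simp

variable {M : Matroid α}

lemma indep_finite (hfin : M.E.Finite) {I : Set α} (hI : M.Indep I) : I.Finite :=
  hfin.subset hI.subset_ground

lemma base_ncard_eq_mrk (hfin : M.E.Finite) {B : Set α} (hB : M.IsBase B) :
    B.ncard = mrk M := by
  have hBfin : B.Finite := hfin.subset hB.subset_ground
  refine le_antisymm ?_ ?_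
  · exact le_csSup ⟨M.E.ncard, by
      rintro n ⟨I, hI, rfl⟩
      exact ncard_le_ncard hI.subset_ground hfin⟩ ⟨B, hB.indep, rfl⟩
  · refine csSup_le ⟨B.ncard, B, hB.indep, rfl⟩ ?_
    rintro n ⟨I, hI, rfl⟩
    obtain ⟨B', hB', hIB'⟩ := hI.exists_isBase_superset
    have : B'.ncard = B.ncard := hB'.ncard_eq_ncard_of_isBase hB
    exact le_trans (ncard_le_ncard hIB' (hfin.subset hB'.subset_ground)) this.le

lemma base_of_ncard_eq_mrk (hfin : M.E.Finite) {I : Set α} (hI : M.Indep I)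
    (h : I.ncard = mrk M) : M.IsBase I := by
  obtain ⟨B, hB, hIB⟩ := hI.exists_isBase_superset
  have hBfin : B.Finite := hfin.subset hB.subset_ground
  have : I = B := eq_of_subset_of_ncard_le hIB (by rw [h, base_ncard_eq_mrk hfin hB]) hBfin
  exact this ▸ hB

open Classical in
lemma count_insert_diff {α : Type*} {B U : Set α} (hBfin : B.Finite) {e g : α}
    (heB : e ∈ B) (hgB : g ∉ B) :
    ((insert g (B \ {e})) ∩ U).ncard + (if e ∈ U then 1 else 0)
      = (B ∩ U).ncard + (if g ∈ U then 1 else 0) := by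
  have hfinBU : (B ∩ U).Finite := hBfin.subset inter_subset_left
  have hge : g ≠ e := fun h => hgB (h ▸ heB)
  have h1 : (insert g (B \ {e})) ∩ U
      = if g ∈ U then insert g ((B ∩ U) \ {e}) else (B ∩ U) \ {e} := by
    split_ifs with hg
    · ext x
      by_cases hxg : x = g
      · subst hxg; simp [hg, hge]
      · simp only [mem_inter_iff, mem_insert_iff, mem_diff, mem_singleton_iff]
        tauto
    · ext x
      simp only [mem_inter_iff, mem_insert_iff, mem_diff, mem_singleton_iff]
      constructor
      · rintro ⟨rfl | hx1, hx2⟩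
        · exact absurd hx2 hg
        · tauto
      · tauto
  have h2 : ((B ∩ U) \ {e}).ncard + (if e ∈ U then 1 else 0) = (B ∩ U).ncard := by
    by_cases he : e ∈ U
    · simp only [he, if_true]
      exact ncard_diff_singleton_add_one ⟨heB, he⟩ hfinBU
    · have hd : (B ∩ U) \ {e} = B ∩ U := diff_singleton_eq_self (fun hc => he hc.2)
      simp [he, hd]
  rw [h1]
  by_cases hg : g ∈ U
  · simp only [hg, if_true]
    rw [ncard_insert_of_notMem (fun hc => hgB hc.1.1) (hfinBU.diff)]
    omega
  · simp only [hg, if_false]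
    omega

end helpers

section keystep

variable {α : Type*} {t : ℕ}

lemma key_step (M : Matroid α) (hfin : M.E.Finite)
    (E : Fin t → Set α) (a : Fin t → ℕ)
    (l m : ℕ) (hlm : l ≤ m)
    (B1 B2 : Set α) (hB1 : M.IsBase B1) (hB2 : M.IsBase B2)
    (hglue : ∀ Y : Set α, M.Indep Y → Y ⊆ blockU E 0 m \ blockU E 0 l →
       Y.ncard + blockSum a 0 l ≤ blockSum a 0 m →
       M.Indep ((B1 ∩ blockU E 0 l) ∪ Y ∪ (B1 \ blockU E 0 m)))
    (hB1l : (B1 ∩ blockU E 0 l).ncard = blockSum a 0 l)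
    (hB1m : (B1 ∩ blockU E 0 m).ncard = blockSum a 0 m)
    (hB2l : (B2 ∩ blockU E 0 l).ncard ≤ blockSum a 0 l)
    (hB2m : blockSum a 0 m ≤ (B2 ∩ blockU E 0 m).ncard)
    (e : α) (heB : e ∈ B1) (heB2 : e ∉ B2)
    (hel : e ∉ blockU E 0 l) (hem : e ∈ blockU E 0 m) :
    ∃ g, g ∈ B2 \ B1 ∧ g ∈ blockU E 0 m \ blockU E 0 l ∧
      M.IsBase (insert g (B1 \ {e})) := by
  have hUlm : blockU E 0 l ⊆ blockU E 0 m := blockU_mono hlm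
  have hB1fin : B1.Finite := hfin.subset hB1.subset_ground
  have hB2fin : B2.Finite := hfin.subset hB2.subset_ground
  set Ul := blockU E 0 l
  set Um := blockU E 0 m
  set Y1 : Set α := (B1 ∩ Um) \ Ul with hY1def
  set Y2 : Set α := (B2 ∩ Um) \ Ul with hY2def
  have heY1 : e ∈ Y1 := ⟨⟨heB, hem⟩, hel⟩
  have hY1fin : Y1.Finite := (hB1fin.subset inter_subset_left).diff
  have hY2fin : Y2.Finite := (hB2fin.subset inter_subset_left).diff
  -- cardinality of Y1
  have hY1eq : Y1 = (B1 ∩ Um) \ (B1 ∩ Ul) := by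
    ext x
    simp only [hY1def, mem_diff, mem_inter_iff]
    tauto
  have hY1card : Y1.ncard + blockSum a 0 l = blockSum a 0 m := by
    rw [hY1eq, ← hB1l, ← hB1m]
    exact ncard_diff_add_ncard_of_subset (inter_subset_inter_right _ hUlm)
      (hB1fin.subset inter_subset_left)
  -- cardinality of Y2
  have hY2card : blockSum a 0 m ≤ Y2.ncard + blockSum a 0 l := by
    have hsub : B2 ∩ Um ⊆ Y2 ∪ (B2 ∩ Ul) := by
      intro x hx
      by_cases hxl : x ∈ Ul
      · exact Or.inr ⟨hx.1, hxl⟩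
      · exact Or.inl ⟨hx, hxl⟩
    calc blockSum a 0 m ≤ (B2 ∩ Um).ncard := hB2m
      _ ≤ (Y2 ∪ (B2 ∩ Ul)).ncard := ncard_le_ncard hsub
          (hY2fin.union (hB2fin.subset inter_subset_left))
      _ ≤ Y2.ncard + (B2 ∩ Ul).ncard := ncard_union_le _ _
      _ ≤ Y2.ncard + blockSum a 0 l := by omega
  have hY1e : (Y1 \ {e}).ncard + 1 = Y1.ncard := ncard_diff_singleton_add_one heY1 hY1fin
  have hlt : (Y1 \ {e}).ncard < Y2.ncard := by omega
  have hI1 : M.Indep (Y1 \ {e}) :=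
    hB1.indep.subset (fun x hx => hx.1.1.1)
  have hI2 : M.Indep Y2 := hB2.indep.subset (fun x hx => hx.1.1)
  obtain ⟨g, hgY2, hgind⟩ := hI1.augment hI2 (by
    rw [← (hY1fin.diff).cast_ncard_eq, ← hY2fin.cast_ncard_eq]
    exact_mod_cast hlt)
  obtain ⟨hgY2', hgnY1⟩ := hgY2
  have hge : g ≠ e := fun h => heB2 (h ▸ hgY2'.1.1)
  have hgB2 : g ∈ B2 := hgY2'.1.1
  have hgUm : g ∈ Um := hgY2'.1.2
  have hgUl : g ∉ Ul := hgY2'.2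
  have hgB1 : g ∉ B1 := by
    intro hc
    exact hgnY1 ⟨⟨⟨hc, hgUm⟩, hgUl⟩, hge⟩
  -- the middle independent set
  set Y : Set α := insert g (Y1 \ {e}) with hYdef
  have hYsub : Y ⊆ Um \ Ul := by
    rintro x (rfl | hx)
    · exact ⟨hgUm, hgUl⟩
    · exact ⟨hx.1.1.2, hx.1.2⟩
  have hYcard : Y.ncard + blockSum a 0 l ≤ blockSum a 0 m := by
    have : Y.ncard = (Y1 \ {e}).ncard + 1 :=
      ncard_insert_of_notMem hgnY1 (hY1fin.diff)
    omega
  have hind := hglue Y hgind hYsub hYcard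
  -- show the union is insert g (B1 \ {e})
  have hunion : (B1 ∩ Ul) ∪ Y ∪ (B1 \ Um) = insert g (B1 \ {e}) := by
    ext x
    simp only [hYdef, hY1def, mem_union, mem_insert_iff, mem_inter_iff, mem_diff,
      mem_singleton_iff]
    constructor
    · rintro ((⟨hx1, hx2⟩ | (rfl | ⟨⟨⟨hx1, hx2⟩, hx3⟩, hx4⟩)) | ⟨hx1, hx2⟩)
      · exact Or.inr ⟨hx1, fun h => hel (h ▸ hx2)⟩
      · exact Or.inl rfl
      · exact Or.inr ⟨hx1, hx4⟩
      · exact Or.inr ⟨hx1, fun h => (hx2 (h ▸ hem))⟩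
    · rintro (rfl | ⟨hx1, hx2⟩)
      · exact Or.inl (Or.inr (Or.inl rfl))
      · by_cases hxm : x ∈ Um
        · by_cases hxl : x ∈ Ul
          · exact Or.inl (Or.inl ⟨hx1, hxl⟩)
          · exact Or.inl (Or.inr (Or.inr ⟨⟨⟨hx1, hxm⟩, hxl⟩, hx2⟩))
        · exact Or.inr ⟨hx1, hxm⟩
  rw [hunion] at hind
  refine ⟨g, ⟨hgB2, hgB1⟩, ⟨hgUm, hgUl⟩, ?_⟩
  apply base_of_ncard_eq_mrk hfin hind
  have h1 : (insert g (B1 \ {e})).ncard = (B1 \ {e}).ncard + 1 :=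
    ncard_insert_of_notMem (fun hc => hgB1 hc.1) (hB1fin.diff)
  have h2 : (B1 \ {e}).ncard + 1 = B1.ncard := ncard_diff_singleton_add_one heB hB1fin
  rw [h1]
  rw [← base_ncard_eq_mrk hfin hB1]
  omega

end keystep

section glue

variable {α : Type*} {t : ℕ}

lemma glue_all (M : Matroid α) (hfin : M.E.Finite) (E : Fin t → Set α) (a : Fin t → ℕ)
    (r : ℕ) (hground : blockU E 0 t = M.E) (hst : blockSum a 0 t = r)
    (hP2a : ∀ j : ℕ, 1 ≤ j → j ≤ t - 1 → ∀ X Y : Set α,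
      (M ↾ blockU E 0 j).Indep X → X.ncard ≤ blockSum a 0 j →
      (M ↾ blockU E j t).Indep Y → Y.ncard ≤ blockSum a j t →
      M.Indep (X ∪ Y))
    (hP2b : ∀ j k : ℕ, 1 ≤ j → j < k → k ≤ t - 1 → ∀ X Y Z : Set α,
      (M ↾ blockU E 0 j).Indep X → X.ncard ≤ blockSum a 0 j →
      (M ↾ blockU E j k).Indep Y → Y.ncard ≤ blockSum a j k →
      (M ↾ blockU E k t).Indep Z → Z.ncard ≤ blockSum a k t →
      M.Indep (X ∪ Y ∪ Z))
    (l m : ℕ) (hlm : l ≤ m) (hmt : m ≤ t)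
    (hcase : (l = 0 ∧ 1 ≤ m ∧ m ≤ t - 1) ∨ (1 ≤ l ∧ l ≤ t - 1 ∧ m = t) ∨
      (1 ≤ l ∧ l < m ∧ m ≤ t - 1))
    (B1 : Set α) (hB1 : M.IsBase B1) (hB1r : B1.ncard = r)
    (hB1l : (B1 ∩ blockU E 0 l).ncard = blockSum a 0 l)
    (hB1m : (B1 ∩ blockU E 0 m).ncard = blockSum a 0 m) :
    ∀ Y : Set α, M.Indep Y → Y ⊆ blockU E 0 m \ blockU E 0 l →
       Y.ncard + blockSum a 0 l ≤ blockSum a 0 m →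
       M.Indep ((B1 ∩ blockU E 0 l) ∪ Y ∪ (B1 \ blockU E 0 m)) := by
  intro Y hYind hYsub hYcard
  have hB1fin : B1.Finite := hfin.subset hB1.subset_ground
  have hB1sub : B1 ⊆ blockU E 0 t := hground.symm ▸ hB1.subset_ground
  -- the X part
  have hXind : (M ↾ blockU E 0 l).Indep (B1 ∩ blockU E 0 l) :=
    Matroid.restrict_indep_iff.2 ⟨hB1.indep.subset inter_subset_left, inter_subset_right⟩
  -- the Z part
  have hZsub : B1 \ blockU E 0 m ⊆ blockU E m t := by
    intro x hx
    exact diff_blockU_subset ⟨hB1sub hx.1, hx.2⟩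
  have hZind : (M ↾ blockU E m t).Indep (B1 \ blockU E 0 m) :=
    Matroid.restrict_indep_iff.2 ⟨hB1.indep.subset diff_subset, hZsub⟩
  have hZcard' : (B1 ∩ blockU E 0 m).ncard + (B1 \ blockU E 0 m).ncard = B1.ncard :=
    ncard_inter_add_ncard_diff_eq_ncard B1 _ hB1fin
  have hsplitm : blockSum a 0 m + blockSum a m t = blockSum a 0 t := blockSum_split hmt
  have hZcard : (B1 \ blockU E 0 m).ncard ≤ blockSum a m t := by omega
  -- the Y part
  have hYsub' : Y ⊆ blockU E l m := fun x hx => diff_blockU_subset ⟨(hx |> hYsub).1, (hYsub hx).2⟩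
  have hsplitl : blockSum a 0 l + blockSum a l m = blockSum a 0 m := blockSum_split hlm
  have hYcard' : Y.ncard ≤ blockSum a l m := by omega
  rcases hcase with ⟨hl0, hm1, hmt1⟩ | ⟨hl1, hlt1, hmT⟩ | ⟨hl1, hlm', hmt1⟩
  · -- l = 0 : P2a at m
    subst hl0
    have hY0 : Y ⊆ blockU E 0 m := fun x hx => (hYsub hx).1
    have := hP2a m hm1 hmt1 Y (B1 \ blockU E 0 m)
      (Matroid.restrict_indep_iff.2 ⟨hYind, hY0⟩)
      (by rw [blockSum_zero_zero] at hYcard; omega)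
      hZind hZcard
    rw [blockU_zero_zero, inter_empty, empty_union]
    exact this
  · -- m = t : P2a at l
    have hZempty : B1 \ blockU E 0 m = ∅ := by
      rw [hmT, diff_eq_empty]; exact hB1sub
    rw [hmT] at hYsub' hYcard'
    have := hP2a l hl1 hlt1 (B1 ∩ blockU E 0 l) Y hXind hB1l.le
      (Matroid.restrict_indep_iff.2 ⟨hYind, hYsub'⟩) hYcard'
    rw [hZempty, union_empty]
    exact this
  · -- middle : P2b at (l, m)
    exact hP2b l m hl1 hlm' hmt1 (B1 ∩ blockU E 0 l) Y (B1 \ blockU E 0 m)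
      hXind hB1l.le (Matroid.restrict_indep_iff.2 ⟨hYind, hYsub'⟩) hYcard' hZind hZcard

end glue

def Desc {α : Type*} {t : ℕ} (M : Matroid α) (E : Fin t → Set α) (a : Fin t → ℕ)
    (j k : ℕ) : Set (Set α) :=
  {B | M.IsBase B ∧
    (∀ h : ℕ, 1 ≤ h → h ≤ k → h ≠ j → h ≠ k →
      blockSum a 0 h ≤ (B ∩ blockU E 0 h).ncard) ∧
    (B ∩ blockU E 0 j).ncard = blockSum a 0 j ∧
    (B ∩ blockU E 0 k).ncard ≤ blockSum a 0 k}

lemma exists_min_mem {S : Set ℕ} {n : ℕ} (hn : n ∈ S) :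
    ∃ m, m ∈ S ∧ m ≤ n ∧ ∀ h, h < m → h ∉ S :=
  ⟨sInf S, Nat.sInf_mem ⟨n, hn⟩, Nat.sInf_le hn, fun _ hh => Nat.notMem_of_lt_sInf hh⟩

lemma key_exchange {α : Type*} {t : ℕ} (ht : 2 ≤ t) (M : Matroid α) (hfin : M.E.Finite)
    (r : ℕ) (hrank : mrk M = r) (E : Fin t → Set α) (a : Fin t → ℕ)
    (hgood : IsGoodPartition M r E a)
    (j k : ℕ) (hj : 1 ≤ j) (hjk : j < k) (hk : k ≤ t)
    {B1 B2 : Set α} (hB1 : B1 ∈ Desc M E a j k) (hB2 : B2 ∈ Desc M E a j k)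
    {e : α} (heB : e ∈ B1) (heB2 : e ∉ B2) :
    ∃ f ∈ B2 \ B1, insert f (B1 \ {e}) ∈ Desc M E a j k := by
  classical
  obtain ⟨hU, hdisj, hrks, has, hr, hP2a, hP2b⟩ := hgood
  obtain ⟨hB1b, hB1low, hB1j, hB1k⟩ := hB1
  obtain ⟨hB2b, hB2low, hB2j, hB2k⟩ := hB2
  have hground : blockU E 0 t = M.E := by rw [blockU_zero_top, hU]
  have hst : blockSum a 0 t = r := by rw [blockSum_zero_top]; exact hr.symm
  have hB1fin : B1.Finite := hfin.subset hB1b.subset_ground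
  have hB1r : B1.ncard = r := by rw [base_ncard_eq_mrk hfin hB1b, hrank]
  have hB2r : B2.ncard = r := by rw [base_ncard_eq_mrk hfin hB2b, hrank]
  have hB1sub : B1 ⊆ blockU E 0 t := hground.symm ▸ hB1b.subset_ground
  have hB2sub : B2 ⊆ blockU E 0 t := hground.symm ▸ hB2b.subset_ground
  have hB1t : (B1 ∩ blockU E 0 t).ncard = blockSum a 0 t := by
    rw [inter_eq_self_of_subset_left hB1sub, hB1r, hst]
  have hB2t : (B2 ∩ blockU E 0 t).ncard = blockSum a 0 t := by
    rw [inter_eq_self_of_subset_left hB2sub, hB2r, hst]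
  have heUt : e ∈ blockU E 0 t := hB1sub heB
  by_cases heUj : e ∈ blockU E 0 j
  · -- CASE A : e ∈ U_j
    have hPj : j ∈ {h : ℕ | 1 ≤ h ∧ h ≤ j ∧ e ∈ blockU E 0 h ∧
        (B1 ∩ blockU E 0 h).ncard = blockSum a 0 h} := ⟨hj, le_refl j, heUj, hB1j⟩
    obtain ⟨m, hmP, hmj, hmin⟩ := exists_min_mem hPj
    obtain ⟨hm1, hmj', hemU, hB1m⟩ := hmP
    have hmt : m ≤ t := by omega
    have hglue := glue_all M hfin E a r hground hst hP2a hP2b 0 m (Nat.zero_le m) hmt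
      (Or.inl ⟨rfl, hm1, by omega⟩) B1 hB1b hB1r
      (by simp [blockU_zero_zero, blockSum_zero_zero]) hB1m
    have hB2m : blockSum a 0 m ≤ (B2 ∩ blockU E 0 m).ncard := by
      rcases eq_or_lt_of_le hmj with rfl | hlt
      · exact hB2j.ge
      · exact hB2low m hm1 (by omega) (by omega) (by omega)
    obtain ⟨g, hgB, hgU, hgbase⟩ := key_step M hfin E a 0 m (Nat.zero_le m) B1 B2 hB1b hB2b
      hglue (by simp [blockU_zero_zero, blockSum_zero_zero]) hB1m
      (by simp [blockU_zero_zero, blockSum_zero_zero]) hB2m e heB heB2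
      (by simp [blockU_zero_zero]) hemU
    have hcount : ∀ h : ℕ, ((insert g (B1 \ {e})) ∩ blockU E 0 h).ncard
        + (if e ∈ blockU E 0 h then 1 else 0)
        = (B1 ∩ blockU E 0 h).ncard + (if g ∈ blockU E 0 h then 1 else 0) :=
      fun h => count_insert_diff hB1fin heB hgB.2
    refine ⟨g, hgB, hgbase, ?_, ?_, ?_⟩
    · intro h h1 hhk hhj hhk'
      have hlow := hB1low h h1 hhk hhj hhk'
      have hc := hcount h
      rcases le_or_gt m h with hmh | hhm
      · rw [if_pos (blockU_mono hmh hemU), if_pos (blockU_mono hmh hgU.1)] at hc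
        omega
      · by_cases he' : e ∈ blockU E 0 h
        · have hneq : (B1 ∩ blockU E 0 h).ncard ≠ blockSum a 0 h := by
            intro hx
            exact hmin h hhm ⟨h1, by omega, he', hx⟩
          rw [if_pos he'] at hc
          by_cases hg' : g ∈ blockU E 0 h
          · rw [if_pos hg'] at hc; omega
          · rw [if_neg hg'] at hc; omega
        · rw [if_neg he'] at hc
          by_cases hg' : g ∈ blockU E 0 h
          · rw [if_pos hg'] at hc; omega
          · rw [if_neg hg'] at hc; omega
    · have hc := hcount j
      rw [if_pos (blockU_mono hmj hemU), if_pos (blockU_mono hmj hgU.1)] at hc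
      omega
    · have hc := hcount k
      rw [if_pos (blockU_mono (by omega) hemU), if_pos (blockU_mono (by omega) hgU.1)] at hc
      omega
  · by_cases hCk : e ∉ blockU E 0 k ∧ (B1 ∩ blockU E 0 k).ncard = blockSum a 0 k
    · -- CASE C1 : e ∉ U_k and tight at k
      obtain ⟨heUk, hB1keq⟩ := hCk
      have hkt : k < t := by
        rcases eq_or_lt_of_le hk with rfl | h
        · exact absurd heUt heUk
        · exact h
      have hglue := glue_all M hfin E a r hground hst hP2a hP2b k t hk (le_refl t)
        (Or.inr (Or.inl ⟨by omega, by omega, rfl⟩)) B1 hB1b hB1r hB1keq hB1t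
      obtain ⟨g, hgB, hgU, hgbase⟩ := key_step M hfin E a k t hk B1 B2 hB1b hB2b
        hglue hB1keq hB1t hB2k hB2t.ge e heB heB2 heUk heUt
      have hcount : ∀ h : ℕ, ((insert g (B1 \ {e})) ∩ blockU E 0 h).ncard
          + (if e ∈ blockU E 0 h then 1 else 0)
          = (B1 ∩ blockU E 0 h).ncard + (if g ∈ blockU E 0 h then 1 else 0) :=
        fun h => count_insert_diff hB1fin heB hgB.2
      have hsame : ∀ h : ℕ, h ≤ k →
          ((insert g (B1 \ {e})) ∩ blockU E 0 h).ncard = (B1 ∩ blockU E 0 h).ncard := by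
        intro h hh
        have hc := hcount h
        rw [if_neg (fun hc' => heUk (blockU_mono hh hc')),
          if_neg (fun hc' => hgU.2 (blockU_mono hh hc'))] at hc
        omega
      refine ⟨g, hgB, hgbase, ?_, ?_, ?_⟩
      · intro h h1 hhk hhj hhk'
        rw [hsame h hhk]
        exact hB1low h h1 hhk hhj hhk'
      · rw [hsame j (by omega)]; exact hB1j
      · rw [hsame k (le_refl k)]; exact hB1k
    · -- CASE B' : e ∉ U_j and not (C1)
      have hekc : e ∈ blockU E 0 k ∨ (B1 ∩ blockU E 0 k).ncard < blockSum a 0 k := by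
        by_cases h1 : e ∈ blockU E 0 k
        · exact Or.inl h1
        · exact Or.inr (lt_of_le_of_ne hB1k (fun hx => hCk ⟨h1, hx⟩))
      have hQt : t ∈ {h : ℕ | j < h ∧ (h = t ∨ (h < k ∧ e ∈ blockU E 0 h ∧
          (B1 ∩ blockU E 0 h).ncard = blockSum a 0 h))} := ⟨by omega, Or.inl rfl⟩
      obtain ⟨m, hmQ, hmt, hmin⟩ := exists_min_mem hQt
      obtain ⟨hjm, hmQ2⟩ := hmQ
      have hemU : e ∈ blockU E 0 m := by
        rcases hmQ2 with rfl | ⟨-, h2, -⟩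
        · exact heUt
        · exact h2
      have hB1m : (B1 ∩ blockU E 0 m).ncard = blockSum a 0 m := by
        rcases hmQ2 with rfl | ⟨-, -, h3⟩
        · exact hB1t
        · exact h3
      have hB2m : blockSum a 0 m ≤ (B2 ∩ blockU E 0 m).ncard := by
        rcases hmQ2 with rfl | ⟨h1, -, -⟩
        · exact hB2t.ge
        · exact hB2low m (by omega) (by omega) (by omega) (by omega)
      have hglue := glue_all M hfin E a r hground hst hP2a hP2b j m (by omega) hmt
        (by
          rcases hmQ2 with rfl | ⟨h1, -, -⟩
          · exact Or.inr (Or.inl ⟨hj, by omega, rfl⟩)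
          · exact Or.inr (Or.inr ⟨hj, hjm, by omega⟩))
        B1 hB1b hB1r hB1j hB1m
      obtain ⟨g, hgB, hgU, hgbase⟩ := key_step M hfin E a j m (by omega) B1 B2 hB1b hB2b
        hglue hB1j hB1m hB2j.le hB2m e heB heB2 heUj hemU
      have hcount : ∀ h : ℕ, ((insert g (B1 \ {e})) ∩ blockU E 0 h).ncard
          + (if e ∈ blockU E 0 h then 1 else 0)
          = (B1 ∩ blockU E 0 h).ncard + (if g ∈ blockU E 0 h then 1 else 0) :=
        fun h => count_insert_diff hB1fin heB hgB.2
      refine ⟨g, hgB, hgbase, ?_, ?_, ?_⟩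
      · intro h h1 hhk hhj hhk'
        have hlow := hB1low h h1 hhk hhj hhk'
        have hc := hcount h
        rcases le_or_gt m h with hmh | hhm
        · rw [if_pos (blockU_mono hmh hemU), if_pos (blockU_mono hmh hgU.1)] at hc
          omega
        · rcases le_or_gt h j with hhj' | hjh
          · rw [if_neg (fun hc' => heUj (blockU_mono hhj' hc')),
              if_neg (fun hc' => hgU.2 (blockU_mono hhj' hc'))] at hc
            omega
          · by_cases he' : e ∈ blockU E 0 h
            · have hneq : (B1 ∩ blockU E 0 h).ncard ≠ blockSum a 0 h := by
                intro hx
                exact hmin h hhm ⟨hjh, Or.inr ⟨by omega, he', hx⟩⟩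
              rw [if_pos he'] at hc
              by_cases hg' : g ∈ blockU E 0 h
              · rw [if_pos hg'] at hc; omega
              · rw [if_neg hg'] at hc; omega
            · rw [if_neg he'] at hc
              by_cases hg' : g ∈ blockU E 0 h
              · rw [if_pos hg'] at hc; omega
              · rw [if_neg hg'] at hc; omega
      · have hc := hcount j
        rw [if_neg heUj, if_neg hgU.2] at hc
        omega
      · have hc := hcount k
        rcases le_or_gt m k with hmk | hkm
        · rw [if_pos (blockU_mono hmk hemU), if_pos (blockU_mono hmk hgU.1)] at hc
          omega
        · by_cases he' : e ∈ blockU E 0 k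
          · rw [if_pos he'] at hc
            by_cases hg' : g ∈ blockU E 0 k
            · rw [if_pos hg'] at hc; omega
            · rw [if_neg hg'] at hc; omega
          · have hlt : (B1 ∩ blockU E 0 k).ncard < blockSum a 0 k := by
              rcases hekc with h' | h'
              · exact absurd h' he'
              · exact h'
            rw [if_neg he'] at hc
            by_cases hg' : g ∈ blockU E 0 k
            · rw [if_pos hg'] at hc; omega
            · rw [if_neg hg'] at hc; omega

section constr

variable {α : Type*}

lemma aug_of_exchange (M : Matroid α) (hfin : M.E.Finite)
    (ℬ : Set (Set α)) (hbase : ∀ B ∈ ℬ, M.IsBase B)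
    (hex : ∀ B1 ∈ ℬ, ∀ B2 ∈ ℬ, ∀ e ∈ B1 \ B2, ∃ f ∈ B2 \ B1, insert f (B1 \ {e}) ∈ ℬ) :
    ∀ (n : ℕ) (I J B1 B2 : Set α), B1 ∈ ℬ → B2 ∈ ℬ → I ⊆ B1 → J ⊆ B2 →
      I.ncard < J.ncard → (B1 \ (I ∪ B2)).ncard = n →
      ∃ x ∈ J, x ∉ I ∧ ∃ B ∈ ℬ, insert x I ⊆ B := by
  intro n
  induction n using Nat.strong_induction_on with
  | _ n IH =>
  intro I J B1 B2 hB1 hB2 hIB1 hJB2 hIJ hn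
  have hB1fin : B1.Finite := hfin.subset (hbase B1 hB1).subset_ground
  have hB2fin : B2.Finite := hfin.subset (hbase B2 hB2).subset_ground
  have hIfin : I.Finite := hB1fin.subset hIB1
  have hJfin : J.Finite := hB2fin.subset hJB2
  by_cases hempty : B1 \ (I ∪ B2) = ∅
  · have hsub : B1 \ I ⊆ B2 := by
      intro x hx
      by_contra hc
      exact (eq_empty_iff_forall_notMem.1 hempty x) ⟨hx.1, fun h => h.elim hx.2 hc⟩
    have h1 : (B1 \ I).ncard + I.ncard = B1.ncard :=
      ncard_diff_add_ncard_of_subset hIB1 hB1fin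
    have h2 : (B2 \ J).ncard + J.ncard = B2.ncard :=
      ncard_diff_add_ncard_of_subset hJB2 hB2fin
    have hBB : B1.ncard = B2.ncard :=
      (hbase B1 hB1).ncard_eq_ncard_of_isBase (hbase B2 hB2)
    have hnotsub : ¬ (B1 \ I ⊆ B2 \ J) := by
      intro hc
      have := ncard_le_ncard hc (hB2fin.diff)
      omega
    obtain ⟨x, hx1, hx2⟩ := not_subset.1 hnotsub
    have hxB2 : x ∈ B2 := hsub hx1
    have hxJ : x ∈ J := by
      by_contra h
      exact hx2 ⟨hxB2, h⟩
    exact ⟨x, hxJ, hx1.2, B1, hB1, insert_subset hx1.1 hIB1⟩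
  · obtain ⟨e, he⟩ := nonempty_iff_ne_empty.2 hempty
    have heB1 : e ∈ B1 := he.1
    have heI : e ∉ I := fun hc => he.2 (Or.inl hc)
    have heB2 : e ∉ B2 := fun hc => he.2 (Or.inr hc)
    obtain ⟨f, hf, hB1'⟩ := hex B1 hB1 B2 hB2 e ⟨heB1, heB2⟩
    have hIB1' : I ⊆ insert f (B1 \ {e}) := by
      intro x hx
      exact Or.inr ⟨hIB1 hx, fun hc => heI (hc ▸ hx)⟩
    have hmeas : insert f (B1 \ {e}) \ (I ∪ B2) = (B1 \ (I ∪ B2)) \ {e} := by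
      ext x
      constructor
      · rintro ⟨rfl | ⟨hx1, hx2⟩, hx3⟩
        · exact absurd (Or.inr hf.1) hx3
        · exact ⟨⟨hx1, hx3⟩, hx2⟩
      · rintro ⟨⟨hx1, hx2⟩, hx3⟩
        exact ⟨Or.inr ⟨hx1, hx3⟩, hx2⟩
    have hcard : ((B1 \ (I ∪ B2)) \ {e}).ncard + 1 = (B1 \ (I ∪ B2)).ncard :=
      ncard_diff_singleton_add_one he (hB1fin.diff)
    have hlt : (insert f (B1 \ {e}) \ (I ∪ B2)).ncard < n := by
      rw [hmeas]; omega
    exact IH _ hlt I J (insert f (B1 \ {e})) B2 hB1' hB2 hIB1' hJB2 hIJ rfl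

lemma isBaseCollection_of_exchange (M : Matroid α) (hfin : M.E.Finite)
    (ℬ : Set (Set α)) (hbase : ∀ B ∈ ℬ, M.IsBase B)
    (hex : ∀ B1 ∈ ℬ, ∀ B2 ∈ ℬ, ∀ e ∈ B1 \ B2, ∃ f ∈ B2 \ B1, insert f (B1 \ {e}) ∈ ℬ)
    (hne : ℬ.Nonempty) : IsBaseCollection M.E ℬ := by
  classical
  obtain ⟨B0, hB0⟩ := hne
  have hcard : ∀ B ∈ ℬ, B.ncard = B0.ncard :=
    fun B hB => (hbase B hB).ncard_eq_ncard_of_isBase (hbase B0 hB0)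
  set N := (IndepMatroid.ofFinite hfin (fun I => ∃ B ∈ ℬ, I ⊆ B)
    ⟨B0, hB0, empty_subset _⟩
    (fun I J ⟨B, hB, hJB⟩ hIJ => ⟨B, hB, hIJ.trans hJB⟩)
    (fun I J ⟨BI, hBI, hIBI⟩ ⟨BJ, hBJ, hJBJ⟩ hlt =>
      aug_of_exchange M hfin ℬ hbase hex _ I J BI BJ hBI hBJ hIBI hJBJ hlt rfl)
    (fun I ⟨B, hB, hIB⟩ => hIB.trans (hbase B hB).subset_ground)).matroid with hN
  have hNindep : ∀ I, N.Indep I ↔ ∃ B ∈ ℬ, I ⊆ B := by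
    intro I
    rw [hN, IndepMatroid.matroid_indep_iff, IndepMatroid.ofFinite_indep]
  refine ⟨N, by rw [hN]; simp, ?_⟩
  intro B
  constructor
  · intro hB
    obtain ⟨B', hB', hBB'⟩ := (hNindep B).1 hB.indep
    have hB'ind : N.Indep B' := (hNindep B').2 ⟨B', hB', rfl.subset⟩
    rwa [hB.eq_of_subset_indep hB'ind hBB']
  · intro hB
    have hBind : N.Indep B := (hNindep B).2 ⟨B, hB, rfl.subset⟩
    refine hBind.isBase_of_maximal (fun J hJ hBJ => ?_)
    obtain ⟨B', hB', hJB'⟩ := (hNindep J).1 hJ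
    have hBB' : B ⊆ B' := hBJ.trans hJB'
    have hBfin' : B'.Finite := hfin.subset (hbase B' hB').subset_ground
    have hBeq : B = B' := eq_of_subset_of_ncard_le hBB'
      (by rw [hcard B hB, hcard B' hB']) hBfin'
    exact subset_antisymm hBJ (hBeq ▸ hJB')

end constr

/-- for a good `t`-partition of `M` and `1 ≤ j < k ≤ t`, the intersection
`ℬ(M_j) ∩ ℬ(M_k)` has the stated description, satisfies the basis exchange axiom, and is
the collection of bases of a matroid on `E` whenever it is nonempty. -/
theorem statement5 {α : Type*} {t : ℕ} (ht : 2 ≤ t) (M : Matroid α) (hfin : M.E.Finite)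
    (r : ℕ) (hrank : mrk M = r) (E : Fin t → Set α) (a : Fin t → ℕ)
    (hgood : IsGoodPartition M r E a)
    (j k : ℕ) (hj : 1 ≤ j) (hjk : j < k) (hk : k ≤ t) :
    BFam M E a j ∩ BFam M E a k =
      {B | M.IsBase B ∧
        (∀ h : ℕ, 1 ≤ h → h ≤ k → h ≠ j → h ≠ k →
          blockSum a 0 h ≤ (B ∩ blockU E 0 h).ncard) ∧
        (B ∩ blockU E 0 j).ncard = blockSum a 0 j ∧
        (B ∩ blockU E 0 k).ncard ≤ blockSum a 0 k} ∧
    (∀ X ∈ BFam M E a j ∩ BFam M E a k, ∀ Y ∈ BFam M E a j ∩ BFam M E a k,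
      ∀ e ∈ X \ Y, ∃ f ∈ Y \ X, insert f (X \ {e}) ∈ BFam M E a j ∩ BFam M E a k) ∧
    ((BFam M E a j ∩ BFam M E a k).Nonempty →
      IsBaseCollection M.E (BFam M E a j ∩ BFam M E a k)) := by
  classical
  have hdesc : BFam M E a j ∩ BFam M E a k = Desc M E a j k := by
    ext B
    simp only [BFam, Desc, mem_inter_iff, mem_setOf_eq]
    constructor
    · rintro ⟨⟨hb, hlow1, hup1⟩, -, hlow2, hup2⟩
      refine ⟨hb, fun h h1 hhk hhj hhk' => hlow2 h h1 (by omega),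
        le_antisymm hup1 (hlow2 j hj (by omega)), hup2⟩
    · rintro ⟨hb, hlow, hjeq, hkup⟩
      refine ⟨⟨hb, fun h h1 hhj => hlow h h1 (by omega) (by omega) (by omega), hjeq.le⟩,
        hb, fun h h1 hhk => ?_, hkup⟩
      by_cases hhj : h = j
      · subst hhj; exact hjeq.ge
      · exact hlow h h1 (by omega) hhj (by omega)
  have hexch : ∀ X ∈ Desc M E a j k, ∀ Y ∈ Desc M E a j k, ∀ e ∈ X \ Y,
      ∃ f ∈ Y \ X, insert f (X \ {e}) ∈ Desc M E a j k := by
    intro X hX Y hY e he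
    exact key_exchange ht M hfin r hrank E a hgood j k hj hjk hk hX hY he.1 he.2
  have hdesc' : BFam M E a j ∩ BFam M E a k =
      {B | M.IsBase B ∧
        (∀ h : ℕ, 1 ≤ h → h ≤ k → h ≠ j → h ≠ k →
          blockSum a 0 h ≤ (B ∩ blockU E 0 h).ncard) ∧
        (B ∩ blockU E 0 j).ncard = blockSum a 0 j ∧
        (B ∩ blockU E 0 k).ncard ≤ blockSum a 0 k} := hdesc
  refine ⟨hdesc', ?_, ?_⟩
  · rw [hdesc]
    exact hexch
  · rw [hdesc]
    intro hne
    exact isBaseCollection_of_exchange M hfin _ (fun B hB => hB.1) hexch hne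
end

section
/- Let n, r, t be integers with t ≥ 2, r ≥ t, and n ≥ r + t, and let p_1,…,p_t be integers with p_i ≥ 2 for all i and p_1 + ⋯ + p_t = n. Partition E = {1,…,n} into consecutive intervals E_1 = {1,…,p_1}, E_2 = {p_1+1,…,p_1+p_2}, …, E_t = {p_1+⋯+p_{t−1}+1,…,n}. Then there exist integers a_1,…,a_t with 0 < a_i < min(p_i, r) for each i such that E = E_1 ∪ ⋯ ∪ E_t together with a_1,…,a_t is a good t-partition of the uniform matroid U_{n,r}. -/
open Matroid Set

/- ---------------- auxiliary lemmas ---------------- -/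

private lemma sum_filter_lt_succ {t : ℕ} (f : Fin t → ℕ) (j : ℕ) (hj : j < t) :
    ∑ i ∈ Finset.univ.filter (fun l : Fin t => (l : ℕ) < j + 1), f i
      = (∑ i ∈ Finset.univ.filter (fun l : Fin t => (l : ℕ) < j), f i) + f ⟨j, hj⟩ := by
  have h : Finset.univ.filter (fun l : Fin t => (l : ℕ) < j + 1)
      = insert ⟨j, hj⟩ (Finset.univ.filter (fun l : Fin t => (l : ℕ) < j)) := by
    ext i
    simp only [Finset.mem_filter, Finset.mem_univ, true_and, Finset.mem_insert, Fin.ext_iff]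
    omega
  rw [h, Finset.sum_insert (by simp), add_comm]

private lemma sum_filter_lt_mono {t : ℕ} (f : Fin t → ℕ) {j k : ℕ} (h : j ≤ k) :
    ∑ i ∈ Finset.univ.filter (fun l : Fin t => (l : ℕ) < j), f i
      ≤ ∑ i ∈ Finset.univ.filter (fun l : Fin t => (l : ℕ) < k), f i := by
  apply Finset.sum_le_sum_of_subset
  intro i
  simp only [Finset.mem_filter, Finset.mem_univ, true_and]
  omega

private def Qfun {t : ℕ} (q : Fin t → ℕ) (j : ℕ) : ℕ :=
  ∑ i ∈ Finset.univ.filter (fun l : Fin t => (l : ℕ) < j), q i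

private def bfun {t : ℕ} (q : Fin t → ℕ) (r : ℕ) (j : ℕ) : ℕ :=
  min (Qfun q j) (r - t + j)

private lemma bfun_mono {t : ℕ} (q : Fin t → ℕ) (r : ℕ) : Monotone (bfun q r) := by
  apply monotone_nat_of_le_succ
  intro j
  unfold bfun
  have h1 : Qfun q j ≤ Qfun q (j + 1) := sum_filter_lt_mono q (Nat.le_succ j)
  omega

private lemma exists_a (t r : ℕ) (q : Fin t → ℕ) (hq : ∀ i, 1 ≤ q i)
    (htr : t ≤ r) (hQ : r ≤ ∑ i, q i) :
    ∃ a : Fin t → ℕ, (∀ i, 1 ≤ a i ∧ a i ≤ q i) ∧ ∑ i, a i = r := by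
  refine ⟨fun i => bfun q r ((i : ℕ) + 1) - bfun q r (i : ℕ), ?_, ?_⟩
  · intro i
    have hstep := sum_filter_lt_succ q (i : ℕ) i.isLt
    have hqi := hq i
    have h1 : Qfun q ((i : ℕ) + 1) = Qfun q (i : ℕ) + q ⟨(i : ℕ), i.isLt⟩ := hstep
    have h2 : q ⟨(i : ℕ), i.isLt⟩ = q i := rfl
    show 1 ≤ bfun q r ((i : ℕ) + 1) - bfun q r (i : ℕ) ∧
      bfun q r ((i : ℕ) + 1) - bfun q r (i : ℕ) ≤ q i
    unfold bfun
    rw [h1, h2]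
    omega
  · rw [Fin.sum_univ_eq_sum_range (fun j => bfun q r (j + 1) - bfun q r j) t,
      Finset.sum_range_tsub (bfun_mono q r)]
    have h0 : Qfun q 0 = 0 := by
      unfold Qfun
      rw [Finset.filter_false_of_mem (by simp), Finset.sum_empty]
    have ht' : Qfun q t = ∑ i, q i := by
      unfold Qfun
      rw [Finset.filter_true_of_mem (by simp [Fin.is_lt])]
    unfold bfun
    rw [h0, ht']
    omega

private lemma blockSum_split_s8 {t : ℕ} (a : Fin t → ℕ) {lo mid hi : ℕ}
    (h1 : lo ≤ mid) (h2 : mid ≤ hi) :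
    blockSum a lo hi = blockSum a lo mid + blockSum a mid hi := by
  unfold blockSum
  have hu : Finset.univ.filter (fun i : Fin t => lo ≤ (i : ℕ) ∧ (i : ℕ) < hi)
      = Finset.univ.filter (fun i : Fin t => lo ≤ (i : ℕ) ∧ (i : ℕ) < mid)
        ∪ Finset.univ.filter (fun i : Fin t => mid ≤ (i : ℕ) ∧ (i : ℕ) < hi) := by
    ext i
    simp only [Finset.mem_filter, Finset.mem_univ, true_and, Finset.mem_union]
    omega
  rw [hu, Finset.sum_union]
  rw [Finset.disjoint_left]
  intro i hi1 hi2
  simp only [Finset.mem_filter, Finset.mem_univ, true_and] at hi1 hi2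
  omega

private lemma blockSum_total {t : ℕ} (a : Fin t → ℕ) : blockSum a 0 t = ∑ i, a i := by
  unfold blockSum
  rw [Finset.filter_true_of_mem (by simp [Fin.is_lt])]

/-- the consecutive-interval partition of `{1, …, n}` into blocks of sizes
`p_1, …, p_t` admits integers `a_i` with `0 < a_i < min (p_i, r)` making it a good
`t`-partition of the uniform matroid `U_{n,r}`. -/
theorem statement8 (n r t : ℕ) (ht : 2 ≤ t) (hrt : t ≤ r) (hn : r + t ≤ n)
    (p : Fin t → ℕ) (hp : ∀ i, 2 ≤ p i) (hsum : ∑ i, p i = n)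
    (U : Matroid (Fin n)) (hUE : U.E = Set.univ)
    (hUB : ∀ B : Set (Fin n), U.IsBase B ↔ B.ncard = r)
    (E : Fin t → Set (Fin n))
    (hE : ∀ i : Fin t, E i = {x : Fin n |
      (∑ l ∈ Finset.univ.filter (fun l : Fin t => (l : ℕ) < (i : ℕ)), p l) ≤ (x : ℕ) ∧
      (x : ℕ) < ∑ l ∈ Finset.univ.filter (fun l : Fin t => (l : ℕ) ≤ (i : ℕ)), p l}) :
    ∃ a : Fin t → ℕ, (∀ i, 0 < a i ∧ a i < min (p i) r) ∧
      IsGoodPartition U r E a := by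
  have hr2 : 2 ≤ r := le_trans ht hrt
  -- independence in U is just cardinality at most r
  have hUI : ∀ I : Set (Fin n), U.Indep I ↔ I.ncard ≤ r := by
    intro I
    constructor
    · intro h
      obtain ⟨B, hB, hIB⟩ := h.exists_isBase_superset
      rw [hUB] at hB
      exact hB ▸ Set.ncard_le_ncard hIB B.toFinite
    · intro h
      have hucard : (Set.univ : Set (Fin n)).ncard = n := by
        rw [Set.ncard_univ, Nat.card_eq_fintype_card, Fintype.card_fin]
      obtain ⟨B, hIB, _, hBcard⟩ := Set.exists_subsuperset_card_eq (Set.subset_univ I) h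
        (by rw [hucard]; omega)
      exact ((hUB B).mpr hBcard).indep.subset hIB
  -- prefix sums
  set S : ℕ → ℕ := fun j => ∑ i ∈ Finset.univ.filter (fun l : Fin t => (l : ℕ) < j), p i
    with hS
  have hS0 : S 0 = 0 := by
    rw [hS]
    simp only
    rw [Finset.filter_false_of_mem (by simp), Finset.sum_empty]
  have hSt : S t = n := by
    rw [hS]
    simp only
    rw [Finset.filter_true_of_mem (by simp [Fin.is_lt]), hsum]
  have hSsucc : ∀ j (hj : j < t), S (j + 1) = S j + p ⟨j, hj⟩ :=
    fun j hj => sum_filter_lt_succ p j hj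
  have hSmono : ∀ {j k : ℕ}, j ≤ k → S j ≤ S k := fun h => sum_filter_lt_mono p h
  have hE' : ∀ i : Fin t, E i = {x : Fin n | S (i : ℕ) ≤ (x : ℕ) ∧ (x : ℕ) < S ((i : ℕ) + 1)} := by
    intro i
    rw [hE i]
    have : Finset.univ.filter (fun l : Fin t => (l : ℕ) ≤ (i : ℕ))
        = Finset.univ.filter (fun l : Fin t => (l : ℕ) < (i : ℕ) + 1) := by
      ext l
      simp only [Finset.mem_filter, Finset.mem_univ, true_and]
      omega
    rw [this]
  -- choose the a_i
  have hQsum : r ≤ ∑ i, (min (p i) r - 1) := by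
    by_cases hall : ∀ i, p i ≤ r
    · have e1 : ∑ i : Fin t, (min (p i) r - 1) = ∑ i : Fin t, (p i - 1) :=
        Finset.sum_congr rfl (fun i _ => by have := hall i; omega)
      have e2 : ∑ i : Fin t, ((p i - 1) + 1) = ∑ i : Fin t, p i :=
        Finset.sum_congr rfl (fun i _ => by have := hp i; omega)
      rw [Finset.sum_add_distrib] at e2
      have e3 : ∑ _i : Fin t, (1 : ℕ) = t := by simp
      omega
    · push_neg at hall
      obtain ⟨j, hj⟩ := hall
      have hmem : j ∈ (Finset.univ : Finset (Fin t)) := Finset.mem_univ j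
      rw [← Finset.add_sum_erase _ _ hmem]
      have h1 : min (p j) r - 1 = r - 1 := by omega
      have h2 : (Finset.univ.erase j).card • 1 ≤ ∑ i ∈ Finset.univ.erase j, (min (p i) r - 1) := by
        apply Finset.card_nsmul_le_sum
        intro i _
        have := hp i
        omega
      have h3 : (Finset.univ.erase j).card = t - 1 := by
        rw [Finset.card_erase_of_mem hmem, Finset.card_univ, Fintype.card_fin]
      rw [h3] at h2
      simp only [smul_eq_mul, mul_one] at h2
      omega
  obtain ⟨a, ha, hasum⟩ := exists_a t r (fun i => min (p i) r - 1)
    (fun i => by show 1 ≤ min (p i) r - 1; have := hp i; omega) hrt hQsum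
  have habd : ∀ i, 0 < a i ∧ a i < min (p i) r := by
    intro i
    have h1 := (ha i).1
    have h2 := (ha i).2
    have := hp i
    omega
  -- lower bound on restricted rank
  have hmrk : ∀ i : Fin t, min (p i) r ≤ mrk (U ↾ E i) := by
    intro i
    set m := min (p i) r with hm
    have hub : S ((i : ℕ) + 1) ≤ n := by rw [← hSt]; exact hSmono i.isLt
    have hstep := hSsucc (i : ℕ) i.isLt
    have hpe : p ⟨(i : ℕ), i.isLt⟩ = p i := rfl
    rw [hpe] at hstep
    have hmn : S (i : ℕ) + m ≤ n := by omega
    have hlt : ∀ x ∈ Finset.Ico (S (i : ℕ)) (S (i : ℕ) + m), x < n := by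
      intro x hx
      rw [Finset.mem_Ico] at hx
      omega
    set A : Finset (Fin n) := (Finset.Ico (S (i : ℕ)) (S (i : ℕ) + m)).attachFin hlt with hA
    have hcard : A.card = m := by
      rw [hA, Finset.card_attachFin, Nat.card_Ico]
      omega
    have hsub : ↑A ⊆ E i := by
      intro x hx
      rw [Finset.mem_coe, hA, Finset.mem_attachFin, Finset.mem_Ico] at hx
      rw [hE' i]
      exact ⟨hx.1, by omega⟩
    have hind : (U ↾ E i).Indep ↑A := by
      rw [Matroid.restrict_indep_iff]
      refine ⟨(hUI _).mpr ?_, hsub⟩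
      rw [Set.ncard_coe_finset, hcard]
      omega
    have hmem : m ∈ {k : ℕ | ∃ I, (U ↾ E i).Indep I ∧ I.ncard = k} :=
      ⟨↑A, hind, by rw [Set.ncard_coe_finset, hcard]⟩
    apply le_csSup _ hmem
    refine ⟨r, ?_⟩
    rintro x ⟨I, hI, rfl⟩
    exact (hUI I).mp (Matroid.restrict_indep_iff.mp hI).1
  refine ⟨a, habd, ?_, ?_, ?_, ?_, hasum.symm, ?_, ?_⟩
  -- union
  · rw [hUE]
    ext x
    simp only [Set.mem_iUnion, Set.mem_univ, iff_true]
    have key : ∀ m, m ≤ t → (x : ℕ) < S m → ∃ i : Fin t, x ∈ E i := by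
      intro m
      induction m with
      | zero => intro _ h; rw [hS0] at h; omega
      | succ m ih =>
        intro hm h
        by_cases hx : S m ≤ (x : ℕ)
        · exact ⟨⟨m, by omega⟩, by rw [hE']; exact ⟨hx, h⟩⟩
        · exact ih (by omega) (by omega)
    exact key t le_rfl (by rw [hSt]; exact x.isLt)
  -- pairwise disjoint
  · have hdisj : ∀ i j : Fin t, (i : ℕ) < (j : ℕ) → Disjoint (E i) (E j) := by
      intro i j hij
      rw [Set.disjoint_left]
      intro x hxi hxj
      rw [hE'] at hxi hxj
      have h1 : S ((i : ℕ) + 1) ≤ S (j : ℕ) := hSmono (by omega)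
      obtain ⟨hi1, hi2⟩ := hxi
      obtain ⟨hj1, hj2⟩ := hxj
      omega
    intro i j hij
    rcases Nat.lt_or_ge (i : ℕ) (j : ℕ) with h | h
    · exact hdisj i j h
    · have : (j : ℕ) < (i : ℕ) := by
        rcases Nat.lt_or_ge (j : ℕ) (i : ℕ) with h' | h'
        · exact h'
        · exact absurd (Fin.ext (le_antisymm h' h)) hij
      exact (hdisj j i this).symm
  -- rank of restrictions > 1
  · intro i
    have := hmrk i
    have := hp i
    omega
  -- bounds on a
  · intro i
    have h1 := habd i
    have h2 := hmrk i
    omega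
  -- P2a
  · intro j hj1 hjt X Y hX hXc hY hYc
    rw [Matroid.restrict_indep_iff] at hX hY
    rw [hUI]
    have hle := Set.ncard_union_le X Y
    have hsplit := blockSum_split_s8 a (Nat.zero_le j) (by omega : j ≤ t)
    rw [blockSum_total] at hsplit
    omega
  -- P2b
  · intro j k hj1 hjk hkt X Y Z hX hXc hY hYc hZ hZc
    rw [Matroid.restrict_indep_iff] at hX hY hZ
    rw [hUI]
    have hle1 := Set.ncard_union_le (X ∪ Y) Z
    have hle2 := Set.ncard_union_le X Y
    have hs1 := blockSum_split_s8 a (Nat.zero_le k) (by omega : k ≤ t)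
    have hs2 := blockSum_split_s8 a (Nat.zero_le j) (by omega : j ≤ k)
    rw [blockSum_total] at hs1
    omega
end

section
/- Let M be a matroid of rank r on E, let E = E_1 ∪ ⋯ ∪ E_t (t ≥ 2) be a good t-partition of M with integers a_1,…,a_t, and let X ⊂ E be a subset of M that is simultaneously a circuit and a hyperplane (a flat of rank r−1) of M. Let M' be the relaxation of M, i.e., the matroid on E whose collection of bases is B(M) ∪ {X}. Then E = E_1 ∪ ⋯ ∪ E_t together with the same integers a_1,…,a_t is a good t-partition of M'. -/
open Matroid Set

/-- `X` is a circuit of the matroid `M` : a dependent subset of the ground set all of whose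
proper subsets are independent. -/
def IsCircuitOf {α : Type*} (M : Matroid α) (X : Set α) : Prop :=
  X ⊆ M.E ∧ ¬ M.Indep X ∧ ∀ Y, Y ⊂ X → M.Indep Y

lemma mrk_le_mrk {α : Type*} {N N' : Matroid α} (h : ∀ I, N.Indep I → N'.Indep I)
    (hfin : N'.E.Finite) : mrk N ≤ mrk N' := by
  apply csSup_le_csSup
  · exact ⟨N'.E.ncard, fun n ⟨I, hI, hn⟩ => hn ▸ ncard_le_ncard hI.subset_ground hfin⟩
  · exact ⟨0, ∅, N.empty_indep, ncard_empty α⟩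
  · rintro n ⟨I, hI, hn⟩; exact ⟨I, h I hI, hn⟩

lemma blockSum_lt {t : ℕ} (a : Fin t → ℕ) (hpos : ∀ i, 0 < a i) (lo hi : ℕ)
    (i0 : Fin t) (hi0 : ¬ (lo ≤ (i0 : ℕ) ∧ (i0 : ℕ) < hi)) :
    blockSum a lo hi < ∑ i, a i := by
  apply Finset.sum_lt_sum_of_subset (Finset.subset_univ _) (Finset.mem_univ i0)
  · simp [hi0]
  · exact hpos i0
  · exact fun j _ _ => Nat.zero_le _

/-- a good `t`-partition of `M` is also a good `t`-partition of the
relaxation `M'` of `M` at a circuit-hyperplane `X`. -/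
theorem statement10 {α : Type*} {t : ℕ} (ht : 2 ≤ t) (M : Matroid α) (hfin : M.E.Finite)
    (r : ℕ) (hrank : mrk M = r) (E : Fin t → Set α) (a : Fin t → ℕ)
    (hgood : IsGoodPartition M r E a)
    (X : Set α) (hXss : X ⊂ M.E) (hXcirc : IsCircuitOf M X)
    (hXflat : M.IsFlat X) (hXrk : mrk (M ↾ X) = r - 1)
    (M' : Matroid α) (hM'E : M'.E = M.E)
    (hM' : ∀ B, M'.IsBase B ↔ (M.IsBase B ∨ B = X)) :
    IsGoodPartition M' r E a := by
  obtain ⟨hU, hdisj, hrkE, ha, hr, hP2a, hP2b⟩ := hgood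
  have hpos : ∀ i, 0 < a i := fun i => (ha i).1
  -- M-independence implies M'-independence
  have hmono : ∀ I, M.Indep I → M'.Indep I := by
    intro I hI
    obtain ⟨B, hB, hIB⟩ := hI.exists_isBase_superset
    exact (((hM' B).2 (Or.inl hB)).indep).subset hIB
  -- characterization of M'-independent sets
  have hchar : ∀ I, M'.Indep I → M.Indep I ∨ I = X := by
    intro I hI
    obtain ⟨B, hB, hIB⟩ := hI.exists_isBase_superset
    rcases (hM' B).1 hB with hBM | hBX
    · exact Or.inl (hBM.indep.subset hIB)
    · rw [hBX] at hIB
      by_cases hIX : I = X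
      · exact Or.inr hIX
      · exact Or.inl (hXcirc.2.2 I (ssubset_of_subset_of_ne hIB hIX))
  -- r ≥ 2
  have hr2 : 2 ≤ r := by
    have : (t : ℕ) ≤ ∑ i, a i := by
      calc (t : ℕ) = ∑ _i : Fin t, 1 := by simp
        _ ≤ ∑ i, a i := Finset.sum_le_sum fun i _ => hpos i
    omega
  -- X has exactly r elements
  have hXfin : X.Finite := hfin.subset hXss.subset
  have hXne : X.Nonempty := by
    rw [nonempty_iff_ne_empty]; rintro rfl; exact hXcirc.2.1 M.empty_indep
  have hXcard : X.ncard = r := by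
    obtain ⟨x, hx⟩ := hXne
    have hub : ∀ n ∈ {n : ℕ | ∃ I, (M ↾ X).Indep I ∧ I.ncard = n}, n ≤ X.ncard - 1 := by
      rintro n ⟨I, hI, rfl⟩
      rw [restrict_indep_iff] at hI
      have hss : I ⊂ X := ssubset_of_subset_of_ne hI.2 (by rintro rfl; exact hXcirc.2.1 hI.1)
      have := ncard_lt_ncard hss hXfin
      omega
    have hmem : X.ncard - 1 ∈ {n : ℕ | ∃ I, (M ↾ X).Indep I ∧ I.ncard = n} := by
      refine ⟨X \ {x}, restrict_indep_iff.2 ⟨hXcirc.2.2 _ (sdiff_singleton_ssubset.2 hx),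
        diff_subset⟩, ?_⟩
      rw [ncard_diff_singleton_of_mem hx]
    have hsup : mrk (M ↾ X) = X.ncard - 1 :=
      le_antisymm (csSup_le ⟨_, hmem⟩ hub) (le_csSup ⟨X.ncard - 1, hub⟩ hmem)
    have hcard1 : 1 ≤ X.ncard := (ncard_pos hXfin).2 ⟨x, hx⟩
    rw [hsup] at hXrk
    omega
  -- finiteness of restricted ground sets
  have hEfin : ∀ i, (E i : Set α).Finite := fun i =>
    hfin.subset (hU ▸ subset_iUnion E i)
  have hblockfin : ∀ lo hi, (blockU E lo hi).Finite := by
    intro lo hi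
    have : blockU E lo hi ⊆ M.E := by
      rw [← hU, blockU]; exact iUnion₂_subset fun i _ => subset_iUnion E i
    exact hfin.subset this
  -- restricted independence transfer
  have hresmono : ∀ (S : Set α) I, (M' ↾ S).Indep I → M.Indep I ∨ I = X := by
    intro S I hI
    exact hchar I (restrict_indep_iff.1 hI).1
  refine ⟨hM'E ▸ hU, hdisj, ?_, ?_, hr, ?_, ?_⟩
  · intro i
    refine lt_of_lt_of_le (hrkE i) (mrk_le_mrk ?_ ?_)
    · intro I hI
      rw [restrict_indep_iff] at hI ⊢
      exact ⟨hmono I hI.1, hI.2⟩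
    · rw [restrict_ground_eq]; exact hEfin i
  · intro i
    refine ⟨hpos i, lt_of_lt_of_le (ha i).2 (mrk_le_mrk ?_ ?_)⟩
    · intro I hI
      rw [restrict_indep_iff] at hI ⊢
      exact ⟨hmono I hI.1, hI.2⟩
    · rw [restrict_ground_eq]; exact hEfin i
  · -- P2a
    intro j hj1 hjt Y Z hY hYc hZ hZc
    have hYM : M.Indep Y := by
      rcases hresmono _ _ hY with h | rfl
      · exact h
      · exfalso
        have := blockSum_lt a hpos 0 j ⟨j, by omega⟩ (by simp)
        rw [hXcard] at hYc; omega
    have hZM : M.Indep Z := by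
      rcases hresmono _ _ hZ with h | rfl
      · exact h
      · exfalso
        have := blockSum_lt a hpos j t ⟨0, by omega⟩ (by simp; omega)
        rw [hXcard] at hZc; omega
    refine hmono _ (hP2a j hj1 hjt Y Z ?_ hYc ?_ hZc)
    · exact restrict_indep_iff.2 ⟨hYM, (restrict_indep_iff.1 hY).2⟩
    · exact restrict_indep_iff.2 ⟨hZM, (restrict_indep_iff.1 hZ).2⟩
  · -- P2b
    intro j k hj1 hjk hkt Y Z W hY hYc hZ hZc hW hWc
    have hYM : M.Indep Y := by
      rcases hresmono _ _ hY with h | rfl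
      · exact h
      · exfalso
        have := blockSum_lt a hpos 0 j ⟨j, by omega⟩ (by simp)
        rw [hXcard] at hYc; omega
    have hZM : M.Indep Z := by
      rcases hresmono _ _ hZ with h | rfl
      · exact h
      · exfalso
        have := blockSum_lt a hpos j k ⟨0, by omega⟩ (by simp; omega)
        rw [hXcard] at hZc; omega
    have hWM : M.Indep W := by
      rcases hresmono _ _ hW with h | rfl
      · exact h
      · exfalso
        have := blockSum_lt a hpos k t ⟨0, by omega⟩ (by simp; omega)
        rw [hXcard] at hWc; omega
    refine hmono _ (hP2b j k hj1 hjk hkt Y Z W ?_ hYc ?_ hZc ?_ hWc)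
    · exact restrict_indep_iff.2 ⟨hYM, (restrict_indep_iff.1 hY).2⟩
    · exact restrict_indep_iff.2 ⟨hZM, (restrict_indep_iff.1 hZ).2⟩
    · exact restrict_indep_iff.2 ⟨hWM, (restrict_indep_iff.1 hW).2⟩
end

section
/- Let M be a matroid of rank 3 on a finite set E and let E = E_1 ∪ E_2 be a partition of E into two disjoint sets such that: (1) r(M|E_1) ≥ 2 and r(M|E_2) = 3; and (2) for every line l of M (a flat of M of rank 2), if l ∩ E_1 ≠ ∅ then |l ∩ E_2| ≤ 1. Then E = E_1 ∪ E_2 together with the integers a_1 = 1 and a_2 = 2 is a good 2-partition of M. -/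
open Matroid Set

/-- A good 2-partition of a rank-`r` matroid `M`: the ground set is partitioned as
`E₁ ∪ E₂` with `r(M|Eᵢ) > 1`, integers `0 < aᵢ < r(M|Eᵢ)`, `(P1)` `r = a₁ + a₂`, and `(P2)`
unions of small independent sets of the two restrictions are independent in `M`. -/
def IsGoodPartition2 {α : Type*} (M : Matroid α) (r : ℕ) (E₁ E₂ : Set α) (a₁ a₂ : ℕ) : Prop :=
  E₁ ∪ E₂ = M.E ∧ Disjoint E₁ E₂ ∧
  1 < mrk (M ↾ E₁) ∧ 1 < mrk (M ↾ E₂) ∧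
  0 < a₁ ∧ a₁ < mrk (M ↾ E₁) ∧ 0 < a₂ ∧ a₂ < mrk (M ↾ E₂) ∧
  r = a₁ + a₂ ∧
  ∀ X Y : Set α, (M ↾ E₁).Indep X → X.ncard ≤ a₁ →
    (M ↾ E₂).Indep Y → Y.ncard ≤ a₂ → M.Indep (X ∪ Y)

lemma mrk_bdd {α : Type*} (M : Matroid α) (hfin : M.E.Finite) :
    BddAbove {n : ℕ | ∃ I, M.Indep I ∧ I.ncard = n} := by
  refine ⟨M.E.ncard, fun n ⟨I, hI, hn⟩ => ?_⟩
  exact hn ▸ ncard_le_ncard hI.subset_ground hfin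

lemma mrk_nonempty {α : Type*} (M : Matroid α) :
    {n : ℕ | ∃ I, M.Indep I ∧ I.ncard = n}.Nonempty :=
  ⟨0, ∅, M.empty_indep, by simp⟩

lemma le_mrk {α : Type*} {M : Matroid α} (hfin : M.E.Finite) {I : Set α} (hI : M.Indep I) :
    I.ncard ≤ mrk M :=
  le_csSup (mrk_bdd M hfin) ⟨I, hI, rfl⟩

lemma exists_indep_ncard_mrk {α : Type*} (M : Matroid α) (hfin : M.E.Finite) :
    ∃ I, M.Indep I ∧ I.ncard = mrk M :=
  Nat.sSup_mem (mrk_nonempty M) (mrk_bdd M hfin)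

/-- An independent set inside the closure of an independent set `Y` has cardinality
at most that of `Y`. -/
lemma indep_ncard_le_of_subset_closure {α : Type*} {M : Matroid α} (hfin : M.E.Finite)
    {I Y : Set α} (hI : M.Indep I) (hY : M.Indep Y) (hIY : I ⊆ M.closure Y) :
    I.ncard ≤ Y.ncard := by
  obtain ⟨J, hJ, hIJ⟩ := hI.subset_isBasis_of_subset hIY (M.closure_subset_ground Y)
  have hYb : M.IsBasis Y (M.closure Y) := hY.isBasis_closure
  have hcard : J.encard = Y.encard := hJ.encard_eq_encard hYb
  have hJfin : J.Finite := hfin.subset hJ.indep.subset_ground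
  have hYfin : Y.Finite := hfin.subset hY.subset_ground
  have h1 : I.encard ≤ Y.encard := hcard ▸ encard_le_encard hIJ
  rw [ncard_def, ncard_def]
  exact ENat.toNat_le_toNat h1 hYfin.encard_lt_top.ne

/-- The rank of the restriction to the closure of a 2-element independent set is 2. -/
lemma mrk_closure_pair {α : Type*} {M : Matroid α} (hfin : M.E.Finite)
    {Y : Set α} (hY : M.Indep Y) (hY2 : Y.ncard = 2) :
    mrk (M ↾ M.closure Y) = 2 := by
  have hfin' : (M ↾ M.closure Y).E.Finite := hfin.subset (by simpa using M.closure_subset_ground Y)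
  refine le_antisymm ?_ ?_
  · refine csSup_le (mrk_nonempty _) ?_
    rintro n ⟨I, hI, rfl⟩
    rw [restrict_indep_iff] at hI
    exact hY2 ▸ indep_ncard_le_of_subset_closure hfin hI.1 hY hI.2
  · have : (M ↾ M.closure Y).Indep Y :=
      restrict_indep_iff.mpr ⟨hY, M.subset_closure Y hY.subset_ground⟩
    calc 2 = Y.ncard := hY2.symm
      _ ≤ _ := le_mrk hfin' this

lemma closure_flat' {α : Type*} (M : Matroid α) (X : Set α) : M.IsFlat (M.closure X) :=
  ⟨fun _ _ hI hW => hW.subset_closure.trans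
      (by rw [hI.closure_eq_closure, M.closure_closure]),
    M.closure_subset_ground X⟩

/-- geometric sufficient conditions for a rank-3 matroid : if
`r(M|E₁) ≥ 2`, `r(M|E₂) = 3` and every line (rank-2 flat) of `M` meeting `E₁` meets `E₂`
in at most one point, then `E₁ ∪ E₂` with `a₁ = 1`, `a₂ = 2` is a good 2-partition of `M`. -/
theorem statement11 {α : Type*} (M : Matroid α) (hfin : M.E.Finite) (hrank : mrk M = 3)
    (E₁ E₂ : Set α) (hpart : E₁ ∪ E₂ = M.E) (hdisj : Disjoint E₁ E₂)
    (h1 : 2 ≤ mrk (M ↾ E₁)) (h2 : mrk (M ↾ E₂) = 3)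
    (hline : ∀ l : Set α, M.IsFlat l → mrk (M ↾ l) = 2 →
      (l ∩ E₁).Nonempty → (l ∩ E₂).ncard ≤ 1) :
    IsGoodPartition2 M 3 E₁ E₂ 1 2 := by
  have hE1 : E₁ ⊆ M.E := hpart ▸ subset_union_left
  have hE2 : E₂ ⊆ M.E := hpart ▸ subset_union_right
  have hfin2 : (M ↾ E₂).E.Finite := hfin.subset (by simpa using hE2)
  -- main claim
  have key : ∀ X Y : Set α, (M ↾ E₁).Indep X → X.ncard ≤ 1 →
      (M ↾ E₂).Indep Y → Y.ncard ≤ 2 → M.Indep (X ∪ Y) := by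
    intro X Y hX hXc hY hYc
    rw [restrict_indep_iff] at hX hY
    obtain ⟨hXi, hXE⟩ := hX
    obtain ⟨hYi, hYE⟩ := hY
    have hXfin : X.Finite := hfin.subset hXi.subset_ground
    have hYfin : Y.Finite := hfin.subset hYi.subset_ground
    rcases X.eq_empty_or_nonempty with rfl | ⟨x, hx⟩
    · simpa using hYi
    have hX1 : X = {x} := by
      obtain ⟨a, ha⟩ := (ncard_eq_one (s := X)).mp
        (le_antisymm hXc ((ncard_pos hXfin).mpr ⟨x, hx⟩))
      rw [ha] at hx ⊢; rw [mem_singleton_iff] at hx; rw [hx]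
    subst hX1
    have hxE1 : x ∈ E₁ := hXE rfl
    rw [singleton_union]
    by_contra hdep
    have hxY : x ∉ Y := fun h => hdisj.ne_of_mem hxE1 (hYE h) rfl
    have hxcl : x ∈ M.closure Y := by
      by_contra hcl
      exact hdep ((hYi.insert_indep_iff).mpr (Or.inl ⟨hE1 hxE1, hcl⟩))
    -- find a 2-element independent set Z ⊆ E₂ with x ∈ closure Z
    obtain ⟨Z, hZi, hZE, hZ2, hxZ⟩ :
        ∃ Z, M.Indep Z ∧ Z ⊆ E₂ ∧ Z.ncard = 2 ∧ x ∈ M.closure Z := by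
      interval_cases hY2 : Y.ncard
      · -- Y empty: insert x Y = {x} is independent, contradiction
        exfalso
        rw [(ncard_eq_zero hYfin).mp hY2] at hdep
        exact hdep (by simpa using hXi)
      · -- Y = {y}
        obtain ⟨y, rfl⟩ := (ncard_eq_one).mp hY2
        have hyE : y ∈ E₂ := hYE rfl
        -- find z ∈ E₂ with z ∉ closure {y}
        have hz : ∃ z ∈ E₂, z ∉ M.closure {y} := by
          by_contra hno
          push_neg at hno
          obtain ⟨I, hI, hIc⟩ := exists_indep_ncard_mrk (M ↾ E₂) hfin2
          rw [restrict_indep_iff] at hI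
          have : I.ncard ≤ ({y} : Set α).ncard :=
            indep_ncard_le_of_subset_closure hfin hI.1 hYi (fun a ha => hno a (hI.2 ha))
          simp only [ncard_singleton] at this
          omega
        obtain ⟨z, hzE, hzcl⟩ := hz
        have hzi : M.Indep (insert z {y}) :=
          (hYi.insert_indep_iff).mpr (Or.inl ⟨hE2 hzE, hzcl⟩)
        refine ⟨insert z {y}, hzi, ?_, ?_, ?_⟩
        · exact insert_subset hzE (singleton_subset_iff.mpr hyE)
        · have hzy : z ≠ y := fun h => hzcl (by
            rw [h]
            exact M.mem_closure_of_mem rfl (singleton_subset_iff.mpr (hE2 hyE)))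
          rw [ncard_insert_of_notMem (by simp [hzy])]
          simp
        · exact M.closure_subset_closure (by simp) hxcl
      · exact ⟨Y, hYi, hYE, hY2, hxcl⟩
    -- now the line closure Z gives a contradiction
    set l := M.closure Z with hl
    have hlflat : M.IsFlat l := closure_flat' M Z
    have hlrk : mrk (M ↾ l) = 2 := mrk_closure_pair hfin hZi hZ2
    have hlE1 : (l ∩ E₁).Nonempty := ⟨x, hxZ, hxE1⟩
    have hZl : Z ⊆ l ∩ E₂ := subset_inter (M.subset_closure Z hZi.subset_ground) hZE
    have : (2 : ℕ) ≤ (l ∩ E₂).ncard := by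
      calc 2 = Z.ncard := hZ2.symm
        _ ≤ (l ∩ E₂).ncard := ncard_le_ncard hZl
          (hfin.subset ((inter_subset_left).trans (M.closure_subset_ground Z)))
    have := hline l hlflat hlrk hlE1
    omega
  refine ⟨hpart, hdisj, by omega, by omega, by omega, by omega, by omega, by omega, by omega, key⟩
end

section
/- Let M be a matroid of rank 3 on a finite set E and let E = E_1 ∪ E_2 ∪ E_3 be a partition of E into three disjoint sets such that: (1) r(M|E_i) ≥ 2 for each i = 1,2,3; and (2) for every line l of M (a flat of M of rank 2) containing at least 3 elements: (a) if l ∩ E_1 ≠ ∅ then |l ∩ (E_2 ∪ E_3)| ≤ 1, and (b) if l ∩ E_3 ≠ ∅ then |l ∩ (E_1 ∪ E_2)| ≤ 1. Then E = E_1 ∪ E_2 ∪ E_3 together with the integers a_1 = a_2 = a_3 = 1 is a good 3-partition of M. -/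
open Matroid Set

/-- A good 3-partition of a rank-`r` matroid `M` (the `t = 3` case of the paper's good
`t`-partition). -/
def IsGoodPartition3 {α : Type*} (M : Matroid α) (r : ℕ) (E₁ E₂ E₃ : Set α)
    (a₁ a₂ a₃ : ℕ) : Prop :=
  E₁ ∪ E₂ ∪ E₃ = M.E ∧ Disjoint E₁ E₂ ∧ Disjoint E₁ E₃ ∧ Disjoint E₂ E₃ ∧
  1 < mrk (M ↾ E₁) ∧ 1 < mrk (M ↾ E₂) ∧ 1 < mrk (M ↾ E₃) ∧
  0 < a₁ ∧ a₁ < mrk (M ↾ E₁) ∧ 0 < a₂ ∧ a₂ < mrk (M ↾ E₂) ∧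
  0 < a₃ ∧ a₃ < mrk (M ↾ E₃) ∧
  r = a₁ + a₂ + a₃ ∧
  (∀ X Y : Set α, (M ↾ E₁).Indep X → X.ncard ≤ a₁ →
    (M ↾ (E₂ ∪ E₃)).Indep Y → Y.ncard ≤ a₂ + a₃ → M.Indep (X ∪ Y)) ∧
  (∀ X Y : Set α, (M ↾ (E₁ ∪ E₂)).Indep X → X.ncard ≤ a₁ + a₂ →
    (M ↾ E₃).Indep Y → Y.ncard ≤ a₃ → M.Indep (X ∪ Y)) ∧
  (∀ X Y Z : Set α, (M ↾ E₁).Indep X → X.ncard ≤ a₁ →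
    (M ↾ E₂).Indep Y → Y.ncard ≤ a₂ →
    (M ↾ E₃).Indep Z → Z.ncard ≤ a₃ → M.Indep (X ∪ Y ∪ Z))

section Aux

variable {α : Type*} {M : Matroid α}

private lemma aux_encard_le_of_subset_closure {I J : Set α} (hI : M.Indep I) (hJ : M.Indep J)
    (hJI : J ⊆ M.closure I) : J.encard ≤ I.encard := by
  by_contra h
  push_neg at h
  obtain ⟨e, ⟨heJ, heI⟩, hins⟩ := hI.augment hJ h
  have he : e ∈ M.closure I := hJI heJ
  rw [hI.mem_closure_iff_of_notMem heI] at he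
  exact he.not_indep hins

private lemma aux_bddAbove (hfin : M.E.Finite) :
    BddAbove {n : ℕ | ∃ I, M.Indep I ∧ I.ncard = n} := by
  refine ⟨M.E.ncard, ?_⟩
  rintro n ⟨I, hI, rfl⟩
  exact ncard_le_ncard hI.subset_ground hfin

private lemma aux_exists_indep_pair (hfin : M.E.Finite) (h : 2 ≤ mrk M) :
    ∃ x y, x ≠ y ∧ M.Indep {x, y} := by
  have hne : {n : ℕ | ∃ I, M.Indep I ∧ I.ncard = n}.Nonempty := ⟨0, ∅, M.empty_indep, by simp⟩
  obtain ⟨I, hI, hcard⟩ := Nat.sSup_mem hne (aux_bddAbove hfin)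
  have hIfin : I.Finite := hfin.subset hI.subset_ground
  have h2 : 2 ≤ I.ncard := by rw [hcard]; exact h
  have h1 : 1 < I.encard := by
    rw [← hIfin.cast_ncard_eq]
    exact_mod_cast h2
  obtain ⟨a, b, ha, hb, hab⟩ := one_lt_encard_iff.mp h1
  exact ⟨a, b, hab, hI.subset (by simp [insert_subset_iff, ha, hb])⟩

private lemma aux_mrk_closure_pair {x y : α} (hfin : M.E.Finite) (hxy : M.Indep {x, y})
    (hne : x ≠ y) : mrk (M ↾ M.closure {x, y}) = 2 := by
  apply le_antisymm
  · refine csSup_le ⟨0, ∅, (M ↾ M.closure {x, y}).empty_indep, by simp⟩ ?_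
    rintro n ⟨J, hJ, rfl⟩
    rw [restrict_indep_iff] at hJ
    have hle := aux_encard_le_of_subset_closure hxy hJ.1 hJ.2
    have hJfin : J.Finite := hfin.subset hJ.1.subset_ground
    rw [← hJfin.cast_ncard_eq, encard_pair hne] at hle
    exact_mod_cast hle
  · apply le_csSup
    · refine ⟨M.E.ncard, ?_⟩
      rintro n ⟨I, hI, rfl⟩
      exact ncard_le_ncard (restrict_indep_iff.mp hI).1.subset_ground hfin
    · exact ⟨{x, y}, restrict_indep_iff.mpr
        ⟨hxy, M.subset_closure _ hxy.subset_ground⟩, ncard_pair hne⟩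

private lemma aux_small_cases {Y : Set α} (hfin : Y.Finite) (h : Y.ncard ≤ 2) :
    Y = ∅ ∨ (∃ y, Y = {y}) ∨ ∃ y z, y ≠ z ∧ Y = {y, z} := by
  rcases lt_or_eq_of_le h with h' | h'
  · rw [Nat.lt_succ_iff] at h'
    rcases (ncard_le_one_iff_eq hfin).mp h' with h0 | ⟨a, ha⟩
    · exact Or.inl h0
    · exact Or.inr (Or.inl ⟨a, ha⟩)
  · exact Or.inr (Or.inr (ncard_eq_two.mp h'))

private lemma aux_flat_closure {I : Set α} (hI : M.Indep I) : M.IsFlat (M.closure I) := by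
  rw [hI.closure_eq_setOfPred_isBasis_insert]
  set F := {x | M.IsBasis I (insert x I)}
  have hIF : M.IsBasis I F := hI.isBasis_setOfPred_insert_isBasis
  refine ⟨fun J X hJF hJX e heX ↦ show M.IsBasis _ _ from ?_, hIF.subset_ground⟩
  exact (hIF.isBasis_of_isBasis_of_subset_of_subset (hJX.isBasis_union hJF) hJF.subset
    (hIF.subset.trans subset_union_right)).isBasis_subset (subset_insert _ _)
    (insert_subset (Or.inl heX) (hIF.subset.trans subset_union_right))

/-- The key geometric lemma. -/
private lemma aux_key {A B : Set α} (hfin : M.E.Finite) (hAB : Disjoint A B)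
    (hpair : ∃ u v, u ≠ v ∧ u ∈ B ∧ v ∈ B ∧ M.Indep {u, v})
    (hl : ∀ l : Set α, M.IsFlat l → mrk (M ↾ l) = 2 → 3 ≤ l.ncard →
      (l ∩ A).Nonempty → (l ∩ B).ncard ≤ 1)
    {x : α} {Y : Set α} (hxA : x ∈ A) (hYB : Y ⊆ B) (hx : M.Indep {x}) (hY : M.Indep Y)
    (hY2 : Y.ncard ≤ 2) : M.Indep (insert x Y) := by
  by_contra hcon
  have hxY : x ∉ Y := fun h => (hAB.ne_of_mem hxA (hYB h)) rfl
  have hxE : x ∈ M.E := hx.subset_ground rfl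
  have hxcl : x ∈ M.closure Y := by
    rw [hY.mem_closure_iff_of_notMem hxY, dep_iff]
    exact ⟨hcon, insert_subset hxE hY.subset_ground⟩
  -- a generic contradiction builder: a flat l = cl of an indep pair containing x and
  -- two distinct elements of B
  have main : ∀ y z : α, y ∈ B → z ∈ B → y ≠ z → (∃ P : Set α, M.Indep P ∧
      (∃ p q, p ≠ q ∧ P = {p, q}) ∧ {x, y, z} ⊆ M.closure P) → False := by
    rintro y z hyB hzB hyz ⟨P, hP, ⟨p, q, hpq, rfl⟩, hsub⟩
    set l := M.closure {p, q} with hldef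
    have hlE : l ⊆ M.E := M.closure_subset_ground _
    have hlfin : l.Finite := hfin.subset hlE
    have hflat : M.IsFlat l := aux_flat_closure hP
    have hmrk : mrk (M ↾ l) = 2 := aux_mrk_closure_pair hfin hP hpq
    have hxl : x ∈ l := hsub (by simp)
    have hyl : y ∈ l := hsub (by simp)
    have hzl : z ∈ l := hsub (by simp)
    have hxy : x ≠ y := hAB.ne_of_mem hxA hyB
    have hxz : x ≠ z := hAB.ne_of_mem hxA hzB
    have h3 : 3 ≤ l.ncard := by
      have hsub3 : ({x, y, z} : Set α) ⊆ l := by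
        simp [insert_subset_iff, hxl, hyl, hzl]
      have : ({x, y, z} : Set α).ncard = 3 := by
        rw [ncard_insert_of_notMem (by simp [hxy, hxz]) (by simp), ncard_pair hyz]
      rw [← this]
      exact ncard_le_ncard hsub3 hlfin
    have hB1 : (l ∩ B).ncard ≤ 1 := hl l hflat hmrk h3 ⟨x, hxl, hxA⟩
    have hB2 : 2 ≤ (l ∩ B).ncard := by
      have hsub2 : ({y, z} : Set α) ⊆ l ∩ B := by
        simp [insert_subset_iff, hyl, hzl, hyB, hzB]
      rw [← ncard_pair hyz]
      exact ncard_le_ncard hsub2 (hlfin.inter_of_left _)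
    omega
  have hYfin : Y.Finite := hfin.subset hY.subset_ground
  rcases aux_small_cases hYfin hY2 with rfl | ⟨y, rfl⟩ | ⟨y, z, hyz, rfl⟩
  · -- Y empty: x is a loop, contradiction with {x} indep
    rw [(M.empty_indep).mem_closure_iff_of_notMem (notMem_empty x)] at hxcl
    exact hxcl.not_indep (by simpa using hx)
  · -- Y = {y}: find z ∈ B not in cl {x}
    have hyB : y ∈ B := hYB rfl
    have hycl : y ∈ M.closure {x} := by
      have hx0 : x ∉ M.closure (∅ : Set α) := by
        rw [(M.empty_indep).mem_closure_iff_of_notMem (notMem_empty x)]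
        intro hd
        exact hd.not_indep (by simpa using hx)
      have := M.closure_exchange (X := ∅) (e := x) (f := y) ⟨by simpa using hxcl, hx0⟩
      simpa using this.1
    obtain ⟨u, v, huv, huB, hvB, hP⟩ := hpair
    have hnotboth : ¬ (u ∈ M.closure {x} ∧ v ∈ M.closure {x}) := by
      rintro ⟨hu, hv⟩
      have := aux_encard_le_of_subset_closure hx hP (by simp [insert_subset_iff, hu, hv])
      rw [encard_pair huv, encard_singleton] at this
      exact absurd this (by norm_num)
    have hz : ∃ z, z ∈ B ∧ z ∈ M.E ∧ z ∉ M.closure {x} := by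
      by_cases hu : u ∈ M.closure {x}
      · exact ⟨v, hvB, hP.subset_ground (by simp), fun hv => hnotboth ⟨hu, hv⟩⟩
      · exact ⟨u, huB, hP.subset_ground (by simp), hu⟩
    obtain ⟨z, hzB, hzE, hzcl⟩ := hz
    have hxzI : M.Indep {x, z} := by
      have := hx.insert_indep_iff_of_notMem (e := z) ?_
      · rw [pair_comm]
        rw [this]
        exact ⟨hzE, hzcl⟩
      · intro h; rw [mem_singleton_iff] at h; exact hzcl (h ▸ M.mem_closure_self z hzE)
    have hyz : y ≠ z := fun h => hzcl (h ▸ hycl)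
    refine main y z hyB hzB hyz ⟨{x, z}, hxzI, ⟨x, z, fun h => ?_, rfl⟩, ?_⟩
    · exact hzcl (h ▸ M.mem_closure_self z hzE)
    · intro w hw
      rcases hw with rfl | rfl | rfl
      · exact M.subset_closure _ hxzI.subset_ground (by simp)
      · exact M.closure_subset_closure (by simp) hycl
      · exact M.subset_closure _ hxzI.subset_ground (by simp)
  · -- Y = {y, z}
    have hyB : y ∈ B := hYB (by simp)
    have hzB : z ∈ B := hYB (by simp)
    refine main y z hyB hzB hyz ⟨{y, z}, hY, ⟨y, z, hyz, rfl⟩, ?_⟩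
    intro w hw
    rcases hw with rfl | rfl | rfl
    · exact hxcl
    · exact M.subset_closure _ hY.subset_ground (by simp)
    · exact M.subset_closure _ hY.subset_ground (by simp)

end Aux

/-- geometric sufficient conditions for a rank-3 matroid : if every block of
the partition `E₁ ∪ E₂ ∪ E₃` has rank ≥ 2 and every line (rank-2 flat) with at least 3
points satisfies the stated separation conditions, then the partition with
`a₁ = a₂ = a₃ = 1` is a good 3-partition of `M`. -/
theorem statement12 {α : Type*} (M : Matroid α) (hfin : M.E.Finite) (hrank : mrk M = 3)
    (E₁ E₂ E₃ : Set α) (hpart : E₁ ∪ E₂ ∪ E₃ = M.E)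
    (hd₁₂ : Disjoint E₁ E₂) (hd₁₃ : Disjoint E₁ E₃) (hd₂₃ : Disjoint E₂ E₃)
    (h1 : 2 ≤ mrk (M ↾ E₁)) (h2 : 2 ≤ mrk (M ↾ E₂)) (h3 : 2 ≤ mrk (M ↾ E₃))
    (hline : ∀ l : Set α, M.IsFlat l → mrk (M ↾ l) = 2 → 3 ≤ l.ncard →
      ((l ∩ E₁).Nonempty → (l ∩ (E₂ ∪ E₃)).ncard ≤ 1) ∧
      ((l ∩ E₃).Nonempty → (l ∩ (E₁ ∪ E₂)).ncard ≤ 1)) :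
    IsGoodPartition3 M 3 E₁ E₂ E₃ 1 1 1 := by
  have hE1 : E₁ ⊆ M.E := hpart ▸ subset_union_left.trans' subset_union_left
  have hE3 : E₃ ⊆ M.E := hpart ▸ subset_union_right
  have hd1B : Disjoint E₁ (E₂ ∪ E₃) := disjoint_union_right.mpr ⟨hd₁₂, hd₁₃⟩
  have hd3B : Disjoint E₃ (E₁ ∪ E₂) := disjoint_union_right.mpr ⟨hd₁₃.symm, hd₂₃.symm⟩
  obtain ⟨u, v, huv, hPuv⟩ := aux_exists_indep_pair (M := M ↾ E₃)
    (by rw [restrict_ground_eq]; exact hfin.subset hE3) h3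
  rw [restrict_indep_iff] at hPuv
  obtain ⟨w, t, hwt, hPwt⟩ := aux_exists_indep_pair (M := M ↾ E₁)
    (by rw [restrict_ground_eq]; exact hfin.subset hE1) h1
  rw [restrict_indep_iff] at hPwt
  have pair3 : ∃ u' v', u' ≠ v' ∧ u' ∈ E₂ ∪ E₃ ∧ v' ∈ E₂ ∪ E₃ ∧ M.Indep {u', v'} :=
    ⟨u, v, huv, Or.inr (hPuv.2 (by simp)), Or.inr (hPuv.2 (by simp)), hPuv.1⟩
  have pair1 : ∃ u' v', u' ≠ v' ∧ u' ∈ E₁ ∪ E₂ ∧ v' ∈ E₁ ∪ E₂ ∧ M.Indep {u', v'} :=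
    ⟨w, t, hwt, Or.inl (hPwt.2 (by simp)), Or.inl (hPwt.2 (by simp)), hPwt.1⟩
  have key1 : ∀ x ∈ E₁, ∀ Y ⊆ E₂ ∪ E₃, M.Indep {x} → M.Indep Y → Y.ncard ≤ 2 →
      M.Indep (insert x Y) := fun x hx Y hYB hix hiY hc =>
    aux_key hfin hd1B pair3 (fun l hf hr hc hne => (hline l hf hr hc).1 hne) hx hYB hix hiY hc
  have key2 : ∀ z ∈ E₃, ∀ X ⊆ E₁ ∪ E₂, M.Indep {z} → M.Indep X → X.ncard ≤ 2 →
      M.Indep (insert z X) := fun z hz X hXB hiz hiX hc =>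
    aux_key hfin hd3B pair1 (fun l hf hr hc hne => (hline l hf hr hc).2 hne) hz hXB hiz hiX hc
  refine ⟨hpart, hd₁₂, hd₁₃, hd₂₃, by omega, by omega, by omega, one_pos, by omega, one_pos,
    by omega, one_pos, by omega, rfl, ?_, ?_, ?_⟩
  · intro X Y hX hXc hY hYc
    rw [restrict_indep_iff] at hX hY
    have hXfin : X.Finite := hfin.subset hX.1.subset_ground
    rcases (ncard_le_one_iff_eq hXfin).mp hXc with rfl | ⟨x, rfl⟩
    · simpa using hY.1
    · rw [singleton_union]
      exact key1 x (hX.2 rfl) Y hY.2 hX.1 hY.1 hYc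
  · intro X Y hX hXc hY hYc
    rw [restrict_indep_iff] at hX hY
    have hYfin : Y.Finite := hfin.subset hY.1.subset_ground
    rcases (ncard_le_one_iff_eq hYfin).mp hYc with rfl | ⟨z, rfl⟩
    · simpa using hX.1
    · rw [union_singleton]
      exact key2 z (hY.2 rfl) X hX.2 hY.1 hX.1 hXc
  · intro X Y Z hX hXc hY hYc hZ hZc
    rw [restrict_indep_iff] at hX hY hZ
    have hXfin : X.Finite := hfin.subset hX.1.subset_ground
    have hXY : M.Indep (X ∪ Y) := by
      rcases (ncard_le_one_iff_eq hXfin).mp hXc with rfl | ⟨x, rfl⟩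
      · simpa using hY.1
      · rw [singleton_union]
        exact key1 x (hX.2 rfl) Y (hY.2.trans subset_union_left) hX.1 hY.1 (hYc.trans one_le_two)
    have hZfin : Z.Finite := hfin.subset hZ.1.subset_ground
    rcases (ncard_le_one_iff_eq hZfin).mp hZc with rfl | ⟨z, rfl⟩
    · simpa using hXY
    · rw [union_singleton]
      refine key2 z (hZ.2 rfl) (X ∪ Y)
        (union_subset (hX.2.trans subset_union_left) (hY.2.trans subset_union_right))
        hZ.1 hXY ?_
      calc (X ∪ Y).ncard ≤ X.ncard + Y.ncard := ncard_union_le X Y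
        _ ≤ 2 := by omega
end
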